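/- If (f,g) ∈ 𝒞, then the unique minimal set K of ⟨f,g⟩₊ has empty interior in ℝ; more precisely, for every x∈K and every nonempty open interval J⊆I containing x, there exists a nonempty open interval L⊆J with L∩K=∅. -/

import Mathlib

open Set Function MeasureTheory

noncomputable section

namespace IFSPaper

/-- The closed unit interval `I = [0,1]` as a subset of `ℝ`. -/
def unitI : Set ℝ := Set.Icc 0 1

/-- Membership in the class `𝒜`: `f, g : I → I` are `C¹` diffeomorphisms onto their
images with `f 0 = 0`, `g 1 = 1`, `f x < x < g x` on `(0,1)` and `0 < g 0 < f 1 < 1`. -/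
structure MemA (f g : ℝ → ℝ) : Prop where
  f_maps : Set.MapsTo f unitI unitI
  g_maps : Set.MapsTo g unitI unitI
  f_c1 : ContDiff ℝ 1 f
  g_c1 : ContDiff ℝ 1 g
  f_inj : Set.InjOn f unitI
  g_inj : Set.InjOn g unitI
  f_deriv_ne : ∀ x ∈ unitI, deriv f x ≠ 0
  g_deriv_ne : ∀ x ∈ unitI, deriv g x ≠ 0
  f_zero : f 0 = 0
  g_one : g 1 = 1
  f_lt_id : ∀ x ∈ Set.Ioo (0:ℝ) 1, f x < x
  id_lt_g : ∀ x ∈ Set.Ioo (0:ℝ) 1, x < g x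
  g0_pos : 0 < g 0
  g0_lt_f1 : g 0 < f 1
  f1_lt_one : f 1 < 1

/-- The element of the semigroup `⟨f,g⟩₊` associated to a word in the two generators
(`true ↦ f`, `false ↦ g`). -/
def word (f g : ℝ → ℝ) : List Bool → ℝ → ℝ
  | [] => id
  | b :: t => (if b then f else g) ∘ word f g t

/-- The semigroup orbit `O₊(x) = {φ x : φ ∈ ⟨f,g⟩₊}` of a point `x`. -/
def orbitP (f g : ℝ → ℝ) (x : ℝ) : Set ℝ :=
  {y | ∃ w : List Bool, w ≠ [] ∧ word f g w x = y}

/-- `K` is a minimal set for the action of `⟨f,g⟩₊` on `I`. -/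
def IsMinimalSet (f g : ℝ → ℝ) (K : Set ℝ) : Prop :=
  K.Nonempty ∧ K ⊆ unitI ∧ ∀ x ∈ K, closure (orbitP f g x) = K

/-- The overlapping region `W = [g 0, f 1]`. -/
def ovW (f g : ℝ → ℝ) : Set ℝ := Set.Icc (g 0) (f 1)

/-- The fundamental domain `Fₙ = [f^[n+1] 1, f^[n] 1]`. -/
def Fint (f : ℝ → ℝ) (n : ℕ) : Set ℝ := Set.Icc (f^[n+1] 1) (f^[n] 1)

/-- The fundamental domain `Gₙ = [g^[n] 0, g^[n+1] 0]`. -/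
def Gint (g : ℝ → ℝ) (n : ℕ) : Set ℝ := Set.Icc (g^[n] 0) (g^[n+1] 0)

/-- Single overlapping property `So`: `f² 1 < g 0` and `f 1 < g² 0`. -/
def So (f g : ℝ → ℝ) : Prop := f (f 1) < g 0 ∧ f 1 < g (g 0)

/-- A (nonempty) closed bounded interval. -/
def IsClosedInterval (A : Set ℝ) : Prop := ∃ a b : ℝ, a ≤ b ∧ A = Set.Icc a b

/-- A closed bounded interval with nonempty interior. -/
def IsNondegClosedInterval (A : Set ℝ) : Prop := ∃ a b : ℝ, a < b ∧ A = Set.Icc a b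

/-- A nonempty open bounded interval. -/
def IsOpenInterval (J : Set ℝ) : Prop := ∃ a b : ℝ, a < b ∧ J = Set.Ioo a b

/-- Hole property `Ho` witnessed by the pair of holes `(Hf, Hg)`. -/
def HoleAt (f g : ℝ → ℝ) (Hf Hg : Set ℝ) : Prop :=
  IsNondegClosedInterval Hf ∧ IsNondegClosedInterval Hg ∧
  Hf ⊆ interior (Fint f 1 \ ovW f g) ∧
  Hg ⊆ interior (Gint g 1 \ ovW f g) ∧
  g '' Hf = Hg ∧ f '' Hg = Hf

/-- Hole property `Ho`. -/
def Ho (f g : ℝ → ℝ) : Prop := ∃ Hf Hg : Set ℝ, HoleAt f g Hf Hg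

/-- The induced (first-return) map `𝓕 : F₁ \ {f 1} → G₁`,
`𝓕 x = g^[-n x] (f⁻¹ x)` where `n x` is least with `g^[-n x] (f⁻¹ x) ∈ G₁`. -/
def calF (f g : ℝ → ℝ) (x : ℝ) : ℝ :=
  (Function.invFunOn g unitI)^[sInf {n : ℕ |
      (Function.invFunOn g unitI)^[n] (Function.invFunOn f unitI x) ∈ Gint g 1}]
    (Function.invFunOn f unitI x)

/-- The induced (first-return) map `𝓖 : G₁ \ {g 0} → F₁`. -/
def calG (f g : ℝ → ℝ) (x : ℝ) : ℝ :=
  (Function.invFunOn f unitI)^[sInf {n : ℕ |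
      (Function.invFunOn f unitI)^[n] (Function.invFunOn g unitI x) ∈ Fint f 1}]
    (Function.invFunOn g unitI x)

/-- Eventual expansion property `Ee`: `𝓕` is uniformly expanding outside `Hf`
and `𝓖` outside `Hg` (at all points where the derivative makes sense). -/
def Ee (f g : ℝ → ℝ) (Hf Hg : Set ℝ) : Prop :=
  ∃ μ : ℝ, 1 < μ ∧
    (∀ y ∈ Fint f 1 \ Hf, DifferentiableAt ℝ (calF f g) y → μ < deriv (calF f g) y) ∧
    (∀ y ∈ Gint g 1 \ Hg, DifferentiableAt ℝ (calG f g) y → μ < deriv (calG f g) y)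

/-- The ruination region `R_f = 𝓕⁻¹(Hg) ⊆ F₁`. -/
def Rf (f g : ℝ → ℝ) (Hg : Set ℝ) : Set ℝ :=
  {x | x ∈ Fint f 1 \ {f 1} ∧ calF f g x ∈ Hg}

/-- The ruination region `R_g = 𝓖⁻¹(Hf) ⊆ G₁`. -/
def Rg (f g : ℝ → ℝ) (Hf : Set ℝ) : Set ℝ :=
  {x | x ∈ Gint g 1 \ {g 0} ∧ calG f g x ∈ Hf}

/-- Castration property `Ca`: `W ⊆ int R_f ∪ int R_g`. -/
def Ca (f g : ℝ → ℝ) (Hf Hg : Set ℝ) : Prop :=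
  ovW f g ⊆ interior (Rf f g Hg) ∪ interior (Rg f g Hf)

/-- Membership in the class `𝒞` with the given holes `(Hf, Hg)`:
`(f,g) ∈ 𝒜` together with `So`, `Ho`, `Ee` and `Ca`. -/
def MemC (f g : ℝ → ℝ) (Hf Hg : Set ℝ) : Prop :=
  MemA f g ∧ So f g ∧ HoleAt f g Hf Hg ∧ Ee f g Hf Hg ∧ Ca f g Hf Hg

/-- The interval `I₋₁ = [0, 1/3 - ε]` of the appendix example. -/
def Im1 (ε : ℝ) : Set ℝ := Set.Icc 0 (1/3 - ε)

/-- The interval `I₀ = [1/3 + ε, 2/3 - ε]` of the appendix example. -/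
def Iz (ε : ℝ) : Set ℝ := Set.Icc (1/3 + ε) (2/3 - ε)

/-- The interval `I₁ = [2/3 + ε, 1]` of the appendix example. -/
def Ip1 (ε : ℝ) : Set ℝ := Set.Icc (2/3 + ε) 1

/-- The inclusion property of the appendix example. -/
def InclusionProp (f g : ℝ → ℝ) (ε : ℝ) : Prop :=
  f '' Im1 ε ⊆ Im1 ε ∧ f '' Iz ε ⊆ interior (Im1 ε) ∧ f '' Ip1 ε ⊆ interior (Iz ε) ∧
  g '' Ip1 ε ⊆ Ip1 ε ∧ g '' Iz ε ⊆ interior (Ip1 ε) ∧ g '' Im1 ε ⊆ interior (Iz ε)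

/-- The strong uniform contraction property of the appendix example. -/
def StrongContraction (f g : ℝ → ℝ) (ε lam : ℝ) : Prop :=
  ∀ x ∈ Im1 ε ∪ Iz ε ∪ Ip1 ε, deriv f x < lam ∧ deriv g x < lam

/-! ### Auxiliary development -/

/-- Bundled context for the proof. -/
structure Ctx where
  f : ℝ → ℝ
  g : ℝ → ℝ
  Hf : Set ℝ
  Hg : Set ℝ
  K : Set ℝ
  hA : MemA f g
  hSo : So f g
  hHo : HoleAt f g Hf Hg
  hEe : Ee f g Hf Hg
  hCa : Ca f g Hf Hg
  hMin : IsMinimalSet f g K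

namespace Ctx

variable (c : Ctx)

/-- `a = g 0`. -/
def a : ℝ := c.g 0
/-- `b = f 1`. -/
def b : ℝ := c.f 1
/-- `a₂ = g (g 0)`. -/
def a2 : ℝ := c.g (c.g 0)
/-- `b₂ = f (f 1)`. -/
def b2 : ℝ := c.f (c.f 1)
/-- inverse of `f` on `[0,1]`. -/
def F : ℝ → ℝ := Function.invFunOn c.f unitI
/-- inverse of `g` on `[0,1]`. -/
def G : ℝ → ℝ := Function.invFunOn c.g unitI

lemma apos : 0 < c.a := c.hA.g0_pos
lemma a_lt_b : c.a < c.b := c.hA.g0_lt_f1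
lemma b_lt_one : c.b < 1 := c.hA.f1_lt_one
lemma bpos : 0 < c.b := lt_trans c.apos c.a_lt_b
lemma a_lt_one : c.a < 1 := lt_trans c.a_lt_b c.b_lt_one
lemma b2_lt_a : c.b2 < c.a := c.hSo.1
lemma b_lt_a2 : c.b < c.a2 := c.hSo.2

lemma fcont : Continuous c.f := c.hA.f_c1.continuous
lemma gcont : Continuous c.g := c.hA.g_c1.continuous

lemma mem_unitI {x : ℝ} (h0 : 0 ≤ x) (h1 : x ≤ 1) : x ∈ unitI := ⟨h0, h1⟩

lemma fmem {x : ℝ} (hx : x ∈ unitI) : c.f x ∈ unitI := c.hA.f_maps hx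
lemma gmem {x : ℝ} (hx : x ∈ unitI) : c.g x ∈ unitI := c.hA.g_maps hx

lemma one_mem' : (1:ℝ) ∈ unitI := ⟨zero_le_one, le_refl 1⟩
lemma zero_mem' : (0:ℝ) ∈ unitI := ⟨le_refl 0, zero_le_one⟩

/-- `deriv f` is positive on `[0,1]`. -/
lemma f_deriv_pos : ∀ x ∈ unitI, 0 < deriv c.f x := by
  have hcont : Continuous (deriv c.f) := c.hA.f_c1.continuous_deriv le_rfl
  have hdiff : DifferentiableOn ℝ c.f (Set.Ioo (0:ℝ) 1) := fun z _ =>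
    ((c.hA.f_c1.differentiable one_ne_zero) z).differentiableWithinAt
  -- there is a point with positive derivative
  obtain ⟨p, hp, hpd⟩ : ∃ p ∈ Set.Ioo (0:ℝ) 1, deriv c.f p = (c.f 1 - c.f 0) / (1 - 0) :=
    exists_deriv_eq_slope c.f one_pos (c.fcont.continuousOn) hdiff
  have hppos : 0 < deriv c.f p := by
    rw [hpd, c.hA.f_zero]
    have hb : (0:ℝ) < c.f 1 := c.bpos
    norm_num
    exact hb
  intro x hx
  rcases lt_or_ge 0 (deriv c.f x) with h | h
  · exact h
  have hxI : x ∈ unitI := hx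
  have hx0 : deriv c.f x < 0 :=
    lt_of_le_of_ne h (c.hA.f_deriv_ne x hx)
  -- IVT on the derivative gives a zero of the derivative in `[0,1]`, contradiction
  have hsub : Set.uIcc x p ⊆ unitI := by
    intro z hz
    rcases Set.mem_uIcc.mp hz with ⟨h1, h2⟩ | ⟨h1, h2⟩ <;>
      exact ⟨by rcases hxI with ⟨u,v⟩; rcases hp with ⟨u2,v2⟩; linarith,
             by rcases hxI with ⟨u,v⟩; rcases hp with ⟨u2,v2⟩; linarith⟩
  have : (0:ℝ) ∈ Set.uIcc (deriv c.f x) (deriv c.f p) := by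
    constructor
    · simp [inf_le_iff]; left; linarith
    · simp [le_sup_iff]; right; linarith
  obtain ⟨z, hz, hz0⟩ := intermediate_value_uIcc (hcont.continuousOn) this
  exact absurd hz0 (c.hA.f_deriv_ne z (hsub hz))

lemma g_deriv_pos : ∀ x ∈ unitI, 0 < deriv c.g x := by
  have hcont : Continuous (deriv c.g) := c.hA.g_c1.continuous_deriv le_rfl
  have hdiff : DifferentiableOn ℝ c.g (Set.Ioo (0:ℝ) 1) := fun z _ =>
    ((c.hA.g_c1.differentiable one_ne_zero) z).differentiableWithinAt
  obtain ⟨p, hp, hpd⟩ : ∃ p ∈ Set.Ioo (0:ℝ) 1, deriv c.g p = (c.g 1 - c.g 0) / (1 - 0) :=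
    exists_deriv_eq_slope c.g one_pos (c.gcont.continuousOn) hdiff
  have hppos : 0 < deriv c.g p := by
    rw [hpd, c.hA.g_one]
    have h2 : c.g 0 < 1 := c.a_lt_one
    norm_num
    linarith
  intro x hx
  rcases lt_or_ge 0 (deriv c.g x) with h | h
  · exact h
  have hx0 : deriv c.g x < 0 := lt_of_le_of_ne h (c.hA.g_deriv_ne x hx)
  have hsub : Set.uIcc x p ⊆ unitI := by
    intro z hz
    rcases Set.mem_uIcc.mp hz with ⟨h1, h2⟩ | ⟨h1, h2⟩ <;>
      exact ⟨by rcases hx with ⟨u,v⟩; rcases hp with ⟨u2,v2⟩; linarith,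
             by rcases hx with ⟨u,v⟩; rcases hp with ⟨u2,v2⟩; linarith⟩
  have : (0:ℝ) ∈ Set.uIcc (deriv c.g x) (deriv c.g p) := by
    constructor
    · simp [inf_le_iff]; left; linarith
    · simp [le_sup_iff]; right; linarith
  obtain ⟨z, hz, hz0⟩ := intermediate_value_uIcc (hcont.continuousOn) this
  exact absurd hz0 (c.hA.g_deriv_ne z (hsub hz))

lemma fmono : StrictMonoOn c.f unitI := by
  apply strictMonoOn_of_deriv_pos (convex_Icc 0 1) c.fcont.continuousOn
  intro x hx
  rw [interior_Icc] at hx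
  exact c.f_deriv_pos x ⟨le_of_lt hx.1, le_of_lt hx.2⟩

lemma gmono : StrictMonoOn c.g unitI := by
  apply strictMonoOn_of_deriv_pos (convex_Icc 0 1) c.gcont.continuousOn
  intro x hx
  rw [interior_Icc] at hx
  exact c.g_deriv_pos x ⟨le_of_lt hx.1, le_of_lt hx.2⟩

lemma fmono_le {x y : ℝ} (hx : x ∈ unitI) (hy : y ∈ unitI) (h : x ≤ y) : c.f x ≤ c.f y := by
  rcases eq_or_lt_of_le h with rfl | h
  · exact le_refl _
  · exact le_of_lt (c.fmono hx hy h)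

lemma gmono_le {x y : ℝ} (hx : x ∈ unitI) (hy : y ∈ unitI) (h : x ≤ y) : c.g x ≤ c.g y := by
  rcases eq_or_lt_of_le h with rfl | h
  · exact le_refl _
  · exact le_of_lt (c.gmono hx hy h)

lemma fx_le {x : ℝ} (hx : x ∈ unitI) : c.f x ≤ x := by
  rcases eq_or_lt_of_le hx.1 with h0 | h0
  · rw [← h0, c.hA.f_zero]
  rcases eq_or_lt_of_le hx.2 with h1 | h1
  · rw [h1]; exact le_of_lt c.b_lt_one
  · exact le_of_lt (c.hA.f_lt_id x ⟨h0, h1⟩)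

lemma gx_ge {x : ℝ} (hx : x ∈ unitI) : x ≤ c.g x := by
  rcases eq_or_lt_of_le hx.2 with h1 | h1
  · rw [h1, c.hA.g_one]
  rcases eq_or_lt_of_le hx.1 with h0 | h0
  · rw [← h0]; exact le_of_lt c.apos
  · exact le_of_lt (c.hA.id_lt_g x ⟨h0, h1⟩)

lemma fpos {x : ℝ} (hx : x ∈ unitI) (h0 : 0 < x) : 0 < c.f x := by
  have := c.fmono zero_mem' hx h0
  rwa [c.hA.f_zero] at this

lemma g_lt_one {x : ℝ} (hx : x ∈ unitI) (h1 : x < 1) : c.g x < 1 := by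
  have := c.gmono hx one_mem' h1
  rwa [c.hA.g_one] at this

lemma fle_b {x : ℝ} (hx : x ∈ unitI) : c.f x ≤ c.b := c.fmono_le hx one_mem' hx.2

lemma age_a {x : ℝ} (hx : x ∈ unitI) : c.a ≤ c.g x := c.gmono_le zero_mem' hx hx.1

lemma b2pos : 0 < c.b2 := c.fpos (c.fmem one_mem') c.bpos
lemma b2_lt_b : c.b2 < c.b := lt_of_lt_of_le (c.hA.f_lt_id c.b ⟨c.bpos, c.b_lt_one⟩) (le_refl _)
lemma a2_lt_one : c.a2 < 1 := c.g_lt_one (c.gmem zero_mem') c.a_lt_one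
lemma a_lt_a2 : c.a < c.a2 := lt_of_lt_of_le (c.hA.id_lt_g c.a ⟨c.apos, c.a_lt_one⟩) (le_refl _)
lemma amem : c.a ∈ unitI := c.gmem zero_mem'
lemma bmem : c.b ∈ unitI := c.fmem one_mem'
lemma a2mem : c.a2 ∈ unitI := c.gmem c.amem
lemma b2mem : c.b2 ∈ unitI := c.fmem c.bmem
lemma b2_lt_a2 : c.b2 < c.a2 := lt_trans c.b2_lt_a (lt_trans c.a_lt_b c.b_lt_a2)

/-- surjectivity of `f` onto `[0, b]`. -/
lemma f_surj {y : ℝ} (hy : y ∈ Set.Icc 0 c.b) : ∃ x ∈ unitI, c.f x = y := by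
  have h := intermediate_value_Icc (zero_le_one) (c.fcont.continuousOn (s := unitI))
  rw [c.hA.f_zero] at h
  obtain ⟨x, hx, hfx⟩ := h hy
  exact ⟨x, hx, hfx⟩

lemma g_surj {y : ℝ} (hy : y ∈ Set.Icc c.a 1) : ∃ x ∈ unitI, c.g x = y := by
  have h := intermediate_value_Icc (zero_le_one) (c.gcont.continuousOn (s := unitI))
  rw [c.hA.g_one] at h
  obtain ⟨x, hx, hfx⟩ := h hy
  exact ⟨x, hx, hfx⟩

lemma F_spec {y : ℝ} (hy : y ∈ Set.Icc 0 c.b) : c.f (c.F y) = y ∧ c.F y ∈ unitI := by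
  obtain ⟨x, hx, hfx⟩ := c.f_surj hy
  exact ⟨Function.invFunOn_eq ⟨x, hx, hfx⟩, Function.invFunOn_mem ⟨x, hx, hfx⟩⟩

lemma G_spec {y : ℝ} (hy : y ∈ Set.Icc c.a 1) : c.g (c.G y) = y ∧ c.G y ∈ unitI := by
  obtain ⟨x, hx, hfx⟩ := c.g_surj hy
  exact ⟨Function.invFunOn_eq ⟨x, hx, hfx⟩, Function.invFunOn_mem ⟨x, hx, hfx⟩⟩

lemma F_f {x : ℝ} (hx : x ∈ unitI) : c.F (c.f x) = x := c.hA.f_inj.leftInvOn_invFunOn hx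
lemma G_g {x : ℝ} (hx : x ∈ unitI) : c.G (c.g x) = x := c.hA.g_inj.leftInvOn_invFunOn hx

/-- sandwich lemmas for `F`. -/
lemma F_gt {y x : ℝ} (hy : y ∈ Set.Icc 0 c.b) (hx : x ∈ unitI) (h : c.f x < y) : x < c.F y := by
  by_contra hc
  push_neg at hc
  have := c.fmono_le (c.F_spec hy).2 hx hc
  rw [(c.F_spec hy).1] at this
  linarith

lemma F_lt {y x : ℝ} (hy : y ∈ Set.Icc 0 c.b) (hx : x ∈ unitI) (h : y < c.f x) : c.F y < x := by
  by_contra hc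
  push_neg at hc
  have := c.fmono_le hx (c.F_spec hy).2 hc
  rw [(c.F_spec hy).1] at this
  linarith

lemma G_gt {y x : ℝ} (hy : y ∈ Set.Icc c.a 1) (hx : x ∈ unitI) (h : c.g x < y) : x < c.G y := by
  by_contra hc
  push_neg at hc
  have := c.gmono_le (c.G_spec hy).2 hx hc
  rw [(c.G_spec hy).1] at this
  linarith

lemma G_lt {y x : ℝ} (hy : y ∈ Set.Icc c.a 1) (hx : x ∈ unitI) (h : y < c.g x) : c.G y < x := by
  by_contra hc
  push_neg at hc
  have := c.gmono_le hx (c.G_spec hy).2 hc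
  rw [(c.G_spec hy).1] at this
  linarith

lemma F_mono {y y' : ℝ} (hy : y ∈ Set.Icc 0 c.b) (hy' : y' ∈ Set.Icc 0 c.b) (h : y < y') :
    c.F y < c.F y' := by
  apply c.F_gt hy' (c.F_spec hy).2
  rw [(c.F_spec hy).1]; exact h

lemma G_mono {y y' : ℝ} (hy : y ∈ Set.Icc c.a 1) (hy' : y' ∈ Set.Icc c.a 1) (h : y < y') :
    c.G y < c.G y' := by
  apply c.G_gt hy' (c.G_spec hy).2
  rw [(c.G_spec hy).1]; exact h

end Ctx

namespace Ctx

variable (c : Ctx)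

lemma word_cons (bb : Bool) (w : List Bool) (x : ℝ) :
    word c.f c.g (bb :: w) x = (if bb then c.f else c.g) (word c.f c.g w x) := rfl

lemma word_mem {x : ℝ} (hx : x ∈ unitI) (w : List Bool) : word c.f c.g w x ∈ unitI := by
  induction w with
  | nil => exact hx
  | cons bb t ih =>
    rw [word_cons]
    cases bb
    · simpa using c.gmem ih
    · simpa using c.fmem ih

/-- iterates of `f` stay in `unitI`. -/
lemma f_it_mem {x : ℝ} (hx : x ∈ unitI) (k : ℕ) : c.f^[k] x ∈ unitI := by
  induction k with
  | zero => exact hx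
  | succ n ih => rw [Function.iterate_succ_apply']; exact c.fmem ih

lemma g_it_mem {x : ℝ} (hx : x ∈ unitI) (k : ℕ) : c.g^[k] x ∈ unitI := by
  induction k with
  | zero => exact hx
  | succ n ih => rw [Function.iterate_succ_apply']; exact c.gmem ih

lemma f_it_le {x : ℝ} (hx : x ∈ unitI) (k : ℕ) : c.f^[k] x ≤ x := by
  induction k with
  | zero => exact le_refl x
  | succ n ih =>
    rw [Function.iterate_succ_apply']
    exact le_trans (c.fx_le (c.f_it_mem hx n)) ih

lemma g_it_ge {x : ℝ} (hx : x ∈ unitI) (k : ℕ) : x ≤ c.g^[k] x := by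
  induction k with
  | zero => exact le_refl x
  | succ n ih =>
    rw [Function.iterate_succ_apply']
    exact le_trans ih (c.gx_ge (c.g_it_mem hx n))

lemma f_it_pos {x : ℝ} (hx : x ∈ unitI) (h0 : 0 < x) (k : ℕ) : 0 < c.f^[k] x := by
  induction k with
  | zero => exact h0
  | succ n ih => rw [Function.iterate_succ_apply']; exact c.fpos (c.f_it_mem hx n) ih

lemma g_it_lt_one {x : ℝ} (hx : x ∈ unitI) (h1 : x < 1) (k : ℕ) : c.g^[k] x < 1 := by
  induction k with
  | zero => exact h1
  | succ n ih => rw [Function.iterate_succ_apply']; exact c.g_lt_one (c.g_it_mem hx n) ih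

/-- basic facts about `K`. -/
lemma K_sub : c.K ⊆ unitI := c.hMin.2.1

lemma K_word {x : ℝ} (hx : x ∈ c.K) {w : List Bool} (hw : w ≠ []) : word c.f c.g w x ∈ c.K := by
  rw [← c.hMin.2.2 x hx]
  exact subset_closure ⟨w, hw, rfl⟩

lemma K_closed : IsClosed c.K := by
  obtain ⟨x₀, hx₀⟩ := c.hMin.1
  rw [← c.hMin.2.2 x₀ hx₀]
  exact isClosed_closure

lemma word_replicate (n : ℕ) (x : ℝ) : word c.f c.g (List.replicate n true) x = c.f^[n] x := by
  induction n with
  | zero => rfl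
  | succ m ih =>
    rw [List.replicate_succ, word_cons, ih, if_pos rfl]
    exact (Function.iterate_succ_apply' c.f m x).symm

lemma zero_mem_K : (0:ℝ) ∈ c.K := by
  obtain ⟨x₀, hx₀⟩ := c.hMin.1
  have hx₀I : x₀ ∈ unitI := c.K_sub hx₀
  set u : ℕ → ℝ := fun n => c.f^[n+1] x₀ with hu
  have humem : ∀ n, u n ∈ unitI := fun n => c.f_it_mem hx₀I (n+1)
  have huK : ∀ n, u n ∈ c.K := by
    intro n
    have := c.K_word hx₀ (w := List.replicate (n+1) true) (by simp)
    rwa [c.word_replicate] at this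
  have hmono : Antitone u := by
    apply antitone_nat_of_succ_le
    intro n
    show c.f^[n+2] x₀ ≤ c.f^[n+1] x₀
    rw [Function.iterate_succ_apply' (n := n+1)]
    exact c.fx_le (humem n)
  have hbdd : BddBelow (Set.range u) := ⟨0, by rintro y ⟨n, rfl⟩; exact (humem n).1⟩
  have htend : Filter.Tendsto u Filter.atTop (nhds (⨅ n, u n)) := tendsto_atTop_ciInf hmono hbdd
  set L := ⨅ n, u n with hL
  have hL0 : 0 ≤ L := le_ciInf (fun n => (humem n).1)
  have hLb : L ≤ c.b := by
    apply ciInf_le_of_le hbdd 0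
    show c.f^[1] x₀ ≤ c.b
    simpa using c.fle_b hx₀I
  have hfix : c.f L = L := by
    have h1 : Filter.Tendsto (fun n => c.f (u n)) Filter.atTop (nhds (c.f L)) :=
      (c.fcont.continuousAt).tendsto.comp htend
    have h2 : ∀ n, c.f (u n) = u (n+1) := by
      intro n
      show c.f (c.f^[n+1] x₀) = c.f^[n+2] x₀
      rw [Function.iterate_succ_apply' (n := n+1)]
    have h3 : Filter.Tendsto (fun n => u (n+1)) Filter.atTop (nhds L) :=
      htend.comp (Filter.tendsto_add_atTop_nat 1)
    have h4 : Filter.Tendsto (fun n => c.f (u n)) Filter.atTop (nhds L) := by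
      simpa only [h2] using h3
    exact tendsto_nhds_unique h1 h4
  have hLzero : L = 0 := by
    by_contra hne
    have h0 : 0 < L := lt_of_le_of_ne hL0 (Ne.symm hne)
    have h1 : L < 1 := lt_of_le_of_lt hLb c.b_lt_one
    have := c.hA.f_lt_id L ⟨h0, h1⟩
    rw [hfix] at this
    exact lt_irrefl _ this
  rw [← hLzero]
  exact c.K_closed.mem_of_tendsto htend (Filter.Eventually.of_forall huK)

lemma K_eq : c.K = closure (orbitP c.f c.g 0) := (c.hMin.2.2 0 c.zero_mem_K).symm

/-- From a point of `K` in an open set, get an orbit point of `0` in it. -/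
lemma orbit_exists {S : Set ℝ} (hS : IsOpen S) (hne : (S ∩ c.K).Nonempty) :
    ∃ w : List Bool, word c.f c.g w 0 ∈ S := by
  obtain ⟨z, hzS, hzK⟩ := hne
  rw [c.K_eq] at hzK
  have := (mem_closure_iff).mp hzK S hS hzS
  obtain ⟨y, hy1, w, _, hw2⟩ := this
  exact ⟨w, by rwa [hw2]⟩

/-- Membership in `K` via approximation by orbit points of 0. -/
lemma mem_K' {r : ℝ} (hr : 0 < r)
    (h : ∀ η, 0 < η → ∃ w : List Bool, word c.f c.g w 0 ∈ Set.Ioo (r - η) (r + η)) :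
    r ∈ c.K := by
  rw [c.K_eq]
  rw [Metric.mem_closure_iff]
  intro ε hε
  obtain ⟨w, hw⟩ := h (min ε r) (lt_min hε hr)
  refine ⟨word c.f c.g w 0, ⟨w, ?_, rfl⟩, ?_⟩
  · rintro rfl
    simp only [word] at hw
    rcases hw with ⟨h1, _⟩
    simp only [id] at h1
    have := min_le_right ε r
    linarith
  · rw [Real.dist_eq, abs_sub_lt_iff]
    have h1 := min_le_left ε r
    rcases hw with ⟨hw1, hw2⟩
    constructor <;> linarith

end Ctx

namespace Ctx

variable (c : Ctx)

/-- endpoints of the holes -/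
def h1f : ℝ := c.hHo.1.choose
def h2f : ℝ := c.hHo.1.choose_spec.choose
def h1g : ℝ := c.hHo.2.1.choose
def h2g : ℝ := c.hHo.2.1.choose_spec.choose

lemma Hf_eq : c.Hf = Set.Icc c.h1f c.h2f := c.hHo.1.choose_spec.choose_spec.2
lemma h1f_lt_h2f : c.h1f < c.h2f := c.hHo.1.choose_spec.choose_spec.1
lemma Hg_eq : c.Hg = Set.Icc c.h1g c.h2g := c.hHo.2.1.choose_spec.choose_spec.2
lemma h1g_lt_h2g : c.h1g < c.h2g := c.hHo.2.1.choose_spec.choose_spec.1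

lemma Fint_eq : Fint c.f 1 = Set.Icc c.b2 c.b := by
  unfold Fint
  norm_num
  rfl

lemma Gint_eq : Gint c.g 1 = Set.Icc c.a c.a2 := by
  unfold Gint
  norm_num
  rfl

/-- `Hf ⊆ (b2, a)`. -/
lemma Hf_sub : c.Hf ⊆ Set.Ioo c.b2 c.a := by
  have h1 := c.hHo.2.2.1
  have h2 : Fint c.f 1 \ ovW c.f c.g = Set.Ico c.b2 c.a := by
    rw [c.Fint_eq]
    unfold ovW
    ext x
    simp only [Set.mem_diff, Set.mem_Icc, Set.mem_Ico, not_and, not_le]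
    constructor
    · rintro ⟨⟨hx1, hx2⟩, hx3⟩
      refine ⟨hx1, ?_⟩
      by_contra hc
      push_neg at hc
      exact absurd (hx3 hc) (not_lt.mpr hx2)
    · rintro ⟨hx1, hx2⟩
      have hab := c.a_lt_b
      exact ⟨⟨hx1, by linarith⟩, fun hc => absurd hc (not_le.mpr hx2)⟩
  rw [h2, interior_Ico] at h1
  exact fun x hx => h1 hx

/-- `Hg ⊆ (b, a2)`. -/
lemma Hg_sub : c.Hg ⊆ Set.Ioo c.b c.a2 := by
  have h1 := c.hHo.2.2.2.1
  have h2 : Gint c.g 1 \ ovW c.f c.g = Set.Ioc c.b c.a2 := by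
    rw [c.Gint_eq]
    unfold ovW
    ext x
    simp only [Set.mem_diff, Set.mem_Icc, Set.mem_Ioc, not_and, not_le]
    constructor
    · rintro ⟨⟨hx1, hx2⟩, hx3⟩
      exact ⟨hx3 hx1, hx2⟩
    · rintro ⟨hx1, hx2⟩
      have hab := c.a_lt_b
      exact ⟨⟨by linarith, hx2⟩, fun _ => hx1⟩
  rw [h2, interior_Ioc] at h1
  exact fun x hx => h1 hx

lemma Hf_mem_I {z : ℝ} (hz : z ∈ c.Hf) : z ∈ unitI := by
  have h := c.Hf_sub hz
  have := c.b2pos; have := c.a_lt_one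
  exact ⟨by linarith [h.1], by linarith [h.2]⟩

lemma Hg_mem_I {z : ℝ} (hz : z ∈ c.Hg) : z ∈ unitI := by
  have h := c.Hg_sub hz
  have := c.bpos; have := c.a2_lt_one
  exact ⟨by linarith [h.1], by linarith [h.2]⟩

lemma h1f_mem : c.h1f ∈ c.Hf := by rw [c.Hf_eq]; exact ⟨le_refl _, le_of_lt c.h1f_lt_h2f⟩
lemma h2f_mem : c.h2f ∈ c.Hf := by rw [c.Hf_eq]; exact ⟨le_of_lt c.h1f_lt_h2f, le_refl _⟩
lemma h1g_mem : c.h1g ∈ c.Hg := by rw [c.Hg_eq]; exact ⟨le_refl _, le_of_lt c.h1g_lt_h2g⟩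
lemma h2g_mem : c.h2g ∈ c.Hg := by rw [c.Hg_eq]; exact ⟨le_of_lt c.h1g_lt_h2g, le_refl _⟩

/-- The fundamental impossibility: no orbit point of `0` is an `f`/`g`-iterate image of a
hole point. -/
lemma no_hole_word : ∀ w : List Bool,
    (∀ (m : ℕ) (z : ℝ), z ∈ c.Hg → word c.f c.g w 0 ≠ c.g^[m] z) ∧
    (∀ (m : ℕ) (z : ℝ), z ∈ c.Hf → word c.f c.g w 0 ≠ c.f^[m] z) := by
  intro w
  induction w with
  | nil =>
    constructor
    · intro m z hz h
      have hb := (c.Hg_sub hz).1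
      have hge := c.g_it_ge (c.Hg_mem_I hz) m
      have hb0 := c.bpos
      simp only [word, id] at h
      linarith
    · intro m z hz h
      have hb := (c.Hf_sub hz).1
      have hpos := c.f_it_pos (c.Hf_mem_I hz) (by linarith [c.b2pos]) m
      simp only [word, id] at h
      linarith
  | cons bb t ih =>
    have hval : word c.f c.g t 0 ∈ unitI := c.word_mem zero_mem' t
    constructor
    · -- value = g^[m] z, z ∈ Hg
      intro m z hz h
      rw [word_cons] at h
      cases bb with
      | true =>
        -- f (val) = g^[m] z : impossible since f val ≤ b < z ≤ g^[m] z
        simp only [if_pos] at h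
        have h1 : c.f (word c.f c.g t 0) ≤ c.b := c.fle_b hval
        have h2 := (c.Hg_sub hz).1
        have h3 := c.g_it_ge (c.Hg_mem_I hz) m
        rw [h] at h1
        linarith
      | false =>
        simp only [Bool.false_eq_true, if_neg, ite_false] at h
        cases m with
        | zero =>
          -- g val = z ∈ Hg = g '' Hf
          simp only [Function.iterate_zero, id] at h
          have himg : c.g '' c.Hf = c.Hg := c.hHo.2.2.2.2.1
          rw [← himg] at hz
          obtain ⟨zf, hzf, hgzf⟩ := hz
          have : word c.f c.g t 0 = zf :=
            c.hA.g_inj hval (c.Hf_mem_I hzf) (by rw [h, hgzf])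
          exact ih.2 0 zf hzf (by simpa using this)
        | succ m' =>
          rw [Function.iterate_succ_apply'] at h
          have : word c.f c.g t 0 = c.g^[m'] z :=
            c.hA.g_inj hval (c.g_it_mem (c.Hg_mem_I hz) m') h
          exact ih.1 m' z hz this
    · intro m z hz h
      rw [word_cons] at h
      cases bb with
      | false =>
        simp only [Bool.false_eq_true, if_neg, ite_false] at h
        have h1 : c.a ≤ c.g (word c.f c.g t 0) := c.age_a hval
        have h2 := (c.Hf_sub hz).2
        have h3 := c.f_it_le (c.Hf_mem_I hz) m
        rw [h] at h1
        linarith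
      | true =>
        simp only [if_pos] at h
        cases m with
        | zero =>
          simp only [Function.iterate_zero, id] at h
          have himg : c.f '' c.Hg = c.Hf := c.hHo.2.2.2.2.2
          rw [← himg] at hz
          obtain ⟨zg, hzg, hfzg⟩ := hz
          have : word c.f c.g t 0 = zg :=
            c.hA.f_inj hval (c.Hg_mem_I hzg) (by rw [h, hfzg])
          exact ih.1 0 zg hzg (by simpa using this)
        | succ m' =>
          rw [Function.iterate_succ_apply'] at h
          have : word c.f c.g t 0 = c.f^[m'] z :=
            c.hA.f_inj hval (c.f_it_mem (c.Hf_mem_I hz) m') h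
          exact ih.2 m' z hz this

/-- `K` misses the interior of `Hf`. -/
lemma K_no_holef {z : ℝ} (hz : z ∈ c.K) (hz2 : z ∈ Set.Ioo c.h1f c.h2f) : False := by
  obtain ⟨w, hw⟩ := c.orbit_exists isOpen_Ioo ⟨z, hz2, hz⟩
  have hmem : word c.f c.g w 0 ∈ c.Hf := by
    rw [c.Hf_eq]; exact ⟨le_of_lt hw.1, le_of_lt hw.2⟩
  exact (c.no_hole_word w).2 0 _ hmem (by simp)

lemma K_no_holeg {z : ℝ} (hz : z ∈ c.K) (hz2 : z ∈ Set.Ioo c.h1g c.h2g) : False := by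
  obtain ⟨w, hw⟩ := c.orbit_exists isOpen_Ioo ⟨z, hz2, hz⟩
  have hmem : word c.f c.g w 0 ∈ c.Hg := by
    rw [c.Hg_eq]; exact ⟨le_of_lt hw.1, le_of_lt hw.2⟩
  exact (c.no_hole_word w).1 0 _ hmem (by simp)

end Ctx

namespace Ctx

variable (c : Ctx)

/-- A sequence with `f (u (k+1)) = u k`, increasing, bounded above away from 1, is impossible. -/
lemma escape_up {u : ℕ → ℝ} {B : ℝ} (h0 : 0 < u 0) (hBlt : B < 1)
    (hrec : ∀ k, c.f (u (k + 1)) = u k) (hmono : Monotone u) (hb : ∀ k, u k ≤ B) : False := by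
  have hbdd : BddAbove (Set.range u) := ⟨B, by rintro y ⟨n, rfl⟩; exact hb n⟩
  have htend : Filter.Tendsto u Filter.atTop (nhds (⨆ n, u n)) := tendsto_atTop_ciSup hmono hbdd
  set L := ⨆ n, u n with hL
  have hub : u 0 ≤ L := le_ciSup hbdd 0
  have hLB : L ≤ B := ciSup_le hb
  have hfix : c.f L = L := by
    have h1 : Filter.Tendsto (fun n => c.f (u (n + 1))) Filter.atTop (nhds (c.f L)) :=
      (c.fcont.continuousAt).tendsto.comp (htend.comp (Filter.tendsto_add_atTop_nat 1))
    have h4 : Filter.Tendsto (fun n => c.f (u (n + 1))) Filter.atTop (nhds L) := by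
      simpa only [hrec] using htend
    exact tendsto_nhds_unique h1 h4
  have h0L : 0 < L := lt_of_lt_of_le h0 hub
  have h1L : L < 1 := lt_of_le_of_lt hLB hBlt
  have := c.hA.f_lt_id L ⟨h0L, h1L⟩
  rw [hfix] at this
  exact lt_irrefl _ this

/-- A sequence with `g (u (k+1)) = u k`, decreasing, bounded below away from 0, is impossible. -/
lemma escape_down {u : ℕ → ℝ} {B : ℝ} (h0 : u 0 < 1) (hBgt : 0 < B)
    (hrec : ∀ k, c.g (u (k + 1)) = u k) (hanti : Antitone u) (hb : ∀ k, B ≤ u k) : False := by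
  have hbdd : BddBelow (Set.range u) := ⟨B, by rintro y ⟨n, rfl⟩; exact hb n⟩
  have htend : Filter.Tendsto u Filter.atTop (nhds (⨅ n, u n)) := tendsto_atTop_ciInf hanti hbdd
  set L := ⨅ n, u n with hL
  have hub : L ≤ u 0 := ciInf_le hbdd 0
  have hLB : B ≤ L := le_ciInf hb
  have hfix : c.g L = L := by
    have h1 : Filter.Tendsto (fun n => c.g (u (n + 1))) Filter.atTop (nhds (c.g L)) :=
      (c.gcont.continuousAt).tendsto.comp (htend.comp (Filter.tendsto_add_atTop_nat 1))
    have h4 : Filter.Tendsto (fun n => c.g (u (n + 1))) Filter.atTop (nhds L) := by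
      simpa only [hrec] using htend
    exact tendsto_nhds_unique h1 h4
  have h0L : 0 < L := lt_of_lt_of_le hBgt hLB
  have h1L : L < 1 := lt_of_le_of_lt hub h0
  have := c.hA.id_lt_g L ⟨h0L, h1L⟩
  rw [hfix] at this
  exact lt_irrefl _ this

end Ctx

namespace Ctx

variable (c : Ctx)

/-- Descent: from `v ∈ (a, 1)`, the backwards `g`-orbit enters `G₁ = [a, a₂]`. -/
lemma descent {v : ℝ} (hv1 : c.a < v) (hv2 : v < 1) :
    ∃ N : ℕ, (∀ j < N, c.G^[j] v ∈ Set.Ioo c.a2 1) ∧ c.G^[N] v ∈ Set.Ioc c.a c.a2 ∧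
      (∀ j ≤ N, c.g^[j] (c.G^[j] v) = v) := by
  have Gsucc : ∀ n : ℕ, c.G^[n+1] v = c.G (c.G^[n] v) := fun n =>
    Function.iterate_succ_apply' c.G n v
  have hGstep : ∀ x, c.a2 < x → x < 1 → (c.a < c.G x ∧ c.G x < 1 ∧ c.g (c.G x) = x ∧ c.G x < x) := by
    intro x hx1 hx2
    have hxIcc : x ∈ Set.Icc c.a 1 := ⟨by linarith [c.a_lt_a2], le_of_lt hx2⟩
    have hspec := c.G_spec hxIcc
    have h1 : c.a < c.G x := c.G_gt hxIcc c.amem (by exact hx1)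
    have h2 : c.G x < 1 := by
      apply c.G_lt hxIcc one_mem'
      rw [c.hA.g_one]; exact hx2
    refine ⟨h1, h2, hspec.1, ?_⟩
    have := c.hA.id_lt_g (c.G x) ⟨lt_trans c.apos h1, h2⟩
    rw [hspec.1] at this
    exact this
  by_cases hv : v ≤ c.a2
  · exact ⟨0, by simp, by simp [hv, hv1], by simp⟩
  push_neg at hv
  have hS : ∃ k, c.G^[k] v ≤ c.a2 := by
    by_contra hc
    push_neg at hc
    have hchain : ∀ k, c.G^[k] v < 1 ∧ c.g (c.G^[k+1] v) = c.G^[k] v := by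
      intro k
      induction k with
      | zero =>
        refine ⟨by simpa using hv2, ?_⟩
        rw [Gsucc 0]
        exact (hGstep _ (hc 0) (by simpa using hv2)).2.2.1
      | succ n ih =>
        have hn : c.G^[n+1] v < 1 := by
          rw [Gsucc n]; exact (hGstep _ (hc n) ih.1).2.1
        refine ⟨hn, ?_⟩
        rw [Gsucc (n+1)]
        exact (hGstep _ (hc (n+1)) hn).2.2.1
    have hanti : Antitone (fun k => c.G^[k] v) := by
      apply antitone_nat_of_succ_le
      intro n
      rw [Gsucc n]
      exact le_of_lt (hGstep _ (hc n) (hchain n).1).2.2.2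
    exact c.escape_down (by simpa using hv2) (lt_trans c.apos c.a_lt_a2)
      (fun k => (hchain k).2) hanti (fun k => le_of_lt (hc k))
  have hNle : c.G^[Nat.find hS] v ≤ c.a2 := Nat.find_spec hS
  have hNlt : ∀ j < Nat.find hS, c.a2 < c.G^[j] v := by
    intro j hj
    have := Nat.find_min hS hj
    push_neg at this
    exact this
  have hchain : ∀ j ≤ Nat.find hS, (c.G^[j] v < 1 ∧ c.g^[j] (c.G^[j] v) = v) := by
    intro j hj
    induction j with
    | zero => simpa using hv2
    | succ n ih =>
      have hn := ih (le_trans (Nat.le_succ n) hj)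
      have hprev : c.a2 < c.G^[n] v := hNlt n (by omega)
      have hstep := hGstep _ hprev hn.1
      constructor
      · rw [Gsucc n]; exact hstep.2.1
      · rw [Function.iterate_succ_apply, Gsucc n, hstep.2.2.1]
        exact hn.2
  refine ⟨Nat.find hS, fun j hj => ⟨hNlt j hj, (hchain j (le_of_lt hj)).1⟩, ⟨?_, hNle⟩,
    fun j hj => (hchain j hj).2⟩
  rcases Nat.eq_zero_or_pos (Nat.find hS) with h0 | h0
  · rw [h0]; simpa using hv1
  · have hn1 : Nat.find hS = (Nat.find hS - 1) + 1 := by omega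
    have hprev : c.a2 < c.G^[Nat.find hS - 1] v := hNlt _ (by omega)
    have hlt1 : c.G^[Nat.find hS - 1] v < 1 := (hchain _ (by omega)).1
    have := (hGstep _ hprev hlt1).1
    rw [hn1, Function.iterate_succ_apply' c.G _ v]
    exact this

/-- Climb: from `v ∈ (0, a)`, the backwards `f`-orbit enters `F₁ = [b₂, b]`. -/
lemma climb {v : ℝ} (hv1 : 0 < v) (hv2 : v < c.a) :
    ∃ M : ℕ, (∀ j < M, c.F^[j] v ∈ Set.Ioo 0 c.b2) ∧ c.F^[M] v ∈ Set.Ico c.b2 c.b ∧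
      (∀ j ≤ M, c.f^[j] (c.F^[j] v) = v) := by
  have Fsucc : ∀ n : ℕ, c.F^[n+1] v = c.F (c.F^[n] v) := fun n =>
    Function.iterate_succ_apply' c.F n v
  have hFstep : ∀ x, 0 < x → x < c.b2 → (0 < c.F x ∧ c.F x < c.b ∧ c.f (c.F x) = x ∧ x < c.F x) := by
    intro x hx1 hx2
    have hxIcc : x ∈ Set.Icc 0 c.b := ⟨le_of_lt hx1, by linarith [c.b2_lt_b]⟩
    have hspec := c.F_spec hxIcc
    have h1 : 0 < c.F x := by
      apply c.F_gt hxIcc zero_mem'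
      rw [c.hA.f_zero]; exact hx1
    have h2 : c.F x < c.b := c.F_lt hxIcc c.bmem (by exact hx2)
    refine ⟨h1, h2, hspec.1, ?_⟩
    have := c.hA.f_lt_id (c.F x) ⟨h1, lt_trans h2 c.b_lt_one⟩
    rw [hspec.1] at this
    exact this
  by_cases hv : c.b2 ≤ v
  · refine ⟨0, by simp, ?_, by simp⟩
    simp only [Function.iterate_zero, id]
    exact ⟨hv, lt_trans hv2 c.a_lt_b⟩
  push_neg at hv
  have hS : ∃ k, c.b2 ≤ c.F^[k] v := by
    by_contra hc
    push_neg at hc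
    have hchain : ∀ k, 0 < c.F^[k] v ∧ c.f (c.F^[k+1] v) = c.F^[k] v := by
      intro k
      induction k with
      | zero =>
        refine ⟨by simpa using hv1, ?_⟩
        rw [Fsucc 0]
        exact (hFstep _ (by simpa using hv1) (hc 0)).2.2.1
      | succ n ih =>
        have hn : 0 < c.F^[n+1] v := by
          rw [Fsucc n]; exact (hFstep _ ih.1 (hc n)).1
        refine ⟨hn, ?_⟩
        rw [Fsucc (n+1)]
        exact (hFstep _ hn (hc (n+1))).2.2.1
    have hmono : Monotone (fun k => c.F^[k] v) := by
      apply monotone_nat_of_le_succ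
      intro n
      rw [Fsucc n]
      exact le_of_lt (hFstep _ (hchain n).1 (hc n)).2.2.2
    exact c.escape_up (by simpa using hv1) (by linarith [c.b2_lt_a, c.a_lt_one])
      (fun k => (hchain k).2) hmono (fun k => le_of_lt (hc k))
  have hMge : c.b2 ≤ c.F^[Nat.find hS] v := Nat.find_spec hS
  have hMlt : ∀ j < Nat.find hS, c.F^[j] v < c.b2 := by
    intro j hj
    have := Nat.find_min hS hj
    push_neg at this
    exact this
  have hchain : ∀ j ≤ Nat.find hS, (0 < c.F^[j] v ∧ c.f^[j] (c.F^[j] v) = v) := by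
    intro j hj
    induction j with
    | zero => simpa using hv1
    | succ n ih =>
      have hn := ih (le_trans (Nat.le_succ n) hj)
      have hprev : c.F^[n] v < c.b2 := hMlt n (by omega)
      have hstep := hFstep _ hn.1 hprev
      constructor
      · rw [Fsucc n]; exact hstep.1
      · rw [Function.iterate_succ_apply, Fsucc n, hstep.2.2.1]
        exact hn.2
  refine ⟨Nat.find hS, fun j hj => ⟨(hchain j (le_of_lt hj)).1, hMlt j hj⟩, ⟨hMge, ?_⟩,
    fun j hj => (hchain j hj).2⟩
  rcases Nat.eq_zero_or_pos (Nat.find hS) with h0 | h0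
  · rw [h0]; simpa using lt_trans hv2 c.a_lt_b
  · have hn1 : Nat.find hS = (Nat.find hS - 1) + 1 := by omega
    have hprev : c.F^[Nat.find hS - 1] v < c.b2 := hMlt _ (by omega)
    have hpos : 0 < c.F^[Nat.find hS - 1] v := (hchain _ (by omega)).1
    have := (hFstep _ hpos hprev).2.1
    rw [hn1, Function.iterate_succ_apply' c.F _ v]
    exact this

end Ctx

namespace Ctx

variable (c : Ctx)

lemma F_range {y : ℝ} (hy : y ∈ Set.Ioo c.b2 c.b) : c.F y ∈ Set.Ioo c.b 1 := by
  have hyI : y ∈ Set.Icc 0 c.b := ⟨by linarith [hy.1, c.b2pos], le_of_lt hy.2⟩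
  constructor
  · exact c.F_gt hyI c.bmem hy.1
  · apply c.F_lt hyI one_mem'
    exact hy.2

lemma G_range {y : ℝ} (hy : y ∈ Set.Ioo c.a c.a2) : c.G y ∈ Set.Ioo 0 c.a := by
  have hyI : y ∈ Set.Icc c.a 1 := ⟨le_of_lt hy.1, by linarith [hy.2, c.a2_lt_one]⟩
  constructor
  · apply c.G_gt hyI zero_mem'
    exact hy.1
  · exact c.G_lt hyI c.amem hy.2

/-- characterization of `calF` on `(b₂, b)`. -/
lemma calF_spec {y : ℝ} (hy : y ∈ Set.Ioo c.b2 c.b) :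
    ∃ N : ℕ, calF c.f c.g y = c.G^[N] (c.F y) ∧
      (∀ j < N, c.G^[j] (c.F y) ∈ Set.Ioo c.a2 1) ∧
      c.G^[N] (c.F y) ∈ Set.Ioc c.a c.a2 ∧
      c.f (c.g^[N] (c.G^[N] (c.F y))) = y ∧
      (∀ j ≤ N, c.g^[j] (c.G^[j] (c.F y)) = c.F y) := by
  have hv := c.F_range hy
  obtain ⟨N, hpre, hentry, hunf⟩ := c.descent (lt_trans c.a_lt_b hv.1) hv.2
  refine ⟨N, ?_, hpre, hentry, ?_, hunf⟩
  · show (Function.invFunOn c.g unitI)^[sInf {n : ℕ |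
        (Function.invFunOn c.g unitI)^[n] (Function.invFunOn c.f unitI y) ∈ Gint c.g 1}]
      (Function.invFunOn c.f unitI y) = c.G^[N] (c.F y)
    have hset : {n : ℕ | (Function.invFunOn c.g unitI)^[n] (Function.invFunOn c.f unitI y)
        ∈ Gint c.g 1} = {n : ℕ | c.G^[n] (c.F y) ∈ Set.Icc c.a c.a2} := by
      rw [c.Gint_eq]; rfl
    have hmem : N ∈ {n : ℕ | c.G^[n] (c.F y) ∈ Set.Icc c.a c.a2} :=
      ⟨le_of_lt hentry.1, hentry.2⟩
    have hsInf : sInf {n : ℕ | c.G^[n] (c.F y) ∈ Set.Icc c.a c.a2} = N := by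
      apply le_antisymm (Nat.sInf_le hmem)
      by_contra hc
      push_neg at hc
      have h1 := Nat.sInf_mem (⟨N, hmem⟩ : {n : ℕ | c.G^[n] (c.F y) ∈ Set.Icc c.a c.a2}.Nonempty)
      have h2 := hpre _ hc
      have := h1.2
      have := h2.1
      linarith
    rw [hset, hsInf]
    rfl
  · rw [hunf N (le_refl N)]
    exact (c.F_spec ⟨by linarith [hy.1, c.b2pos], le_of_lt hy.2⟩).1

/-- characterization of `calG` on `(a, a₂)`. -/
lemma calG_spec {y : ℝ} (hy : y ∈ Set.Ioo c.a c.a2) :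
    ∃ M : ℕ, calG c.f c.g y = c.F^[M] (c.G y) ∧
      (∀ j < M, c.F^[j] (c.G y) ∈ Set.Ioo 0 c.b2) ∧
      c.F^[M] (c.G y) ∈ Set.Ico c.b2 c.b ∧
      c.g (c.f^[M] (c.F^[M] (c.G y))) = y ∧
      (∀ j ≤ M, c.f^[j] (c.F^[j] (c.G y)) = c.G y) := by
  have hv := c.G_range hy
  obtain ⟨M, hpre, hentry, hunf⟩ := c.climb hv.1 hv.2
  refine ⟨M, ?_, hpre, hentry, ?_, hunf⟩
  · show (Function.invFunOn c.f unitI)^[sInf {n : ℕ |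
        (Function.invFunOn c.f unitI)^[n] (Function.invFunOn c.g unitI y) ∈ Fint c.f 1}]
      (Function.invFunOn c.g unitI y) = c.F^[M] (c.G y)
    have hset : {n : ℕ | (Function.invFunOn c.f unitI)^[n] (Function.invFunOn c.g unitI y)
        ∈ Fint c.f 1} = {n : ℕ | c.F^[n] (c.G y) ∈ Set.Icc c.b2 c.b} := by
      rw [c.Fint_eq]; rfl
    have hmem : M ∈ {n : ℕ | c.F^[n] (c.G y) ∈ Set.Icc c.b2 c.b} :=
      ⟨hentry.1, le_of_lt hentry.2⟩
    have hsInf : sInf {n : ℕ | c.F^[n] (c.G y) ∈ Set.Icc c.b2 c.b} = M := by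
      apply le_antisymm (Nat.sInf_le hmem)
      by_contra hc
      push_neg at hc
      have h1 := Nat.sInf_mem (⟨M, hmem⟩ : {n : ℕ | c.F^[n] (c.G y) ∈ Set.Icc c.b2 c.b}.Nonempty)
      have h2 := hpre _ hc
      have := h1.1
      have := h2.2
      linarith
    rw [hset, hsInf]
    rfl
  · rw [hunf M (le_refl M)]
    exact (c.G_spec ⟨le_of_lt hy.1, by linarith [hy.2, c.a2_lt_one]⟩).1

/-- decomposition of points of `Rf`. -/
lemma Rf_decomp {y : ℝ} (hy : y ∈ Set.Ioo c.b2 c.b) (hR : y ∈ Rf c.f c.g c.Hg) :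
    ∃ (N : ℕ) (z : ℝ), z ∈ c.Hg ∧ c.f (c.g^[N] z) = y := by
  obtain ⟨N, heq, _, _, hunf, _⟩ := c.calF_spec hy
  exact ⟨N, calF c.f c.g y, hR.2, by rw [heq]; exact hunf⟩

lemma Rg_decomp {y : ℝ} (hy : y ∈ Set.Ioo c.a c.a2) (hR : y ∈ Rg c.f c.g c.Hf) :
    ∃ (M : ℕ) (z : ℝ), z ∈ c.Hf ∧ c.g (c.f^[M] z) = y := by
  obtain ⟨M, heq, _, _, hunf, _⟩ := c.calG_spec hy
  exact ⟨M, calG c.f c.g y, hR.2, by rw [heq]; exact hunf⟩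

/-! ### peeling lemmas -/

lemma peel_f {w : List Bool} {y : ℝ} (hw : word c.f c.g w 0 = y) (h1 : 0 < y) (h2 : y < c.a) :
    ∃ w' : List Bool, word c.f c.g w' 0 = c.F y := by
  cases w with
  | nil => simp only [word, id] at hw; exact absurd hw.symm (ne_of_gt h1)
  | cons bb t =>
    rw [word_cons] at hw
    have hval : word c.f c.g t 0 ∈ unitI := c.word_mem zero_mem' t
    cases bb with
    | false =>
      simp only [Bool.false_eq_true, if_neg, ite_false] at hw
      have := c.age_a hval
      rw [hw] at this
      linarith
    | true =>
      simp only [if_pos] at hw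
      refine ⟨t, ?_⟩
      rw [← hw, c.F_f hval]

lemma peel_g {w : List Bool} {y : ℝ} (hw : word c.f c.g w 0 = y) (h1 : c.b < y) (h2 : y < 1) :
    ∃ w' : List Bool, word c.f c.g w' 0 = c.G y := by
  cases w with
  | nil =>
    simp only [word, id] at hw
    have := c.bpos
    exact absurd hw (by linarith)
  | cons bb t =>
    rw [word_cons] at hw
    have hval : word c.f c.g t 0 ∈ unitI := c.word_mem zero_mem' t
    cases bb with
    | true =>
      simp only [if_pos] at hw
      have := c.fle_b hval
      rw [hw] at this
      linarith
    | false =>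
      simp only [Bool.false_eq_true, if_neg, ite_false] at hw
      refine ⟨t, ?_⟩
      rw [← hw, c.G_g hval]

lemma peel_fW {w : List Bool} {y : ℝ} (hw : word c.f c.g w 0 = y) (hy : y ∈ Set.Ioo c.a c.b)
    (hR : y ∈ Rg c.f c.g c.Hf) :
    ∃ w' : List Bool, word c.f c.g w' 0 = c.F y := by
  cases w with
  | nil =>
    simp only [word, id] at hw
    have := c.apos
    exact absurd hw (by linarith [hy.1])
  | cons bb t =>
    rw [word_cons] at hw
    have hval : word c.f c.g t 0 ∈ unitI := c.word_mem zero_mem' t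
    cases bb with
    | false =>
      simp only [Bool.false_eq_true, if_neg, ite_false] at hw
      obtain ⟨M, z, hz, hdec⟩ := c.Rg_decomp ⟨hy.1, lt_trans hy.2 c.b_lt_a2⟩ hR
      have : word c.f c.g t 0 = c.f^[M] z := by
        apply c.hA.g_inj hval (c.f_it_mem (c.Hf_mem_I hz) M)
        rw [hw, hdec]
      exact absurd this ((c.no_hole_word t).2 M z hz)
    | true =>
      simp only [if_pos] at hw
      refine ⟨t, ?_⟩
      rw [← hw, c.F_f hval]

lemma peel_gW {w : List Bool} {y : ℝ} (hw : word c.f c.g w 0 = y) (hy : y ∈ Set.Ioo c.a c.b)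
    (hR : y ∈ Rf c.f c.g c.Hg) :
    ∃ w' : List Bool, word c.f c.g w' 0 = c.G y := by
  cases w with
  | nil =>
    simp only [word, id] at hw
    have := c.apos
    exact absurd hw (by linarith [hy.1])
  | cons bb t =>
    rw [word_cons] at hw
    have hval : word c.f c.g t 0 ∈ unitI := c.word_mem zero_mem' t
    cases bb with
    | true =>
      simp only [if_pos] at hw
      obtain ⟨N, z, hz, hdec⟩ := c.Rf_decomp ⟨lt_trans c.b2_lt_a hy.1, hy.2⟩ hR
      have : word c.f c.g t 0 = c.g^[N] z := by
        apply c.hA.f_inj hval (c.g_it_mem (c.Hg_mem_I hz) N)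
        rw [hw, hdec]
      exact absurd this ((c.no_hole_word t).1 N z hz)
    | false =>
      simp only [Bool.false_eq_true, if_neg, ite_false] at hw
      refine ⟨t, ?_⟩
      rw [← hw, c.G_g hval]

lemma peel_gs {N : ℕ} : ∀ {w : List Bool} {r : ℝ}, word c.f c.g w 0 = c.g^[N] r →
    c.a < r → r < 1 → ∃ w' : List Bool, word c.f c.g w' 0 = r := by
  induction N with
  | zero => intro w r hw _ _; exact ⟨w, by simpa using hw⟩
  | succ n ih =>
    intro w r hw h1 h2
    have hrI : r ∈ unitI := ⟨le_of_lt (lt_trans c.apos h1), le_of_lt h2⟩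
    have hgr1 : c.a2 < c.g r := c.gmono c.amem hrI h1
    have hgr2 : c.g r < 1 := c.g_lt_one hrI h2
    rw [Function.iterate_succ_apply] at hw
    obtain ⟨w', hw'⟩ := ih hw (lt_trans c.a_lt_a2 hgr1) hgr2
    obtain ⟨w'', hw''⟩ := c.peel_g hw' (lt_trans c.b_lt_a2 hgr1) hgr2
    refine ⟨w'', ?_⟩
    rw [hw'', c.G_g hrI]

lemma peel_fs {M : ℕ} : ∀ {w : List Bool} {r : ℝ}, word c.f c.g w 0 = c.f^[M] r →
    0 < r → r < c.b → ∃ w' : List Bool, word c.f c.g w' 0 = r := by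
  induction M with
  | zero => intro w r hw _ _; exact ⟨w, by simpa using hw⟩
  | succ n ih =>
    intro w r hw h1 h2
    have hrI : r ∈ unitI := ⟨le_of_lt h1, le_of_lt (lt_trans h2 c.b_lt_one)⟩
    have hfr1 : 0 < c.f r := c.fpos hrI h1
    have hfr2 : c.f r < c.b2 := c.fmono hrI c.bmem h2
    rw [Function.iterate_succ_apply] at hw
    obtain ⟨w', hw'⟩ := ih hw hfr1 (lt_trans hfr2 c.b2_lt_b)
    obtain ⟨w'', hw''⟩ := c.peel_f hw' hfr1 (lt_trans hfr2 c.b2_lt_a)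
    refine ⟨w'', ?_⟩
    rw [hw'', c.F_f hrI]

end Ctx

namespace Ctx

variable (c : Ctx)

lemma h1f_gt : c.b2 < c.h1f := (c.Hf_sub c.h1f_mem).1
lemma h2f_lt : c.h2f < c.a := (c.Hf_sub c.h2f_mem).2
lemma h1g_gt : c.b < c.h1g := (c.Hg_sub c.h1g_mem).1
lemma h2g_lt : c.h2g < c.a2 := (c.Hg_sub c.h2g_mem).2

/-- If `(0, s) ⊆ K` then `(0, F s) ⊆ K` (when `s ≤ h1f`). -/
lemma low_step0 {s : ℝ} (hs : 0 < s) (hs2 : s ≤ c.h1f) (hsub : Set.Ioo 0 s ⊆ c.K) :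
    Set.Ioo 0 (c.F s) ⊆ c.K := by
  have hh1 : c.h1f < c.a := lt_trans c.h1f_lt_h2f c.h2f_lt
  have hh2 : c.h1f < c.b := lt_trans hh1 c.a_lt_b
  have hh3 := c.b2pos
  have hh4 := c.b_lt_one
  have hh5 := c.h1f_gt
  have hh6 := c.a_lt_b
  have hh7 := c.apos
  have hsb : s < c.b := by linarith
  have hsIcc : s ∈ Set.Icc 0 c.b := ⟨le_of_lt hs, le_of_lt hsb⟩
  have hFsI : c.F s ∈ unitI := (c.F_spec hsIcc).2
  intro p hp
  apply c.mem_K' hp.1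
  intro η hη
  set η₀ := min η (min p (c.F s - p)) with hη₀
  have hη₀pos : 0 < η₀ := by
    apply lt_min hη
    apply lt_min hp.1
    linarith [hp.2]
  have hη₀p : η₀ ≤ p := le_trans (min_le_right _ _) (min_le_left _ _)
  have hη₀Fs : p + η₀ ≤ c.F s := by
    have := le_trans (min_le_right _ _) (min_le_right _ _) (a := η₀)
    linarith [le_trans (min_le_right η (min p (c.F s - p))) (min_le_right p (c.F s - p))]
  have hmemlo : p - η₀ ∈ unitI := by
    constructor
    · linarith
    · have := hFsI.2; linarith [hp.2]
  have hmemhi : p + η₀ ∈ unitI := by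
    constructor
    · linarith [hp.1]
    · have := hFsI.2; linarith
  have hSsub : Set.Ioo (c.f (p - η₀)) (c.f (p + η₀)) ⊆ Set.Ioo 0 s := by
    intro x hx
    constructor
    · have h0 : 0 ≤ c.f (p - η₀) := by
        have := c.fmono_le zero_mem' hmemlo (by linarith)
        rw [c.hA.f_zero] at this
        exact this
      linarith [hx.1]
    · have hfs : c.f (p + η₀) ≤ s := by
        have := c.fmono_le hmemhi hFsI hη₀Fs
        rwa [(c.F_spec hsIcc).1] at this
      linarith [hx.2]
  have hSne : (Set.Ioo (c.f (p - η₀)) (c.f (p + η₀)) ∩ c.K).Nonempty := by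
    have hpI : p ∈ unitI := ⟨le_of_lt hp.1, by have := hFsI.2; linarith [hp.2]⟩
    have h1 : c.f (p - η₀) < c.f p := c.fmono hmemlo hpI (by linarith)
    have h2 : c.f p < c.f (p + η₀) := c.fmono hpI hmemhi (by linarith)
    exact ⟨c.f p, ⟨h1, h2⟩, hsub (hSsub ⟨h1, h2⟩)⟩
  obtain ⟨w, hw⟩ := c.orbit_exists isOpen_Ioo hSne
  set y₀ := word c.f c.g w 0 with hy₀
  have hy₀pos : 0 < y₀ := (hSsub hw).1
  have hy₀a : y₀ < c.a := by
    have := (hSsub hw).2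
    linarith [c.h2f_lt, c.h1f_lt_h2f]
  obtain ⟨w', hw'⟩ := c.peel_f rfl hy₀pos hy₀a
  refine ⟨w', ?_⟩
  rw [hw']
  have hy₀Icc : y₀ ∈ Set.Icc 0 c.b := ⟨le_of_lt hy₀pos, by linarith [c.a_lt_b]⟩
  constructor
  · have := c.F_gt hy₀Icc hmemlo hw.1
    linarith [min_le_left η (min p (c.F s - p))]
  · have := c.F_lt hy₀Icc hmemhi hw.2
    linarith [min_le_left η (min p (c.F s - p))]

/-- `(0, s) ⊆ K` is impossible. -/
lemma climb0 {s : ℝ} (hs : 0 < s) (hsub : Set.Ioo 0 s ⊆ c.K) : False := by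
  have hh1 : c.h1f < c.a := lt_trans c.h1f_lt_h2f c.h2f_lt
  have hh2 : c.h1f < c.b := lt_trans hh1 c.a_lt_b
  have hh3 := c.b2pos
  have hh4 := c.b_lt_one
  have hh5 := c.h1f_gt
  have hh6 := c.a_lt_b
  have hh7 := c.apos
  -- hole-hit case
  have hole : ∀ s', c.h1f < s' → Set.Ioo 0 s' ⊆ c.K → False := by
    intro s' hs' hsub'
    set x := (c.h1f + min s' c.h2f) / 2 with hx
    have hx1 : c.h1f < x := by
      have h1 : c.h1f < min s' c.h2f := lt_min hs' c.h1f_lt_h2f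
      rw [hx]; linarith
    have hx2 : x < c.h2f := by
      have := min_le_right s' c.h2f
      rw [hx]; linarith [c.h1f_lt_h2f]
    have hx3 : x < s' := by
      have := min_le_left s' c.h2f
      rw [hx]; linarith [c.h1f_lt_h2f]
    have hx0 : 0 < x := by
      rw [hx]; linarith [c.h1f_gt, c.b2pos, lt_min hs' c.h1f_lt_h2f]
    exact c.K_no_holef (hsub' ⟨hx0, hx3⟩) ⟨hx1, hx2⟩
  by_cases hcase : c.h1f < s
  · exact hole s hcase hsub
  push_neg at hcase
  -- iterate
  have hexit : ∃ k, c.h1f < c.F^[k] s := by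
    by_contra hc
    push_neg at hc
    have hb1 : c.h1f < 1 := by linarith [c.h2f_lt, c.a_lt_one, c.h1f_lt_h2f]
    have hchain : ∀ k, 0 < c.F^[k] s ∧ c.f (c.F^[k+1] s) = c.F^[k] s ∧
        c.F^[k] s ≤ c.F^[k+1] s := by
      intro k
      induction k with
      | zero =>
        have hstep : ∀ x, 0 < x → x ≤ c.h1f →
            (c.f (c.F x) = x ∧ 0 < c.F x ∧ x < c.F x) := by
          intro x h1 h2
          have hxI : x ∈ Set.Icc 0 c.b := ⟨le_of_lt h1, by linarith [c.h1f_gt, c.b2_lt_b]⟩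
          have hs1 := (c.F_spec hxI).1
          have hFpos : 0 < c.F x := by
            apply c.F_gt hxI zero_mem'
            rw [c.hA.f_zero]; exact h1
          have hFlt1 : c.F x < 1 := by
            apply c.F_lt hxI one_mem'
            calc x ≤ c.h1f := h2
            _ < c.b := by linarith [c.h1f_gt, c.b2_lt_b, c.h2f_lt, c.a_lt_b]
            _ = c.f 1 := rfl
          have := c.hA.f_lt_id (c.F x) ⟨hFpos, hFlt1⟩
          rw [hs1] at this
          exact ⟨hs1, hFpos, this⟩
        have h0 := hstep s hs hcase
        exact ⟨by simpa using hs, by simpa using h0.1, by simpa using le_of_lt h0.2.2⟩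
      | succ n ih =>
        have hstep : ∀ x, 0 < x → x ≤ c.h1f →
            (c.f (c.F x) = x ∧ 0 < c.F x ∧ x < c.F x) := by
          intro x h1 h2
          have hxI : x ∈ Set.Icc 0 c.b := ⟨le_of_lt h1, by linarith [c.h1f_gt, c.b2_lt_b]⟩
          have hs1 := (c.F_spec hxI).1
          have hFpos : 0 < c.F x := by
            apply c.F_gt hxI zero_mem'
            rw [c.hA.f_zero]; exact h1
          have hFlt1 : c.F x < 1 := by
            apply c.F_lt hxI one_mem'
            calc x ≤ c.h1f := h2
            _ < c.b := by linarith [c.h1f_gt, c.b2_lt_b, c.h2f_lt, c.a_lt_b]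
            _ = c.f 1 := rfl
          have := c.hA.f_lt_id (c.F x) ⟨hFpos, hFlt1⟩
          rw [hs1] at this
          exact ⟨hs1, hFpos, this⟩
        have hpos : 0 < c.F^[n+1] s := by
          rw [Function.iterate_succ_apply' c.F n s]
          exact (hstep _ ih.1 (hc n)).2.1
        have hn1 := hstep _ hpos (hc (n+1))
        constructor
        · exact hpos
        constructor
        · rw [Function.iterate_succ_apply' c.F (n+1) s]
          exact hn1.1
        · rw [Function.iterate_succ_apply' c.F (n+1) s]
          exact le_of_lt hn1.2.2
    exact c.escape_up (u := fun k => c.F^[k] s) (by simpa using hs) hb1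
      (fun k => (hchain k).2.1)
      (monotone_nat_of_le_succ (fun k => (hchain k).2.2))
      (fun k => hc k)
  have hklt : ∀ j < Nat.find hexit, c.F^[j] s ≤ c.h1f := by
    intro j hj
    have := Nat.find_min hexit hj
    push_neg at this
    exact this
  have hind : ∀ j ≤ Nat.find hexit, 0 < c.F^[j] s ∧ Set.Ioo 0 (c.F^[j] s) ⊆ c.K := by
    intro j hj
    induction j with
    | zero => exact ⟨by simpa using hs, by simpa using hsub⟩
    | succ n ih =>
      have hn := ih (le_trans (Nat.le_succ n) hj)
      have hle : c.F^[n] s ≤ c.h1f := hklt n (by omega)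
      have := c.low_step0 hn.1 hle hn.2
      rw [← Function.iterate_succ_apply' c.F n s] at this
      constructor
      · obtain ⟨q, hq⟩ : ∃ q, q ∈ Set.Ioo (0:ℝ) (c.F^[n] s) :=
          ⟨c.F^[n] s / 2, by constructor <;> linarith [hn.1]⟩
        have hFgt : c.F^[n] s < c.F^[n+1] s := by
          rw [Function.iterate_succ_apply' c.F n s]
          have hxI : c.F^[n] s ∈ Set.Icc 0 c.b :=
            ⟨le_of_lt hn.1, by linarith [c.h1f_gt, c.b2_lt_b]⟩
          apply c.F_gt hxI
          · exact ⟨le_of_lt hn.1, by linarith [c.h1f_gt, c.b2_lt_b, c.b_lt_one]⟩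
          · exact c.hA.f_lt_id _ ⟨hn.1, by linarith [c.h1f_gt, c.b2_lt_b, c.b_lt_one]⟩
        linarith [hn.1]
      · exact this
  have hfin := hind (Nat.find hexit) (le_refl _)
  exact hole _ (Nat.find_spec hexit) hfin.2

end Ctx

namespace Ctx

variable (c : Ctx)

/-- If `(s, 1) ⊆ K` then `(G s, 1) ⊆ K` (when `s ≥ h2g`). -/
lemma high_step1 {s : ℝ} (hs : s < 1) (hs2 : c.h2g ≤ s) (hsub : Set.Ioo s 1 ⊆ c.K) :
    Set.Ioo (c.G s) 1 ⊆ c.K := by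
  have hh1 : c.b < c.h2g := lt_trans c.h1g_gt c.h1g_lt_h2g
  have hh2 : c.a < s := by linarith [c.a_lt_b]
  have hsIcc : s ∈ Set.Icc c.a 1 := ⟨le_of_lt hh2, le_of_lt hs⟩
  have hGsI : c.G s ∈ unitI := (c.G_spec hsIcc).2
  intro p hp
  have hGpos : 0 < c.G s := by
    apply c.G_gt hsIcc zero_mem'
    exact hh2
  apply c.mem_K' (lt_trans hGpos hp.1)
  intro η hη
  set η₀ := min η (min (p - c.G s) (1 - p)) with hη₀
  have hη₀pos : 0 < η₀ := by
    apply lt_min hη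
    apply lt_min <;> linarith [hp.1, hp.2]
  have h1 : η₀ ≤ p - c.G s := le_trans (min_le_right _ _) (min_le_left _ _)
  have h2 : η₀ ≤ 1 - p := le_trans (min_le_right _ _) (min_le_right _ _)
  have hmemlo : p - η₀ ∈ unitI := ⟨by linarith [hGsI.1], by linarith [hp.2]⟩
  have hmemhi : p + η₀ ∈ unitI := ⟨by linarith [hGsI.1, hp.1], by linarith⟩
  have hSsub : Set.Ioo (c.g (p - η₀)) (c.g (p + η₀)) ⊆ Set.Ioo s 1 := by
    intro x hx
    constructor
    · have hlo : s ≤ c.g (p - η₀) := by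
        have := c.gmono_le hGsI hmemlo (by linarith)
        rwa [(c.G_spec hsIcc).1] at this
      linarith [hx.1]
    · have hhi : c.g (p + η₀) ≤ 1 := (c.gmem hmemhi).2
      linarith [hx.2]
  have hSne : (Set.Ioo (c.g (p - η₀)) (c.g (p + η₀)) ∩ c.K).Nonempty := by
    have hpI : p ∈ unitI := ⟨by linarith [hGsI.1, hp.1], le_of_lt hp.2⟩
    have hg1 : c.g (p - η₀) < c.g p := c.gmono hmemlo hpI (by linarith)
    have hg2 : c.g p < c.g (p + η₀) := c.gmono hpI hmemhi (by linarith)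
    exact ⟨c.g p, ⟨hg1, hg2⟩, hsub (hSsub ⟨hg1, hg2⟩)⟩
  obtain ⟨w, hw⟩ := c.orbit_exists isOpen_Ioo hSne
  have hy₀b : c.b < word c.f c.g w 0 := by
    have := (hSsub hw).1
    linarith
  have hy₀1 : word c.f c.g w 0 < 1 := (hSsub hw).2
  obtain ⟨w', hw'⟩ := c.peel_g rfl hy₀b hy₀1
  refine ⟨w', ?_⟩
  rw [hw']
  have hy₀Icc : word c.f c.g w 0 ∈ Set.Icc c.a 1 :=
    ⟨by linarith [c.a_lt_b], le_of_lt hy₀1⟩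
  constructor
  · have := c.G_gt hy₀Icc hmemlo hw.1
    linarith [min_le_left η (min (p - c.G s) (1 - p))]
  · have := c.G_lt hy₀Icc hmemhi hw.2
    linarith [min_le_left η (min (p - c.G s) (1 - p))]

/-- `(s, 1) ⊆ K` is impossible. -/
lemma desc1 {s : ℝ} (hs : s < 1) (hsub : Set.Ioo s 1 ⊆ c.K) : False := by
  have hh1 : c.b < c.h2g := lt_trans c.h1g_gt c.h1g_lt_h2g
  have hh2 := c.h2g_lt
  have hh3 := c.a2_lt_one
  have hh4 := c.h1g_gt
  have hh5 := c.h1g_lt_h2g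
  have hole : ∀ s', s' < c.h2g → Set.Ioo s' 1 ⊆ c.K → False := by
    intro s' hs' hsub'
    set x := (max s' c.h1g + c.h2g) / 2 with hx
    have hm1 : max s' c.h1g < c.h2g := max_lt hs' c.h1g_lt_h2g
    have hx1 : c.h1g < x := by
      have := le_max_right s' c.h1g
      rw [hx]; linarith
    have hx2 : x < c.h2g := by rw [hx]; linarith
    have hx3 : s' < x := by
      have := le_max_left s' c.h1g
      rw [hx]; linarith
    have hx4 : x < 1 := by linarith
    exact c.K_no_holeg (hsub' ⟨hx3, hx4⟩) ⟨hx1, hx2⟩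
  by_cases hcase : s < c.h2g
  · exact hole s hcase hsub
  push_neg at hcase
  have hGstep : ∀ x, c.h2g ≤ x → x < 1 →
      (c.g (c.G x) = x ∧ c.G x < x ∧ 0 < c.G x ∧ c.G x < 1) := by
    intro x h1 h2
    have hxI : x ∈ Set.Icc c.a 1 := ⟨by linarith [c.a_lt_b], le_of_lt h2⟩
    have hs1 := (c.G_spec hxI).1
    have hGpos : 0 < c.G x := by
      apply c.G_gt hxI zero_mem'
      show c.a < x
      linarith [c.a_lt_b]
    have hGlt1 : c.G x < 1 := by
      apply c.G_lt hxI one_mem'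
      rw [c.hA.g_one]; exact h2
    have := c.hA.id_lt_g (c.G x) ⟨hGpos, hGlt1⟩
    rw [hs1] at this
    exact ⟨hs1, this, hGpos, hGlt1⟩
  have hexit : ∃ k, c.G^[k] s < c.h2g := by
    by_contra hc
    push_neg at hc
    have hchain : ∀ k, c.G^[k] s < 1 ∧ c.g (c.G^[k+1] s) = c.G^[k] s ∧
        c.G^[k+1] s ≤ c.G^[k] s := by
      intro k
      induction k with
      | zero =>
        have h0 := hGstep s hcase hs
        refine ⟨by simpa using hs, ?_, ?_⟩
        · rw [Function.iterate_one, Function.iterate_zero, id]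
          exact h0.1
        · rw [Function.iterate_one, Function.iterate_zero, id]
          exact le_of_lt h0.2.1
      | succ n ih =>
        have hlt1 : c.G^[n+1] s < 1 := by
          rw [Function.iterate_succ_apply' c.G n s]
          exact (hGstep _ (hc n) ih.1).2.2.2
        have hn1 := hGstep _ (hc (n+1)) hlt1
        refine ⟨hlt1, ?_, ?_⟩
        · rw [Function.iterate_succ_apply' c.G (n+1) s]
          exact hn1.1
        · rw [Function.iterate_succ_apply' c.G (n+1) s]
          exact le_of_lt hn1.2.1
    exact c.escape_down (u := fun k => c.G^[k] s) (by simpa using hs)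
      (by linarith [c.bpos] : (0:ℝ) < c.h2g)
      (fun k => (hchain k).2.1)
      (antitone_nat_of_succ_le (fun k => (hchain k).2.2))
      (fun k => hc k)
  have hklt : ∀ j < Nat.find hexit, c.h2g ≤ c.G^[j] s := by
    intro j hj
    have := Nat.find_min hexit hj
    push_neg at this
    exact this
  have hind : ∀ j ≤ Nat.find hexit, c.G^[j] s < 1 ∧ Set.Ioo (c.G^[j] s) 1 ⊆ c.K := by
    intro j hj
    induction j with
    | zero => exact ⟨by simpa using hs, by simpa using hsub⟩
    | succ n ih =>
      have hn := ih (le_trans (Nat.le_succ n) hj)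
      have hge : c.h2g ≤ c.G^[n] s := hklt n (by omega)
      have hstep := c.high_step1 hn.1 hge hn.2
      rw [← Function.iterate_succ_apply' c.G n s] at hstep
      refine ⟨?_, hstep⟩
      rw [Function.iterate_succ_apply' c.G n s]
      exact (hGstep _ hge hn.1).2.2.2
  have hfin := hind (Nat.find hexit) (le_refl _)
  exact hole _ (Nat.find_spec hexit) hfin.2

/-- `(a, t) ⊆ K` is impossible: castration sends it down to an interval abutting 0. -/
lemma acc_g0 {t : ℝ} (ht : c.a < t) (hsub : Set.Ioo c.a t ⊆ c.K) : False := by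
  -- `a ∈ int Rf`
  have haW : c.a ∈ ovW c.f c.g := ⟨le_refl _, le_of_lt c.a_lt_b⟩
  have haRf : c.a ∈ interior (Rf c.f c.g c.Hg) := by
    rcases c.hCa haW with h | h
    · exact h
    · exfalso
      have := interior_subset h
      exact this.1.2 rfl
  obtain ⟨ρ, hρ, hball⟩ := Metric.isOpen_iff.mp isOpen_interior c.a haRf
  set t' := min t (min (c.a + ρ) c.b) with ht'
  have ht'a : c.a < t' := by
    apply lt_min ht
    apply lt_min <;> [linarith; exact c.a_lt_b]
  have ht'b : t' ≤ c.b := le_trans (min_le_right _ _) (min_le_right _ _)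
  have hTRf : Set.Ioo c.a t' ⊆ Rf c.f c.g c.Hg := by
    intro x hx
    apply interior_subset
    apply hball
    rw [Metric.mem_ball, Real.dist_eq, abs_sub_lt_iff]
    have hxρ : x < c.a + ρ :=
      lt_of_lt_of_le hx.2 (le_trans (min_le_right _ _) (min_le_left _ _))
    constructor <;> linarith [hx.1]
  have hT'sub : Set.Ioo c.a t' ⊆ c.K := fun x hx =>
    hsub ⟨hx.1, lt_of_lt_of_le hx.2 (min_le_left _ _)⟩
  -- transport down by `g`
  have ht'Icc : t' ∈ Set.Icc c.a 1 := ⟨le_of_lt ht'a, by linarith [c.b_lt_one]⟩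
  have hGt'pos : 0 < c.G t' := by
    apply c.G_gt ht'Icc zero_mem'
    exact ht'a
  have hdown : Set.Ioo 0 (c.G t') ⊆ c.K := by
    intro p hp
    apply c.mem_K' hp.1
    intro η hη
    set η₀ := min η (min p (c.G t' - p)) with hη₀
    have hη₀pos : 0 < η₀ := by
      apply lt_min hη
      apply lt_min hp.1
      linarith [hp.2]
    have h1 : η₀ ≤ p := le_trans (min_le_right _ _) (min_le_left _ _)
    have h2 : η₀ ≤ c.G t' - p := le_trans (min_le_right _ _) (min_le_right _ _)
    have hGt'I : c.G t' ∈ unitI := (c.G_spec ht'Icc).2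
    have hmemlo : p - η₀ ∈ unitI := ⟨by linarith, by linarith [hGt'I.2, hp.2]⟩
    have hmemhi : p + η₀ ∈ unitI := ⟨by linarith [hp.1], by linarith [hGt'I.2]⟩
    have hSsub : Set.Ioo (c.g (p - η₀)) (c.g (p + η₀)) ⊆ Set.Ioo c.a t' := by
      intro x hx
      constructor
      · have : c.a ≤ c.g (p - η₀) := c.age_a hmemlo
        linarith [hx.1]
      · have : c.g (p + η₀) ≤ t' := by
          have := c.gmono_le hmemhi hGt'I (by linarith)
          rwa [(c.G_spec ht'Icc).1] at this
        linarith [hx.2]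
    have hSne : (Set.Ioo (c.g (p - η₀)) (c.g (p + η₀)) ∩ c.K).Nonempty := by
      have hpI : p ∈ unitI := ⟨le_of_lt hp.1, by linarith [hGt'I.2, hp.2]⟩
      have hg1 : c.g (p - η₀) < c.g p := c.gmono hmemlo hpI (by linarith)
      have hg2 : c.g p < c.g (p + η₀) := c.gmono hpI hmemhi (by linarith)
      exact ⟨c.g p, ⟨hg1, hg2⟩, hT'sub (hSsub ⟨hg1, hg2⟩)⟩
    obtain ⟨w, hw⟩ := c.orbit_exists isOpen_Ioo hSne
    have hy₀ := hSsub hw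
    have hy₀W : word c.f c.g w 0 ∈ Set.Ioo c.a c.b :=
      ⟨hy₀.1, lt_of_lt_of_le hy₀.2 ht'b⟩
    obtain ⟨w', hw'⟩ := c.peel_gW rfl hy₀W (hTRf hy₀)
    refine ⟨w', ?_⟩
    rw [hw']
    have hy₀Icc : word c.f c.g w 0 ∈ Set.Icc c.a 1 :=
      ⟨le_of_lt hy₀.1, by linarith [hy₀W.2, c.b_lt_one]⟩
    constructor
    · have := c.G_gt hy₀Icc hmemlo hw.1
      linarith [min_le_left η (min p (c.G t' - p))]
    · have := c.G_lt hy₀Icc hmemhi hw.2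
      linarith [min_le_left η (min p (c.G t' - p))]
  exact c.climb0 hGt'pos hdown

/-- `(t, b) ⊆ K` is impossible. -/
lemma acc_f1 {t : ℝ} (ht : t < c.b) (hsub : Set.Ioo t c.b ⊆ c.K) : False := by
  have hbW : c.b ∈ ovW c.f c.g := ⟨le_of_lt c.a_lt_b, le_refl _⟩
  have hbRg : c.b ∈ interior (Rg c.f c.g c.Hf) := by
    rcases c.hCa hbW with h | h
    · exfalso
      have := interior_subset h
      exact this.1.2 rfl
    · exact h
  obtain ⟨ρ, hρ, hball⟩ := Metric.isOpen_iff.mp isOpen_interior c.b hbRg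
  set t' := max t (max (c.b - ρ) c.a) with ht'
  have ht'b : t' < c.b := by
    apply max_lt ht
    apply max_lt <;> [linarith; exact c.a_lt_b]
  have ht'a : c.a ≤ t' := le_trans (le_max_right _ _) (le_max_right _ _)
  have hTRg : Set.Ioo t' c.b ⊆ Rg c.f c.g c.Hf := by
    intro x hx
    apply interior_subset
    apply hball
    rw [Metric.mem_ball, Real.dist_eq, abs_sub_lt_iff]
    have hxρ : c.b - ρ < x :=
      lt_of_le_of_lt (le_trans (le_max_left _ _) (le_max_right _ _)) hx.1
    constructor <;> linarith [hx.2]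
  have hT'sub : Set.Ioo t' c.b ⊆ c.K := fun x hx =>
    hsub ⟨lt_of_le_of_lt (le_max_left _ _) hx.1, hx.2⟩
  have ht'Icc : t' ∈ Set.Icc 0 c.b := ⟨by linarith [c.apos], le_of_lt ht'b⟩
  have hFt'lt1 : c.F t' < 1 := by
    apply c.F_lt ht'Icc one_mem'
    exact ht'b
  have hup : Set.Ioo (c.F t') 1 ⊆ c.K := by
    intro p hp
    have hFt'I : c.F t' ∈ unitI := (c.F_spec ht'Icc).2
    have hFt'pos : 0 < c.F t' := by
      apply c.F_gt ht'Icc zero_mem'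
      rw [c.hA.f_zero]; linarith [c.apos]
    apply c.mem_K' (lt_trans hFt'pos hp.1)
    intro η hη
    set η₀ := min η (min (p - c.F t') (1 - p)) with hη₀
    have hη₀pos : 0 < η₀ := by
      apply lt_min hη
      apply lt_min <;> linarith [hp.1, hp.2]
    have h1 : η₀ ≤ p - c.F t' := le_trans (min_le_right _ _) (min_le_left _ _)
    have h2 : η₀ ≤ 1 - p := le_trans (min_le_right _ _) (min_le_right _ _)
    have hmemlo : p - η₀ ∈ unitI := ⟨by linarith [hFt'I.1], by linarith [hp.2]⟩
    have hmemhi : p + η₀ ∈ unitI := ⟨by linarith [hFt'I.1, hp.1], by linarith⟩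
    have hSsub : Set.Ioo (c.f (p - η₀)) (c.f (p + η₀)) ⊆ Set.Ioo t' c.b := by
      intro x hx
      constructor
      · have : t' ≤ c.f (p - η₀) := by
          have := c.fmono_le hFt'I hmemlo (by linarith)
          rwa [(c.F_spec ht'Icc).1] at this
        linarith [hx.1]
      · have : c.f (p + η₀) ≤ c.b := c.fle_b hmemhi
        linarith [hx.2]
    have hSne : (Set.Ioo (c.f (p - η₀)) (c.f (p + η₀)) ∩ c.K).Nonempty := by
      have hpI : p ∈ unitI := ⟨by linarith [hFt'I.1, hp.1], le_of_lt hp.2⟩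
      have hg1 : c.f (p - η₀) < c.f p := c.fmono hmemlo hpI (by linarith)
      have hg2 : c.f p < c.f (p + η₀) := c.fmono hpI hmemhi (by linarith)
      exact ⟨c.f p, ⟨hg1, hg2⟩, hT'sub (hSsub ⟨hg1, hg2⟩)⟩
    obtain ⟨w, hw⟩ := c.orbit_exists isOpen_Ioo hSne
    have hy₀ := hSsub hw
    have hy₀W : word c.f c.g w 0 ∈ Set.Ioo c.a c.b :=
      ⟨lt_of_le_of_lt ht'a hy₀.1, hy₀.2⟩
    obtain ⟨w', hw'⟩ := c.peel_fW rfl hy₀W (hTRg hy₀)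
    refine ⟨w', ?_⟩
    rw [hw']
    have hy₀Icc : word c.f c.g w 0 ∈ Set.Icc 0 c.b :=
      ⟨by linarith [hy₀W.1, c.apos], le_of_lt hy₀.2⟩
    constructor
    · have := c.F_gt hy₀Icc hmemlo hw.1
      linarith [min_le_left η (min (p - c.F t') (1 - p))]
    · have := c.F_lt hy₀Icc hmemhi hw.2
      linarith [min_le_left η (min (p - c.F t') (1 - p))]
  exact c.desc1 hFt'lt1 hup

end Ctx

namespace Ctx

variable (c : Ctx)

/-- Trichotomy for intervals in `W`. -/
lemma W_tri {α β : ℝ} (hαβ : α < β) (hsub : Set.Ioo α β ⊆ Set.Ioo c.a c.b)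
    (hK : Set.Ioo α β ⊆ c.K) :
    Set.Ioo α β ⊆ Rf c.f c.g c.Hg ∨ Set.Ioo α β ⊆ Rg c.f c.g c.Hf := by
  by_cases h1 : Set.Ioo α β ⊆ interior (Rf c.f c.g c.Hg)
  · exact Or.inl (fun x hx => interior_subset (h1 hx))
  by_cases h2 : Set.Ioo α β ⊆ interior (Rg c.f c.g c.Hf)
  · exact Or.inr (fun x hx => interior_subset (h2 hx))
  exfalso
  rw [Set.not_subset] at h1 h2
  obtain ⟨x1, hx1, hx1n⟩ := h1
  obtain ⟨x2, hx2, hx2n⟩ := h2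
  have hcov : Set.Ioo α β ⊆ interior (Rf c.f c.g c.Hg) ∪ interior (Rg c.f c.g c.Hf) := by
    intro x hx
    apply c.hCa
    have := hsub hx
    exact ⟨le_of_lt this.1, le_of_lt this.2⟩
  have hne1 : (Set.Ioo α β ∩ interior (Rf c.f c.g c.Hg)).Nonempty := by
    refine ⟨x2, hx2, ?_⟩
    rcases hcov hx2 with h | h
    · exact h
    · exact absurd h hx2n
  have hne2 : (Set.Ioo α β ∩ interior (Rg c.f c.g c.Hf)).Nonempty := by
    refine ⟨x1, hx1, ?_⟩
    rcases hcov hx1 with h | h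
    · exact absurd h hx1n
    · exact h
  obtain ⟨z, hzT, hzRf, hzRg⟩ :=
    isPreconnected_Ioo (u := interior (Rf c.f c.g c.Hg)) (v := interior (Rg c.f c.g c.Hf))
      isOpen_interior isOpen_interior hcov hne1 hne2
  -- a small interval inside both
  have hzO : IsOpen (interior (Rf c.f c.g c.Hg) ∩ interior (Rg c.f c.g c.Hf)) :=
    isOpen_interior.inter isOpen_interior
  obtain ⟨δ, hδ, hball⟩ := Metric.isOpen_iff.mp hzO z ⟨hzRf, hzRg⟩
  set u := max α (z - δ/2) with hu
  set v := min β (z + δ/2) with hv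
  have hzuv : z ∈ Set.Ioo u v := by
    constructor
    · apply max_lt hzT.1; linarith
    · apply lt_min hzT.2; linarith
  have huvT : Set.Ioo u v ⊆ Set.Ioo α β := fun x hx =>
    ⟨lt_of_le_of_lt (le_max_left _ _) hx.1, lt_of_lt_of_le hx.2 (min_le_left _ _)⟩
  have huvB : Set.Ioo u v ⊆ interior (Rf c.f c.g c.Hg) ∩ interior (Rg c.f c.g c.Hf) := by
    intro x hx
    apply hball
    rw [Metric.mem_ball, Real.dist_eq, abs_sub_lt_iff]
    have h1 : z - δ/2 ≤ u := le_max_right _ _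
    have h2 : v ≤ z + δ/2 := min_le_right _ _
    constructor <;> linarith [hx.1, hx.2, hδ]
  obtain ⟨w, hw⟩ := c.orbit_exists isOpen_Ioo ⟨z, hzuv, hK (huvT hzuv)⟩
  set y₀ := word c.f c.g w 0 with hy₀
  have hy₀W : y₀ ∈ Set.Ioo c.a c.b := hsub (huvT hw)
  have hy₀Rf : y₀ ∈ Rf c.f c.g c.Hg := interior_subset (huvB hw).1
  have hy₀Rg : y₀ ∈ Rg c.f c.g c.Hf := interior_subset (huvB hw).2
  -- now no letter is possible
  cases w with
  | nil =>
    have : y₀ = 0 := rfl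
    rw [this] at hy₀W
    exact absurd hy₀W.1 (not_lt.mpr (le_of_lt c.apos))
  | cons bb t =>
    have hval : word c.f c.g t 0 ∈ unitI := c.word_mem zero_mem' t
    cases bb with
    | true =>
      obtain ⟨N, zz, hzz, hdec⟩ :=
        c.Rf_decomp ⟨lt_trans c.b2_lt_a hy₀W.1, hy₀W.2⟩ hy₀Rf
      have heq : word c.f c.g t 0 = c.g^[N] zz := by
        apply c.hA.f_inj hval (c.g_it_mem (c.Hg_mem_I hzz) N)
        rw [hdec]
        exact (c.word_cons true t 0).symm.trans rfl
      exact (c.no_hole_word t).1 N zz hzz heq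
    | false =>
      obtain ⟨M, zz, hzz, hdec⟩ :=
        c.Rg_decomp ⟨hy₀W.1, lt_trans hy₀W.2 c.b_lt_a2⟩ hy₀Rg
      have heq : word c.f c.g t 0 = c.f^[M] zz := by
        apply c.hA.g_inj hval (c.f_it_mem (c.Hf_mem_I hzz) M)
        rw [hdec]
        exact (c.word_cons false t 0).symm.trans rfl
      exact (c.no_hole_word t).2 M zz hzz heq

/-! ### differentiability of the inverse branches -/

lemma F_contAt {y : ℝ} (hy : y ∈ Set.Ioo 0 c.b) : ContinuousAt c.F y := by
  have hyI : y ∈ Set.Icc 0 c.b := ⟨le_of_lt hy.1, le_of_lt hy.2⟩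
  have hx0 : 0 < c.F y := by
    apply c.F_gt hyI zero_mem'
    rw [c.hA.f_zero]; exact hy.1
  have hx1 : c.F y < 1 := by
    apply c.F_lt hyI one_mem'
    exact hy.2
  have hFyI : c.F y ∈ unitI := (c.F_spec hyI).2
  rw [ContinuousAt, tendsto_order]
  constructor
  · intro l hl
    set x₁ := (max l 0 + c.F y) / 2 with hx₁
    have hm : max l 0 < c.F y := max_lt hl hx0
    have hx₁1 : x₁ < c.F y := by rw [hx₁]; linarith
    have hx₁2 : l < x₁ := by
      have := le_max_left l 0
      rw [hx₁]; linarith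
    have hx₁I : x₁ ∈ unitI := by
      constructor
      · have := le_max_right l 0
        rw [hx₁]; linarith [hx0]
      · linarith [hx1]
    have hnb : Set.Ioo (c.f x₁) c.b ∈ nhds y := by
      apply Ioo_mem_nhds _ hy.2
      have := c.fmono hx₁I hFyI hx₁1
      rwa [(c.F_spec hyI).1] at this
    filter_upwards [hnb] with y' hy'
    have hy'I : y' ∈ Set.Icc 0 c.b := by
      constructor
      · have : 0 ≤ c.f x₁ := by
          have := c.fmono_le zero_mem' hx₁I hx₁I.1
          rwa [c.hA.f_zero] at this
        linarith [hy'.1]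
      · exact le_of_lt hy'.2
    have := c.F_gt hy'I hx₁I hy'.1
    linarith
  · intro u hu
    set x₂ := (c.F y + min u 1) / 2 with hx₂
    have hm : c.F y < min u 1 := lt_min hu hx1
    have hx₂1 : c.F y < x₂ := by rw [hx₂]; linarith
    have hx₂2 : x₂ < u := by
      have := min_le_left u 1
      rw [hx₂]; linarith
    have hx₂I : x₂ ∈ unitI := by
      constructor
      · linarith [hx0]
      · have := min_le_right u 1
        rw [hx₂]; linarith [hx0]
    have hnb : Set.Ioo 0 (c.f x₂) ∈ nhds y := by
      apply Ioo_mem_nhds hy.1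
      have := c.fmono hFyI hx₂I hx₂1
      rwa [(c.F_spec hyI).1] at this
    filter_upwards [hnb] with y' hy'
    have hy'I : y' ∈ Set.Icc 0 c.b := by
      constructor
      · exact le_of_lt hy'.1
      · have := c.fle_b hx₂I
        linarith [hy'.2]
    have := c.F_lt hy'I hx₂I hy'.2
    linarith

lemma G_contAt {y : ℝ} (hy : y ∈ Set.Ioo c.a 1) : ContinuousAt c.G y := by
  have hyI : y ∈ Set.Icc c.a 1 := ⟨le_of_lt hy.1, le_of_lt hy.2⟩
  have hx0 : 0 < c.G y := by
    apply c.G_gt hyI zero_mem'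
    exact hy.1
  have hx1 : c.G y < 1 := by
    apply c.G_lt hyI one_mem'
    rw [c.hA.g_one]; exact hy.2
  have hGyI : c.G y ∈ unitI := (c.G_spec hyI).2
  rw [ContinuousAt, tendsto_order]
  constructor
  · intro l hl
    set x₁ := (max l 0 + c.G y) / 2 with hx₁
    have hm : max l 0 < c.G y := max_lt hl hx0
    have hx₁1 : x₁ < c.G y := by rw [hx₁]; linarith
    have hx₁2 : l < x₁ := by
      have := le_max_left l 0
      rw [hx₁]; linarith
    have hx₁I : x₁ ∈ unitI := by
      constructor
      · have := le_max_right l 0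
        rw [hx₁]; linarith [hx0]
      · linarith [hx1]
    have hnb : Set.Ioo (c.g x₁) 1 ∈ nhds y := by
      apply Ioo_mem_nhds _ hy.2
      have := c.gmono hx₁I hGyI hx₁1
      rwa [(c.G_spec hyI).1] at this
    filter_upwards [hnb] with y' hy'
    have hy'I : y' ∈ Set.Icc c.a 1 := by
      constructor
      · have : c.a ≤ c.g x₁ := c.age_a hx₁I
        linarith [hy'.1]
      · exact le_of_lt hy'.2
    have := c.G_gt hy'I hx₁I hy'.1
    linarith
  · intro u hu
    set x₂ := (c.G y + min u 1) / 2 with hx₂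
    have hm : c.G y < min u 1 := lt_min hu hx1
    have hx₂1 : c.G y < x₂ := by rw [hx₂]; linarith
    have hx₂2 : x₂ < u := by
      have := min_le_left u 1
      rw [hx₂]; linarith
    have hx₂I : x₂ ∈ unitI := by
      constructor
      · linarith [hx0]
      · have := min_le_right u 1
        rw [hx₂]; linarith [hx0]
    have hnb : Set.Ioo c.a (c.g x₂) ∈ nhds y := by
      apply Ioo_mem_nhds hy.1
      have := c.gmono hGyI hx₂I hx₂1
      rwa [(c.G_spec hyI).1] at this
    filter_upwards [hnb] with y' hy'
    have hy'I : y' ∈ Set.Icc c.a 1 := by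
      constructor
      · exact le_of_lt hy'.1
      · have := (c.gmem hx₂I).2
        linarith [hy'.2]
    have := c.G_lt hy'I hx₂I hy'.2
    linarith

lemma F_hasDeriv {y : ℝ} (hy : y ∈ Set.Ioo 0 c.b) :
    HasDerivAt c.F (deriv c.f (c.F y))⁻¹ y ∧ 0 < (deriv c.f (c.F y))⁻¹ := by
  have hyI : y ∈ Set.Icc 0 c.b := ⟨le_of_lt hy.1, le_of_lt hy.2⟩
  have hFyI : c.F y ∈ unitI := (c.F_spec hyI).2
  have hpos := c.f_deriv_pos (c.F y) hFyI
  constructor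
  · apply HasDerivAt.of_local_left_inverse (c.F_contAt hy)
      ((c.hA.f_c1.differentiable one_ne_zero (c.F y)).hasDerivAt) (ne_of_gt hpos)
    filter_upwards [Ioo_mem_nhds hy.1 hy.2] with y' hy'
    exact (c.F_spec ⟨le_of_lt hy'.1, le_of_lt hy'.2⟩).1
  · exact inv_pos.mpr hpos

lemma G_hasDeriv {y : ℝ} (hy : y ∈ Set.Ioo c.a 1) :
    HasDerivAt c.G (deriv c.g (c.G y))⁻¹ y ∧ 0 < (deriv c.g (c.G y))⁻¹ := by
  have hyI : y ∈ Set.Icc c.a 1 := ⟨le_of_lt hy.1, le_of_lt hy.2⟩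
  have hGyI : c.G y ∈ unitI := (c.G_spec hyI).2
  have hpos := c.g_deriv_pos (c.G y) hGyI
  constructor
  · apply HasDerivAt.of_local_left_inverse (c.G_contAt hy)
      ((c.hA.g_c1.differentiable one_ne_zero (c.G y)).hasDerivAt) (ne_of_gt hpos)
    filter_upwards [Ioo_mem_nhds hy.1 hy.2] with y' hy'
    exact (c.G_spec ⟨le_of_lt hy'.1, le_of_lt hy'.2⟩).1
  · exact inv_pos.mpr hpos

/-- derivative of the chain `x ↦ G^[N] (F x)`. -/
lemma chainF_hasDeriv (N : ℕ) {z : ℝ} (hz : z ∈ Set.Ioo 0 c.b)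
    (hpre : ∀ j < N, c.G^[j] (c.F z) ∈ Set.Ioo c.a 1) :
    ∃ d : ℝ, 0 < d ∧ HasDerivAt (fun x => c.G^[N] (c.F x)) d z := by
  induction N with
  | zero =>
    obtain ⟨hd, hdpos⟩ := c.F_hasDeriv hz
    exact ⟨_, hdpos, by simpa using hd⟩
  | succ n ih =>
    obtain ⟨d, hdpos, hd⟩ := ih (fun j hj => hpre j (by omega))
    have hv : c.G^[n] (c.F z) ∈ Set.Ioo c.a 1 := hpre n (by omega)
    obtain ⟨hG, hGpos⟩ := c.G_hasDeriv hv
    have hcomp := hG.comp z hd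
    have heq : (fun x => c.G^[n+1] (c.F x)) = (c.G ∘ fun x => c.G^[n] (c.F x)) :=
      funext fun x => Function.iterate_succ_apply' c.G n (c.F x)
    rw [heq]
    exact ⟨_, mul_pos hGpos hdpos, hcomp⟩

/-- derivative of the chain `x ↦ F^[M] (G x)`. -/
lemma chainG_hasDeriv (M : ℕ) {z : ℝ} (hz : z ∈ Set.Ioo c.a 1)
    (hpre : ∀ j < M, c.F^[j] (c.G z) ∈ Set.Ioo 0 c.b) :
    ∃ d : ℝ, 0 < d ∧ HasDerivAt (fun x => c.F^[M] (c.G x)) d z := by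
  induction M with
  | zero =>
    obtain ⟨hd, hdpos⟩ := c.G_hasDeriv hz
    exact ⟨_, hdpos, by simpa using hd⟩
  | succ n ih =>
    obtain ⟨d, hdpos, hd⟩ := ih (fun j hj => hpre j (by omega))
    have hv : c.F^[n] (c.G z) ∈ Set.Ioo 0 c.b := hpre n (by omega)
    obtain ⟨hF, hFpos⟩ := c.F_hasDeriv hv
    have hcomp := hF.comp z hd
    have heq : (fun x => c.F^[n+1] (c.G x)) = (c.F ∘ fun x => c.F^[n] (c.G x)) :=
      funext fun x => Function.iterate_succ_apply' c.F n (c.G x)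
    rw [heq]
    exact ⟨_, mul_pos hFpos hdpos, hcomp⟩

end Ctx

namespace Ctx

variable (c : Ctx)

/-- the expansion constant. -/
def mu : ℝ := c.hEe.choose
lemma mu_one : 1 < c.mu := c.hEe.choose_spec.1
lemma mu_pos : 0 < c.mu := lt_trans zero_lt_one c.mu_one
lemma mu_specF : ∀ y ∈ Fint c.f 1 \ c.Hf, DifferentiableAt ℝ (calF c.f c.g) y →
    c.mu < deriv (calF c.f c.g) y := c.hEe.choose_spec.2.1
lemma mu_specG : ∀ y ∈ Gint c.g 1 \ c.Hg, DifferentiableAt ℝ (calG c.f c.g) y →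
    c.mu < deriv (calG c.f c.g) y := c.hEe.choose_spec.2.2

/-- entry counts -/
def NF (x : ℝ) : ℕ := sInf {n : ℕ | c.G^[n] (c.F x) ∈ Set.Icc c.a c.a2}
def MG (x : ℝ) : ℕ := sInf {n : ℕ | c.F^[n] (c.G x) ∈ Set.Icc c.b2 c.b}

lemma NF_unique {N : ℕ} {x : ℝ} (h1 : ∀ j < N, c.a2 < c.G^[j] (c.F x))
    (h2 : c.G^[N] (c.F x) ∈ Set.Icc c.a c.a2) : c.NF x = N := by
  apply le_antisymm (Nat.sInf_le h2)
  by_contra hc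
  push_neg at hc
  have hmem := Nat.sInf_mem (⟨N, h2⟩ :
    {n : ℕ | c.G^[n] (c.F x) ∈ Set.Icc c.a c.a2}.Nonempty)
  have := h1 _ hc
  have := hmem.2
  linarith

lemma MG_unique {M : ℕ} {x : ℝ} (h1 : ∀ j < M, c.F^[j] (c.G x) < c.b2)
    (h2 : c.F^[M] (c.G x) ∈ Set.Icc c.b2 c.b) : c.MG x = M := by
  apply le_antisymm (Nat.sInf_le h2)
  by_contra hc
  push_neg at hc
  have hmem := Nat.sInf_mem (⟨M, h2⟩ :
    {n : ℕ | c.F^[n] (c.G x) ∈ Set.Icc c.b2 c.b}.Nonempty)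
  have := h1 _ hc
  have := hmem.1
  linarith

lemma calF_eq_of {N : ℕ} {x : ℝ} (h1 : ∀ j < N, c.a2 < c.G^[j] (c.F x))
    (h2 : c.G^[N] (c.F x) ∈ Set.Icc c.a c.a2) : calF c.f c.g x = c.G^[N] (c.F x) := by
  show (Function.invFunOn c.g unitI)^[sInf {n : ℕ |
      (Function.invFunOn c.g unitI)^[n] (Function.invFunOn c.f unitI x) ∈ Gint c.g 1}]
    (Function.invFunOn c.f unitI x) = c.G^[N] (c.F x)
  have hset : {n : ℕ | (Function.invFunOn c.g unitI)^[n] (Function.invFunOn c.f unitI x)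
      ∈ Gint c.g 1} = {n : ℕ | c.G^[n] (c.F x) ∈ Set.Icc c.a c.a2} := by
    rw [c.Gint_eq]; rfl
  rw [hset]
  rw [show sInf {n : ℕ | c.G^[n] (c.F x) ∈ Set.Icc c.a c.a2} = N from c.NF_unique h1 h2]
  rfl

lemma calG_eq_of {M : ℕ} {x : ℝ} (h1 : ∀ j < M, c.F^[j] (c.G x) < c.b2)
    (h2 : c.F^[M] (c.G x) ∈ Set.Icc c.b2 c.b) : calG c.f c.g x = c.F^[M] (c.G x) := by
  show (Function.invFunOn c.f unitI)^[sInf {n : ℕ |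
      (Function.invFunOn c.f unitI)^[n] (Function.invFunOn c.g unitI x) ∈ Fint c.f 1}]
    (Function.invFunOn c.g unitI x) = c.F^[M] (c.G x)
  have hset : {n : ℕ | (Function.invFunOn c.f unitI)^[n] (Function.invFunOn c.g unitI x)
      ∈ Fint c.f 1} = {n : ℕ | c.F^[n] (c.G x) ∈ Set.Icc c.b2 c.b} := by
    rw [c.Fint_eq]; rfl
  rw [hset]
  rw [show sInf {n : ℕ | c.F^[n] (c.G x) ∈ Set.Icc c.b2 c.b} = M from c.MG_unique h1 h2]
  rfl

lemma NF_spec {y : ℝ} (hy : y ∈ Set.Ioo c.b2 c.b) :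
    calF c.f c.g y = c.G^[c.NF y] (c.F y) ∧
      (∀ j < c.NF y, c.G^[j] (c.F y) ∈ Set.Ioo c.a2 1) ∧
      c.G^[c.NF y] (c.F y) ∈ Set.Ioc c.a c.a2 ∧
      c.f (c.g^[c.NF y] (c.G^[c.NF y] (c.F y))) = y ∧
      (∀ j ≤ c.NF y, c.g^[j] (c.G^[j] (c.F y)) = c.F y) := by
  obtain ⟨N, e1, e2, e3, e4, e5⟩ := c.calF_spec hy
  have hNF : c.NF y = N := c.NF_unique (fun j hj => (e2 j hj).1) ⟨le_of_lt e3.1, e3.2⟩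
  rw [hNF]
  exact ⟨e1, e2, e3, e4, e5⟩

lemma MG_spec {y : ℝ} (hy : y ∈ Set.Ioo c.a c.a2) :
    calG c.f c.g y = c.F^[c.MG y] (c.G y) ∧
      (∀ j < c.MG y, c.F^[j] (c.G y) ∈ Set.Ioo 0 c.b2) ∧
      c.F^[c.MG y] (c.G y) ∈ Set.Ico c.b2 c.b ∧
      c.g (c.f^[c.MG y] (c.F^[c.MG y] (c.G y))) = y ∧
      (∀ j ≤ c.MG y, c.f^[j] (c.F^[j] (c.G y)) = c.G y) := by
  obtain ⟨M, e1, e2, e3, e4, e5⟩ := c.calG_spec hy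
  have hMG : c.MG y = M := c.MG_unique (fun j hj => (e2 j hj).2) ⟨e3.1, le_of_lt e3.2⟩
  rw [hMG]
  exact ⟨e1, e2, e3, e4, e5⟩

/-- strict monotonicity of iterates -/
lemma g_it_mono {x x' : ℝ} (hx : x ∈ unitI) (hx' : x' ∈ unitI) (h : x < x') (k : ℕ) :
    c.g^[k] x < c.g^[k] x' := by
  induction k with
  | zero => exact h
  | succ n ih =>
    rw [Function.iterate_succ_apply' c.g n x, Function.iterate_succ_apply' c.g n x']
    exact c.gmono (c.g_it_mem hx n) (c.g_it_mem hx' n) ih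

lemma f_it_mono {x x' : ℝ} (hx : x ∈ unitI) (hx' : x' ∈ unitI) (h : x < x') (k : ℕ) :
    c.f^[k] x < c.f^[k] x' := by
  induction k with
  | zero => exact h
  | succ n ih =>
    rw [Function.iterate_succ_apply' c.f n x, Function.iterate_succ_apply' c.f n x']
    exact c.fmono (c.f_it_mem hx n) (c.f_it_mem hx' n) ih

/-- chain sandwich for `G`. -/
lemma G_sandwich {k : ℕ} : ∀ {lo hi v : ℝ}, lo ∈ unitI → hi ∈ unitI →
    c.g^[k] lo < v → v < c.g^[k] hi →
    (c.G^[k] v ∈ Set.Ioo lo hi ∧ c.g^[k] (c.G^[k] v) = v) := by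
  induction k with
  | zero =>
    intro lo hi v _ _ h1 h2
    exact ⟨⟨h1, h2⟩, rfl⟩
  | succ n ih =>
    intro lo hi v hlo hhi h1 h2
    rw [Function.iterate_succ_apply' c.g n lo] at h1
    rw [Function.iterate_succ_apply' c.g n hi] at h2
    have hvI : v ∈ Set.Icc c.a 1 := by
      constructor
      · have := c.age_a (c.g_it_mem hlo n)
        linarith
      · have := (c.gmem (c.g_it_mem hhi n)).2
        linarith
    have hGv1 : c.g^[n] lo < c.G v := c.G_gt hvI (c.g_it_mem hlo n) h1
    have hGv2 : c.G v < c.g^[n] hi := c.G_lt hvI (c.g_it_mem hhi n) h2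
    have hres := ih hlo hhi hGv1 hGv2
    rw [Function.iterate_succ_apply c.G n v]
    refine ⟨hres.1, ?_⟩
    rw [Function.iterate_succ_apply' c.g n]
    rw [hres.2]
    exact (c.G_spec hvI).1

/-- chain sandwich for `F`. -/
lemma F_sandwich {k : ℕ} : ∀ {lo hi v : ℝ}, lo ∈ unitI → hi ∈ unitI →
    c.f^[k] lo < v → v < c.f^[k] hi →
    (c.F^[k] v ∈ Set.Ioo lo hi ∧ c.f^[k] (c.F^[k] v) = v) := by
  induction k with
  | zero =>
    intro lo hi v _ _ h1 h2
    exact ⟨⟨h1, h2⟩, rfl⟩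
  | succ n ih =>
    intro lo hi v hlo hhi h1 h2
    rw [Function.iterate_succ_apply' c.f n lo] at h1
    rw [Function.iterate_succ_apply' c.f n hi] at h2
    have hvI : v ∈ Set.Icc 0 c.b := by
      constructor
      · have : 0 ≤ c.f (c.f^[n] lo) := by
          have := c.fmono_le zero_mem' (c.f_it_mem hlo n) (c.f_it_mem hlo n).1
          rwa [c.hA.f_zero] at this
        linarith
      · have := c.fle_b (c.f_it_mem hhi n)
        linarith
    have hFv1 : c.f^[n] lo < c.F v := c.F_gt hvI (c.f_it_mem hlo n) h1
    have hFv2 : c.F v < c.f^[n] hi := c.F_lt hvI (c.f_it_mem hhi n) h2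
    have hres := ih hlo hhi hFv1 hFv2
    rw [Function.iterate_succ_apply c.F n v]
    refine ⟨hres.1, ?_⟩
    rw [Function.iterate_succ_apply' c.f n]
    rw [hres.2]
    exact (c.F_spec hvI).1

/-- monotonicity of the `calF` chain in the point. -/
lemma chainF_mono {N : ℕ} {y y' : ℝ} (h : y < y') (hyI : y ∈ Set.Icc 0 c.b)
    (hy'I : y' ∈ Set.Icc 0 c.b)
    (hp : ∀ j < N, c.G^[j] (c.F y) ∈ Set.Ioo c.a2 1)
    (hp' : ∀ j < N, c.G^[j] (c.F y') ∈ Set.Ioo c.a2 1) :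
    ∀ j ≤ N, c.G^[j] (c.F y) < c.G^[j] (c.F y') := by
  intro j hj
  induction j with
  | zero => simpa using c.F_mono hyI hy'I h
  | succ n ih =>
    have hn := ih (le_trans (Nat.le_succ n) hj)
    have h1 := hp n (by omega)
    have h2 := hp' n (by omega)
    rw [Function.iterate_succ_apply' c.G n (c.F y),
        Function.iterate_succ_apply' c.G n (c.F y')]
    apply c.G_mono _ _ hn
    · exact ⟨by linarith [h1.1, c.a_lt_a2], le_of_lt h1.2⟩
    · exact ⟨by linarith [h2.1, c.a_lt_a2], le_of_lt h2.2⟩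

lemma chainG_mono {M : ℕ} {y y' : ℝ} (h : y < y') (hyI : y ∈ Set.Icc c.a 1)
    (hy'I : y' ∈ Set.Icc c.a 1)
    (hp : ∀ j < M, c.F^[j] (c.G y) ∈ Set.Ioo 0 c.b2)
    (hp' : ∀ j < M, c.F^[j] (c.G y') ∈ Set.Ioo 0 c.b2) :
    ∀ j ≤ M, c.F^[j] (c.G y) < c.F^[j] (c.G y') := by
  intro j hj
  induction j with
  | zero => simpa using c.G_mono hyI hy'I h
  | succ n ih =>
    have hn := ih (le_trans (Nat.le_succ n) hj)
    have h1 := hp n (by omega)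
    have h2 := hp' n (by omega)
    rw [Function.iterate_succ_apply' c.F n (c.G y),
        Function.iterate_succ_apply' c.F n (c.G y')]
    apply c.F_mono _ _ hn
    · exact ⟨le_of_lt h1.1, by linarith [h1.2, c.b2_lt_b]⟩
    · exact ⟨le_of_lt h2.1, by linarith [h2.2, c.b2_lt_b]⟩

end Ctx

namespace Ctx

variable (c : Ctx)

/-- Transport of `K`-membership through a chain `f ∘ g^[k]`. -/
lemma transportF {α β : ℝ} (hK : Set.Ioo α β ⊆ c.K)
    (hpos : Set.Ioo α β ⊆ Set.Ioo c.b2 c.b)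
    (hforce : Set.Ioo α β ⊆ Set.Ioo 0 c.a ∨ Set.Ioo α β ⊆ Rg c.f c.g c.Hf ∩ Set.Ioo c.a c.b)
    (k : ℕ) (lo hi : ℝ) (hlo : c.a ≤ lo) (hlohi : lo < hi) (hhi : hi < 1)
    (hΨlo : α ≤ c.f (c.g^[k] lo)) (hΨhi : c.f (c.g^[k] hi) ≤ β) :
    Set.Ioo lo hi ⊆ c.K := by
  have hpeel1 : ∀ (w : List Bool) (y₀ : ℝ), word c.f c.g w 0 = y₀ → y₀ ∈ Set.Ioo α β →
      ∃ w', word c.f c.g w' 0 = c.F y₀ := by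
    intro w y₀ hw hy₀
    rcases hforce with hf | hf
    · exact c.peel_f hw (hf hy₀).1 (hf hy₀).2
    · exact c.peel_fW hw ((hf hy₀).2) ((hf hy₀).1)
  have hloI : lo ∈ unitI := ⟨le_trans (le_of_lt c.apos) hlo, by linarith⟩
  have hhiI : hi ∈ unitI := ⟨by linarith [c.apos], le_of_lt hhi⟩
  have hΨmono : ∀ z z', z ∈ unitI → z' ∈ unitI → z < z' →
      c.f (c.g^[k] z) < c.f (c.g^[k] z') := by
    intro z z' hz hz' hzz
    exact c.fmono (c.g_it_mem hz k) (c.g_it_mem hz' k) (c.g_it_mono hz hz' hzz k)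
  have hΨmono_le : ∀ z z', z ∈ unitI → z' ∈ unitI → z ≤ z' →
      c.f (c.g^[k] z) ≤ c.f (c.g^[k] z') := by
    intro z z' hz hz' hzz
    rcases eq_or_lt_of_le hzz with rfl | h
    · exact le_refl _
    · exact le_of_lt (hΨmono z z' hz hz' h)
  intro r hr
  apply c.mem_K' (by linarith [c.apos, hr.1] : (0:ℝ) < r)
  intro η hη
  set η₀ := min η (min (r - lo) (hi - r)) with hη₀
  have hη₀pos : 0 < η₀ := by
    apply lt_min hη
    apply lt_min <;> linarith [hr.1, hr.2]
  have he1 : η₀ ≤ r - lo := le_trans (min_le_right _ _) (min_le_left _ _)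
  have he2 : η₀ ≤ hi - r := le_trans (min_le_right _ _) (min_le_right _ _)
  have hlo'I : r - η₀ ∈ unitI := ⟨by linarith [hloI.1], by linarith [hhiI.2]⟩
  have hhi'I : r + η₀ ∈ unitI := ⟨by linarith [hloI.1], by linarith [hhiI.2]⟩
  have hrI : r ∈ unitI := ⟨by linarith [hloI.1], by linarith [hhiI.2]⟩
  have hSsub : Set.Ioo (c.f (c.g^[k] (r - η₀))) (c.f (c.g^[k] (r + η₀))) ⊆ Set.Ioo α β := by
    intro x hx
    constructor
    · have := hΨmono_le lo (r - η₀) hloI hlo'I (by linarith)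
      linarith [hx.1]
    · have := hΨmono_le (r + η₀) hi hhi'I hhiI (by linarith)
      linarith [hx.2]
  have hSne : (Set.Ioo (c.f (c.g^[k] (r - η₀))) (c.f (c.g^[k] (r + η₀))) ∩ c.K).Nonempty := by
    have h1 := hΨmono (r - η₀) r hlo'I hrI (by linarith)
    have h2 := hΨmono r (r + η₀) hrI hhi'I (by linarith)
    exact ⟨c.f (c.g^[k] r), ⟨h1, h2⟩, hK (hSsub ⟨h1, h2⟩)⟩
  obtain ⟨w, hw⟩ := c.orbit_exists isOpen_Ioo hSne
  set y₀ := word c.f c.g w 0 with hy₀def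
  have hy₀T : y₀ ∈ Set.Ioo α β := hSsub hw
  have hy₀Icc : y₀ ∈ Set.Icc 0 c.b := by
    have := hpos hy₀T
    exact ⟨by linarith [this.1, c.b2pos], le_of_lt this.2⟩
  obtain ⟨w₁, hw₁⟩ := hpeel1 w y₀ rfl hy₀T
  -- sandwich the chain
  have hF1 : c.g^[k] (r - η₀) < c.F y₀ := c.F_gt hy₀Icc (c.g_it_mem hlo'I k) hw.1
  have hF2 : c.F y₀ < c.g^[k] (r + η₀) := c.F_lt hy₀Icc (c.g_it_mem hhi'I k) hw.2
  obtain ⟨hr₀mem, hr₀unf⟩ := c.G_sandwich hlo'I hhi'I hF1 hF2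
  have hw₁' : word c.f c.g w₁ 0 = c.g^[k] (c.G^[k] (c.F y₀)) := by rw [hw₁, hr₀unf]
  obtain ⟨w₂, hw₂⟩ := c.peel_gs hw₁' (by linarith [hr₀mem.1] : c.a < c.G^[k] (c.F y₀))
    (by linarith [hr₀mem.2] : c.G^[k] (c.F y₀) < 1)
  refine ⟨w₂, ?_⟩
  rw [hw₂]
  have hη₀η : η₀ ≤ η := min_le_left _ _
  constructor
  · linarith [hr₀mem.1]
  · linarith [hr₀mem.2]

/-- The expansion block along `calF`. -/
lemma growF {α β : ℝ} (hαβ : α < β) (hK : Set.Ioo α β ⊆ c.K)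
    (hpos : Set.Ioo α β ⊆ Set.Ioo c.b2 c.b)
    (hforce : Set.Ioo α β ⊆ Set.Ioo 0 c.a ∨ Set.Ioo α β ⊆ Rg c.f c.g c.Hf ∩ Set.Ioo c.a c.b)
    (hHf : ∀ y ∈ Set.Ioo α β, y ∉ c.Hf) :
    ∃ A B : ℝ, A < B ∧ c.mu * (β - α) ≤ B - A ∧ Set.Ioo A B ⊆ c.K ∧
      c.a ≤ A ∧ B ≤ c.a2 := by
  by_cases hconst : ∀ y ∈ Set.Ioo α β, ∀ y' ∈ Set.Ioo α β, c.NF y = c.NF y'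
  case neg =>
    -- non-constant case: transport an interval onto `(a, ·)` and contradict `acc_g0`.
    exfalso
    push_neg at hconst
    obtain ⟨z1, hz1, z2, hz2, hz12⟩ := hconst
    have hIcc : ∀ y ∈ Set.Ioo α β, y ∈ Set.Icc 0 c.b := by
      intro y hy
      have := hpos hy
      exact ⟨by linarith [this.1, c.b2pos], le_of_lt this.2⟩
    have hNmono : ∀ y ∈ Set.Ioo α β, ∀ y' ∈ Set.Ioo α β, y < y' → c.NF y ≤ c.NF y' := by
      intro y hy y' hy' hlt
      by_contra hcc
      push_neg at hcc
      have hs := c.NF_spec (hpos hy)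
      have hs' := c.NF_spec (hpos hy')
      have hmono := c.chainF_mono hlt (hIcc y hy) (hIcc y' hy')
        (fun j hj => hs.2.1 j (lt_trans hj hcc))
        (fun j hj => hs'.2.1 j hj) (c.NF y') (le_refl _)
      have h1 := (hs.2.1 (c.NF y') hcc).1
      have h2 := hs'.2.2.1.2
      linarith
    obtain ⟨ya, hya, yb, hyb, hNab⟩ :
        ∃ ya ∈ Set.Ioo α β, ∃ yb ∈ Set.Ioo α β, c.NF ya < c.NF yb := by
      rcases lt_trichotomy z1 z2 with h | h | h
      · exact ⟨z1, hz1, z2, hz2, lt_of_le_of_ne (hNmono z1 hz1 z2 hz2 h) hz12⟩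
      · exact absurd (by rw [h]) hz12
      · exact ⟨z2, hz2, z1, hz1, lt_of_le_of_ne (hNmono z2 hz2 z1 hz1 h) (Ne.symm hz12)⟩
    set N₁ := c.NF ya with hN₁
    have hsa := c.NF_spec (hpos hya)
    have hsb := c.NF_spec (hpos hyb)
    have hQ : c.G^[N₁] (c.F yb) ∈ Set.Ioo c.a2 1 := hsb.2.1 N₁ hNab
    set sE := min ((c.a2 + c.G^[N₁] (c.F yb)) / 2) ((c.a2 + 1) / 2) with hsE
    have hsE1 : c.a2 < sE := by
      apply lt_min <;> [linarith [hQ.1]; linarith [c.a2_lt_one]]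
    have hsE2 : sE < c.G^[N₁] (c.F yb) := by
      have := min_le_left ((c.a2 + c.G^[N₁] (c.F yb)) / 2) ((c.a2 + 1) / 2)
      linarith [hQ.1]
    have hsE3 : sE < 1 := by
      have := min_le_right ((c.a2 + c.G^[N₁] (c.F yb)) / 2) ((c.a2 + 1) / 2)
      linarith [c.a2_lt_one]
    have hsEIcc : sE ∈ Set.Icc c.a 1 := ⟨by linarith [c.a_lt_a2], le_of_lt hsE3⟩
    have hGsE : c.a < c.G sE := by
      apply c.G_gt hsEIcc c.amem
      show c.g c.a < sE
      exact hsE1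
    have hGsE1 : c.G sE < 1 := by
      apply c.G_lt hsEIcc one_mem'
      rw [c.hA.g_one]; exact hsE3
    have htr := c.transportF hK hpos hforce (N₁ + 1) c.a (c.G sE) (le_refl _) hGsE hGsE1 ?lo ?hi
    · exact c.acc_g0 hGsE htr
    case lo =>
      -- α ≤ f (g^[N₁+1] a) = f (g^[N₁] a2)
      have h1 : c.g^[N₁ + 1] c.a = c.g^[N₁] c.a2 := by
        rw [Function.iterate_succ_apply c.g N₁ c.a]
        rfl
      rw [h1]
      have hq : c.G^[N₁] (c.F ya) ≤ c.a2 := hsa.2.2.1.2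
      have hqI : c.G^[N₁] (c.F ya) ∈ unitI := by
        constructor
        · linarith [hsa.2.2.1.1, c.apos]
        · linarith [c.a2_lt_one]
      calc α ≤ ya := le_of_lt hya.1
      _ = c.f (c.g^[N₁] (c.G^[N₁] (c.F ya))) := hsa.2.2.2.1.symm
      _ ≤ c.f (c.g^[N₁] c.a2) := by
          rcases eq_or_lt_of_le hq with h | h
          · rw [h]
          · exact le_of_lt (c.fmono (c.g_it_mem hqI N₁) (c.g_it_mem c.a2mem N₁)
              (c.g_it_mono hqI c.a2mem h N₁))
    case hi =>
      have h1 : c.g^[N₁ + 1] (c.G sE) = c.g^[N₁] sE := by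
        rw [Function.iterate_succ_apply c.g N₁ (c.G sE), (c.G_spec hsEIcc).1]
      rw [h1]
      have hq : c.G^[N₁] (c.F yb) ∈ unitI := ⟨by linarith [hQ.1, c.apos, c.a_lt_a2],
        le_of_lt hQ.2⟩
      have hsEI : sE ∈ unitI := ⟨by linarith [hsE1, c.apos, c.a_lt_a2], le_of_lt hsE3⟩
      calc c.f (c.g^[N₁] sE) ≤ c.f (c.g^[N₁] (c.G^[N₁] (c.F yb))) := by
            apply le_of_lt
            exact c.fmono (c.g_it_mem hsEI N₁) (c.g_it_mem hq N₁)
              (c.g_it_mono hsEI hq hsE2 N₁)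
      _ = yb := by
          have h2 : c.g^[N₁] (c.G^[N₁] (c.F yb)) = c.F yb := hsb.2.2.2.2 N₁ (le_of_lt hNab)
          rw [h2]
          exact (c.F_spec (hIcc yb hyb)).1
      _ ≤ β := le_of_lt hyb.2
  case pos =>
    -- constant case
    have hmid : (α + β) / 2 ∈ Set.Ioo α β := ⟨by linarith, by linarith⟩
    set N := c.NF ((α + β) / 2) with hN
    have hIcc : ∀ y ∈ Set.Ioo α β, y ∈ Set.Icc 0 c.b := by
      intro y hy
      have := hpos hy
      exact ⟨by linarith [this.1, c.b2pos], le_of_lt this.2⟩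
    have hspec : ∀ y ∈ Set.Ioo α β,
        (∀ j < N, c.G^[j] (c.F y) ∈ Set.Ioo c.a2 1) ∧
        c.G^[N] (c.F y) ∈ Set.Ioc c.a c.a2 ∧
        c.f (c.g^[N] (c.G^[N] (c.F y))) = y ∧
        (∀ j ≤ N, c.g^[j] (c.G^[j] (c.F y)) = c.F y) := by
      intro y hy
      have hs := c.NF_spec (hpos hy)
      have heq : c.NF y = N := hconst y hy _ hmid
      rw [heq] at hs
      exact ⟨hs.2.1, hs.2.2.1, hs.2.2.2.1, hs.2.2.2.2⟩
    set q : ℝ → ℝ := fun x => c.G^[N] (c.F x) with hqdef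
    have hqmono : ∀ y ∈ Set.Ioo α β, ∀ y' ∈ Set.Ioo α β, y < y' → q y < q y' := by
      intro y hy y' hy' hlt
      exact c.chainF_mono hlt (hIcc y hy) (hIcc y' hy') (hspec y hy).1 (hspec y' hy').1
        N (le_refl _)
    have hderz : ∀ z ∈ Set.Ioo α β, HasDerivAt q (deriv q z) z := by
      intro z hz
      obtain ⟨d, hd0, hd⟩ := c.chainF_hasDeriv N
        (⟨by linarith [(hpos hz).1, c.b2pos], (hpos hz).2⟩ : z ∈ Set.Ioo 0 c.b)
        (fun j hj => ⟨by linarith [((hspec z hz).1 j hj).1, c.a_lt_a2],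
          ((hspec z hz).1 j hj).2⟩)
      rw [hd.deriv]
      exact hd
    have hgrow : ∀ y y', y ∈ Set.Ioo α β → y' ∈ Set.Ioo α β → y < y' →
        c.mu * (y' - y) ≤ q y' - q y := by
      intro y y' hy hy' hlt
      have hsubT : Set.Icc y y' ⊆ Set.Ioo α β := fun z hz =>
        ⟨lt_of_lt_of_le hy.1 hz.1, lt_of_le_of_lt hz.2 hy'.2⟩
      have hcont : ContinuousOn q (Set.Icc y y') := fun z hz =>
        ((hderz z (hsubT hz)).continuousAt).continuousWithinAt
      obtain ⟨ξ, hξ, hslope⟩ := exists_hasDerivAt_eq_slope q (deriv q) hlt hcont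
        (fun z hz => hderz z (hsubT (Set.mem_Icc_of_Ioo hz)))
      have hξT : ξ ∈ Set.Ioo α β := hsubT (Set.mem_Icc_of_Ioo hξ)
      -- q ξ is strictly inside (a, a2)
      have hstrict : q ξ ∈ Set.Ioo c.a c.a2 := by
        constructor
        · exact ((hspec ξ hξT).2.1).1
        · have h1 := hqmono ξ hξT y' hy' hξ.2
          have h2 := ((hspec y' hy').2.1).2
          linarith
      -- eventual equality with calF
      have hev1 : ∀ᶠ x in nhds ξ, ∀ j ∈ Finset.range N,
          c.G^[j] (c.F x) ∈ Set.Ioo c.a2 1 := by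
        rw [Filter.eventually_all_finset]
        intro j hj
        have hjN : j < N := Finset.mem_range.mp hj
        obtain ⟨d, hd0, hd⟩ := c.chainF_hasDeriv j
          (⟨by linarith [(hpos hξT).1, c.b2pos], (hpos hξT).2⟩ : ξ ∈ Set.Ioo 0 c.b)
          (fun i hi => ⟨by linarith [((hspec ξ hξT).1 i (lt_trans hi hjN)).1, c.a_lt_a2],
            ((hspec ξ hξT).1 i (lt_trans hi hjN)).2⟩)
        have hval := (hspec ξ hξT).1 j hjN
        exact hd.continuousAt (Ioo_mem_nhds hval.1 hval.2)
      have hev2 : ∀ᶠ x in nhds ξ, c.G^[N] (c.F x) ∈ Set.Ioo c.a c.a2 :=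
        (hderz ξ hξT).continuousAt (Ioo_mem_nhds hstrict.1 hstrict.2)
      have heva : calF c.f c.g =ᶠ[nhds ξ] q := by
        filter_upwards [hev1, hev2] with x h1 h2
        exact c.calF_eq_of (fun j hj => (h1 j (Finset.mem_range.mpr hj)).1)
          ⟨le_of_lt h2.1, le_of_lt h2.2⟩
      have hdiffq : DifferentiableAt ℝ q ξ := (hderz ξ hξT).differentiableAt
      have hdiffcal : DifferentiableAt ℝ (calF c.f c.g) ξ :=
        (heva.differentiableAt_iff).mpr hdiffq
      have hderiveq : deriv (calF c.f c.g) ξ = deriv q ξ := heva.deriv_eq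
      have hmu : c.mu < deriv (calF c.f c.g) ξ := by
        apply c.mu_specF ξ _ hdiffcal
        constructor
        · rw [c.Fint_eq]
          exact ⟨le_of_lt (hpos hξT).1, le_of_lt (hpos hξT).2⟩
        · exact hHf ξ hξT
      rw [hderiveq] at hmu
      have hyy' : 0 < y' - y := by linarith
      rw [hslope] at hmu
      rw [lt_div_iff₀ hyy'] at hmu
      linarith
    -- define the image interval
    have hne : (q '' Set.Ioo α β).Nonempty := ⟨q ((α + β) / 2), _, hmid, rfl⟩
    have hbddA : BddBelow (q '' Set.Ioo α β) := by
      refine ⟨c.a, ?_⟩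
      rintro _ ⟨y, hy, rfl⟩
      exact le_of_lt ((hspec y hy).2.1).1
    have hbddB : BddAbove (q '' Set.Ioo α β) := by
      refine ⟨c.a2, ?_⟩
      rintro _ ⟨y, hy, rfl⟩
      exact ((hspec y hy).2.1).2
    set A := sInf (q '' Set.Ioo α β) with hA
    set B := sSup (q '' Set.Ioo α β) with hB
    have hAa : c.a ≤ A := by
      apply le_csInf hne
      rintro _ ⟨y, hy, rfl⟩
      exact le_of_lt ((hspec y hy).2.1).1
    have hBa2 : B ≤ c.a2 := by
      apply csSup_le hne
      rintro _ ⟨y, hy, rfl⟩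
      exact ((hspec y hy).2.1).2
    have hgrow2 : c.mu * (β - α) ≤ B - A := by
      by_contra hcc
      push_neg at hcc
      set ε := min ((c.mu * (β - α) - (B - A)) / (4 * c.mu)) ((β - α) / 4) with hε
      have hεpos : 0 < ε := by
        apply lt_min
        · apply div_pos (by linarith) (by linarith [c.mu_pos])
        · linarith
      have hε2 : ε ≤ (β - α) / 4 := min_le_right _ _
      have hε1 : ε ≤ (c.mu * (β - α) - (B - A)) / (4 * c.mu) := min_le_left _ _
      have hy : α + ε ∈ Set.Ioo α β := ⟨by linarith, by linarith⟩
      have hy' : β - ε ∈ Set.Ioo α β := ⟨by linarith, by linarith⟩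
      have h1 := hgrow (α + ε) (β - ε) hy hy' (by linarith)
      have h2 : A ≤ q (α + ε) := csInf_le hbddA ⟨_, hy, rfl⟩
      have h3 : q (β - ε) ≤ B := le_csSup hbddB ⟨_, hy', rfl⟩
      have h4 : ε * (4 * c.mu) ≤ c.mu * (β - α) - (B - A) := by
        rw [← le_div_iff₀ (by linarith [c.mu_pos] : (0:ℝ) < 4 * c.mu)]
        exact hε1
      nlinarith [c.mu_pos]
    have hAB : A < B := by nlinarith [c.mu_pos]
    refine ⟨A, B, hAB, hgrow2, ?_, hAa, hBa2⟩
    intro r hr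
    obtain ⟨v1, hv1mem, hv1r⟩ := exists_lt_of_csInf_lt hne hr.1
    obtain ⟨v2, hv2mem, hv2r⟩ := exists_lt_of_lt_csSup hne hr.2
    obtain ⟨ya, hya, rfl⟩ := hv1mem
    obtain ⟨yb, hyb, rfl⟩ := hv2mem
    have hyayb : ya < yb := by
      by_contra hcc
      push_neg at hcc
      rcases eq_or_lt_of_le hcc with h | h
      · rw [← h] at hv1r; linarith
      · have := hqmono yb hyb ya hya h
        linarith
    have htr := c.transportF hK hpos hforce N (q ya) (q yb)
      (le_of_lt ((hspec ya hya).2.1).1) (by linarith) (by linarith [((hspec yb hyb).2.1).2, c.a2_lt_one]) ?lo2 ?hi2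
    · exact htr ⟨hv1r, hv2r⟩
    case lo2 =>
      have h1 : c.g^[N] (c.G^[N] (c.F ya)) = c.F ya := (hspec ya hya).2.2.2 N (le_refl _)
      show α ≤ c.f (c.g^[N] (q ya))
      rw [hqdef]
      simp only
      rw [h1, (c.F_spec (hIcc ya hya)).1]
      exact le_of_lt hya.1
    case hi2 =>
      have h1 : c.g^[N] (c.G^[N] (c.F yb)) = c.F yb := (hspec yb hyb).2.2.2 N (le_refl _)
      show c.f (c.g^[N] (q yb)) ≤ β
      rw [hqdef]
      simp only
      rw [h1, (c.F_spec (hIcc yb hyb)).1]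
      exact le_of_lt hyb.2

end Ctx

namespace Ctx

variable (c : Ctx)

/-- Transport of `K`-membership through a chain `g ∘ f^[k]`. -/
lemma transportG {α β : ℝ} (hK : Set.Ioo α β ⊆ c.K)
    (hpos : Set.Ioo α β ⊆ Set.Ioo c.a c.a2)
    (hforce : Set.Ioo α β ⊆ Set.Ioo c.b 1 ∨ Set.Ioo α β ⊆ Rf c.f c.g c.Hg ∩ Set.Ioo c.a c.b)
    (k : ℕ) (lo hi : ℝ) (hlo : 0 ≤ lo) (hlohi : lo < hi) (hhi : hi ≤ c.b)
    (hΨlo : α ≤ c.g (c.f^[k] lo)) (hΨhi : c.g (c.f^[k] hi) ≤ β) :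
    Set.Ioo lo hi ⊆ c.K := by
  have hpeel1 : ∀ (w : List Bool) (y₀ : ℝ), word c.f c.g w 0 = y₀ → y₀ ∈ Set.Ioo α β →
      ∃ w', word c.f c.g w' 0 = c.G y₀ := by
    intro w y₀ hw hy₀
    rcases hforce with hf | hf
    · exact c.peel_g hw (hf hy₀).1 (hf hy₀).2
    · exact c.peel_gW hw ((hf hy₀).2) ((hf hy₀).1)
  have hloI : lo ∈ unitI := ⟨hlo, by linarith [c.b_lt_one]⟩
  have hhiI : hi ∈ unitI := ⟨by linarith, by linarith [c.b_lt_one]⟩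
  have hΨmono : ∀ z z', z ∈ unitI → z' ∈ unitI → z < z' →
      c.g (c.f^[k] z) < c.g (c.f^[k] z') := by
    intro z z' hz hz' hzz
    exact c.gmono (c.f_it_mem hz k) (c.f_it_mem hz' k) (c.f_it_mono hz hz' hzz k)
  have hΨmono_le : ∀ z z', z ∈ unitI → z' ∈ unitI → z ≤ z' →
      c.g (c.f^[k] z) ≤ c.g (c.f^[k] z') := by
    intro z z' hz hz' hzz
    rcases eq_or_lt_of_le hzz with rfl | h
    · exact le_refl _
    · exact le_of_lt (hΨmono z z' hz hz' h)
  intro r hr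
  apply c.mem_K' (by linarith [hr.1] : (0:ℝ) < r)
  intro η hη
  set η₀ := min η (min (r - lo) (hi - r)) with hη₀
  have hη₀pos : 0 < η₀ := by
    apply lt_min hη
    apply lt_min <;> linarith [hr.1, hr.2]
  have he1 : η₀ ≤ r - lo := le_trans (min_le_right _ _) (min_le_left _ _)
  have he2 : η₀ ≤ hi - r := le_trans (min_le_right _ _) (min_le_right _ _)
  have hlo'I : r - η₀ ∈ unitI := ⟨by linarith [hloI.1], by linarith [hhiI.2]⟩
  have hhi'I : r + η₀ ∈ unitI := ⟨by linarith [hloI.1], by linarith [hhiI.2]⟩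
  have hrI : r ∈ unitI := ⟨by linarith [hloI.1], by linarith [hhiI.2]⟩
  have hSsub : Set.Ioo (c.g (c.f^[k] (r - η₀))) (c.g (c.f^[k] (r + η₀))) ⊆ Set.Ioo α β := by
    intro x hx
    constructor
    · have := hΨmono_le lo (r - η₀) hloI hlo'I (by linarith)
      linarith [hx.1]
    · have := hΨmono_le (r + η₀) hi hhi'I hhiI (by linarith)
      linarith [hx.2]
  have hSne : (Set.Ioo (c.g (c.f^[k] (r - η₀))) (c.g (c.f^[k] (r + η₀))) ∩ c.K).Nonempty := by
    have h1 := hΨmono (r - η₀) r hlo'I hrI (by linarith)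
    have h2 := hΨmono r (r + η₀) hrI hhi'I (by linarith)
    exact ⟨c.g (c.f^[k] r), ⟨h1, h2⟩, hK (hSsub ⟨h1, h2⟩)⟩
  obtain ⟨w, hw⟩ := c.orbit_exists isOpen_Ioo hSne
  set y₀ := word c.f c.g w 0 with hy₀def
  have hy₀T : y₀ ∈ Set.Ioo α β := hSsub hw
  have hy₀Icc : y₀ ∈ Set.Icc c.a 1 := by
    have := hpos hy₀T
    exact ⟨le_of_lt this.1, by linarith [this.2, c.a2_lt_one]⟩
  obtain ⟨w₁, hw₁⟩ := hpeel1 w y₀ rfl hy₀T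
  have hF1 : c.f^[k] (r - η₀) < c.G y₀ := c.G_gt hy₀Icc (c.f_it_mem hlo'I k) hw.1
  have hF2 : c.G y₀ < c.f^[k] (r + η₀) := c.G_lt hy₀Icc (c.f_it_mem hhi'I k) hw.2
  obtain ⟨hr₀mem, hr₀unf⟩ := c.F_sandwich hlo'I hhi'I hF1 hF2
  have hw₁' : word c.f c.g w₁ 0 = c.f^[k] (c.F^[k] (c.G y₀)) := by rw [hw₁, hr₀unf]
  obtain ⟨w₂, hw₂⟩ := c.peel_fs hw₁' (by linarith [hr₀mem.1] : 0 < c.F^[k] (c.G y₀))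
    (by linarith [hr₀mem.2] : c.F^[k] (c.G y₀) < c.b)
  refine ⟨w₂, ?_⟩
  rw [hw₂]
  have hη₀η : η₀ ≤ η := min_le_left _ _
  constructor
  · linarith [hr₀mem.1]
  · linarith [hr₀mem.2]

/-- The expansion block along `calG`. -/
lemma growG {α β : ℝ} (hαβ : α < β) (hK : Set.Ioo α β ⊆ c.K)
    (hpos : Set.Ioo α β ⊆ Set.Ioo c.a c.a2)
    (hforce : Set.Ioo α β ⊆ Set.Ioo c.b 1 ∨ Set.Ioo α β ⊆ Rf c.f c.g c.Hg ∩ Set.Ioo c.a c.b)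
    (hHg : ∀ y ∈ Set.Ioo α β, y ∉ c.Hg) :
    ∃ A B : ℝ, A < B ∧ c.mu * (β - α) ≤ B - A ∧ Set.Ioo A B ⊆ c.K ∧
      c.b2 ≤ A ∧ B ≤ c.b := by
  have hIcc : ∀ y ∈ Set.Ioo α β, y ∈ Set.Icc c.a 1 := by
    intro y hy
    have := hpos hy
    exact ⟨le_of_lt this.1, by linarith [this.2, c.a2_lt_one]⟩
  by_cases hconst : ∀ y ∈ Set.Ioo α β, ∀ y' ∈ Set.Ioo α β, c.MG y = c.MG y'
  case neg =>
    exfalso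
    push_neg at hconst
    obtain ⟨z1, hz1, z2, hz2, hz12⟩ := hconst
    have hmanti : ∀ y ∈ Set.Ioo α β, ∀ y' ∈ Set.Ioo α β, y < y' → c.MG y' ≤ c.MG y := by
      intro y hy y' hy' hlt
      by_contra hcc
      push_neg at hcc
      have hs := c.MG_spec (hpos hy)
      have hs' := c.MG_spec (hpos hy')
      have hmono := c.chainG_mono hlt (hIcc y hy) (hIcc y' hy')
        (fun j hj => hs.2.1 j hj)
        (fun j hj => hs'.2.1 j (lt_trans hj hcc)) (c.MG y) (le_refl _)
      have h1 := hs.2.2.1.1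
      have h2 := (hs'.2.1 (c.MG y) hcc).2
      linarith
    obtain ⟨ya, hya, yb, hyb, hMab, hyab⟩ :
        ∃ ya ∈ Set.Ioo α β, ∃ yb ∈ Set.Ioo α β, c.MG yb < c.MG ya ∧ ya < yb := by
      rcases lt_trichotomy z1 z2 with h | h | h
      · exact ⟨z1, hz1, z2, hz2,
          lt_of_le_of_ne (hmanti z1 hz1 z2 hz2 h) (Ne.symm hz12), h⟩
      · exact absurd (by rw [h]) hz12
      · exact ⟨z2, hz2, z1, hz1, lt_of_le_of_ne (hmanti z2 hz2 z1 hz1 h) hz12, h⟩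
    set M₂ := c.MG yb with hM₂
    have hsa := c.MG_spec (hpos hya)
    have hsb := c.MG_spec (hpos hyb)
    have hQ : c.F^[M₂] (c.G ya) ∈ Set.Ioo 0 c.b2 := hsa.2.1 M₂ hMab
    set sE := max ((c.F^[M₂] (c.G ya) + c.b2) / 2) (c.b2 / 2) with hsE
    have hsE1 : sE < c.b2 := by
      apply max_lt <;> [linarith [hQ.2]; linarith [c.b2pos]]
    have hsE2 : c.F^[M₂] (c.G ya) < sE := by
      have := le_max_left ((c.F^[M₂] (c.G ya) + c.b2) / 2) (c.b2 / 2)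
      linarith [hQ.2]
    have hsE3 : 0 < sE := by
      have := le_max_right ((c.F^[M₂] (c.G ya) + c.b2) / 2) (c.b2 / 2)
      linarith [c.b2pos]
    have hsEIcc : sE ∈ Set.Icc 0 c.b := ⟨le_of_lt hsE3, by linarith [c.b2_lt_b]⟩
    have hFsE : c.F sE < c.b := by
      apply c.F_lt hsEIcc c.bmem
      show sE < c.b2
      exact hsE1
    have hFsE0 : 0 < c.F sE := by
      apply c.F_gt hsEIcc zero_mem'
      rw [c.hA.f_zero]; exact hsE3
    have htr := c.transportG hK hpos hforce (M₂ + 1) (c.F sE) c.b (le_of_lt hFsE0) hFsE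
      (le_refl _) ?lo ?hi
    · exact c.acc_f1 hFsE htr
    case lo =>
      have h1 : c.f^[M₂ + 1] (c.F sE) = c.f^[M₂] sE := by
        rw [Function.iterate_succ_apply c.f M₂ (c.F sE), (c.F_spec hsEIcc).1]
      rw [h1]
      have hq : c.F^[M₂] (c.G ya) ∈ unitI := ⟨le_of_lt hQ.1,
        by linarith [hQ.2, c.b2_lt_b, c.b_lt_one]⟩
      have hsEI : sE ∈ unitI := ⟨le_of_lt hsE3, by linarith [hsE1, c.b2_lt_b, c.b_lt_one]⟩
      calc α ≤ ya := le_of_lt hya.1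
      _ = c.g (c.f^[M₂] (c.F^[M₂] (c.G ya))) := by
          have h2 : c.f^[M₂] (c.F^[M₂] (c.G ya)) = c.G ya := hsa.2.2.2.2 M₂ (le_of_lt hMab)
          rw [h2, (c.G_spec (hIcc ya hya)).1]
      _ ≤ c.g (c.f^[M₂] sE) := by
          apply le_of_lt
          exact c.gmono (c.f_it_mem hq M₂) (c.f_it_mem hsEI M₂)
            (c.f_it_mono hq hsEI hsE2 M₂)
    case hi =>
      have h1 : c.f^[M₂ + 1] c.b = c.f^[M₂] c.b2 := by
        rw [Function.iterate_succ_apply c.f M₂ c.b]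
        rfl
      rw [h1]
      have hq : c.F^[M₂] (c.G yb) ∈ unitI := ⟨by linarith [hsb.2.2.1.1, c.b2pos],
        by linarith [hsb.2.2.1.2, c.b_lt_one]⟩
      have hqb2 : c.b2 ≤ c.F^[M₂] (c.G yb) := hsb.2.2.1.1
      calc c.g (c.f^[M₂] c.b2) ≤ c.g (c.f^[M₂] (c.F^[M₂] (c.G yb))) := by
            rcases eq_or_lt_of_le hqb2 with h | h
            · rw [← h]
            · exact le_of_lt (c.gmono (c.f_it_mem c.b2mem M₂) (c.f_it_mem hq M₂)
                (c.f_it_mono c.b2mem hq h M₂))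
      _ = yb := by
          have h2 : c.f^[M₂] (c.F^[M₂] (c.G yb)) = c.G yb := hsb.2.2.2.2 M₂ (le_refl _)
          rw [h2, (c.G_spec (hIcc yb hyb)).1]
      _ ≤ β := le_of_lt hyb.2
  case pos =>
    have hmid : (α + β) / 2 ∈ Set.Ioo α β := ⟨by linarith, by linarith⟩
    set M := c.MG ((α + β) / 2) with hM
    have hspec : ∀ y ∈ Set.Ioo α β,
        (∀ j < M, c.F^[j] (c.G y) ∈ Set.Ioo 0 c.b2) ∧
        c.F^[M] (c.G y) ∈ Set.Ico c.b2 c.b ∧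
        c.g (c.f^[M] (c.F^[M] (c.G y))) = y ∧
        (∀ j ≤ M, c.f^[j] (c.F^[j] (c.G y)) = c.G y) := by
      intro y hy
      have hs := c.MG_spec (hpos hy)
      have heq : c.MG y = M := hconst y hy _ hmid
      rw [heq] at hs
      exact ⟨hs.2.1, hs.2.2.1, hs.2.2.2.1, hs.2.2.2.2⟩
    set q : ℝ → ℝ := fun x => c.F^[M] (c.G x) with hqdef
    have hqmono : ∀ y ∈ Set.Ioo α β, ∀ y' ∈ Set.Ioo α β, y < y' → q y < q y' := by
      intro y hy y' hy' hlt
      exact c.chainG_mono hlt (hIcc y hy) (hIcc y' hy') (hspec y hy).1 (hspec y' hy').1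
        M (le_refl _)
    have hderz : ∀ z ∈ Set.Ioo α β, HasDerivAt q (deriv q z) z := by
      intro z hz
      obtain ⟨d, hd0, hd⟩ := c.chainG_hasDeriv M
        (⟨(hpos hz).1, by linarith [(hpos hz).2, c.a2_lt_one]⟩ : z ∈ Set.Ioo c.a 1)
        (fun j hj => ⟨((hspec z hz).1 j hj).1,
          by linarith [((hspec z hz).1 j hj).2, c.b2_lt_b]⟩)
      rw [hd.deriv]
      exact hd
    have hgrow : ∀ y y', y ∈ Set.Ioo α β → y' ∈ Set.Ioo α β → y < y' →
        c.mu * (y' - y) ≤ q y' - q y := by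
      intro y y' hy hy' hlt
      have hsubT : Set.Icc y y' ⊆ Set.Ioo α β := fun z hz =>
        ⟨lt_of_lt_of_le hy.1 hz.1, lt_of_le_of_lt hz.2 hy'.2⟩
      have hcont : ContinuousOn q (Set.Icc y y') := fun z hz =>
        ((hderz z (hsubT hz)).continuousAt).continuousWithinAt
      obtain ⟨ξ, hξ, hslope⟩ := exists_hasDerivAt_eq_slope q (deriv q) hlt hcont
        (fun z hz => hderz z (hsubT (Set.mem_Icc_of_Ioo hz)))
      have hξT : ξ ∈ Set.Ioo α β := hsubT (Set.mem_Icc_of_Ioo hξ)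
      have hstrict : q ξ ∈ Set.Ioo c.b2 c.b := by
        constructor
        · have h1 := hqmono y hy ξ hξT hξ.1
          have h2 := ((hspec y hy).2.1).1
          linarith
        · exact ((hspec ξ hξT).2.1).2
      have hev1 : ∀ᶠ x in nhds ξ, ∀ j ∈ Finset.range M,
          c.F^[j] (c.G x) ∈ Set.Ioo 0 c.b2 := by
        rw [Filter.eventually_all_finset]
        intro j hj
        have hjM : j < M := Finset.mem_range.mp hj
        obtain ⟨d, hd0, hd⟩ := c.chainG_hasDeriv j
          (⟨(hpos hξT).1, by linarith [(hpos hξT).2, c.a2_lt_one]⟩ : ξ ∈ Set.Ioo c.a 1)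
          (fun i hi => ⟨((hspec ξ hξT).1 i (lt_trans hi hjM)).1,
            by linarith [((hspec ξ hξT).1 i (lt_trans hi hjM)).2, c.b2_lt_b]⟩)
        have hval := (hspec ξ hξT).1 j hjM
        exact hd.continuousAt (Ioo_mem_nhds hval.1 hval.2)
      have hev2 : ∀ᶠ x in nhds ξ, c.F^[M] (c.G x) ∈ Set.Ioo c.b2 c.b :=
        (hderz ξ hξT).continuousAt (Ioo_mem_nhds hstrict.1 hstrict.2)
      have heva : calG c.f c.g =ᶠ[nhds ξ] q := by
        filter_upwards [hev1, hev2] with x h1 h2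
        exact c.calG_eq_of (fun j hj => (h1 j (Finset.mem_range.mpr hj)).2)
          ⟨le_of_lt h2.1, le_of_lt h2.2⟩
      have hdiffq : DifferentiableAt ℝ q ξ := (hderz ξ hξT).differentiableAt
      have hdiffcal : DifferentiableAt ℝ (calG c.f c.g) ξ :=
        (heva.differentiableAt_iff).mpr hdiffq
      have hderiveq : deriv (calG c.f c.g) ξ = deriv q ξ := heva.deriv_eq
      have hmu : c.mu < deriv (calG c.f c.g) ξ := by
        apply c.mu_specG ξ _ hdiffcal
        constructor
        · rw [c.Gint_eq]
          exact ⟨le_of_lt (hpos hξT).1, le_of_lt (hpos hξT).2⟩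
        · exact hHg ξ hξT
      rw [hderiveq] at hmu
      have hyy' : 0 < y' - y := by linarith
      rw [hslope] at hmu
      rw [lt_div_iff₀ hyy'] at hmu
      linarith
    have hne : (q '' Set.Ioo α β).Nonempty := ⟨q ((α + β) / 2), _, hmid, rfl⟩
    have hbddA : BddBelow (q '' Set.Ioo α β) := by
      refine ⟨c.b2, ?_⟩
      rintro _ ⟨y, hy, rfl⟩
      exact ((hspec y hy).2.1).1
    have hbddB : BddAbove (q '' Set.Ioo α β) := by
      refine ⟨c.b, ?_⟩
      rintro _ ⟨y, hy, rfl⟩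
      exact le_of_lt ((hspec y hy).2.1).2
    set A := sInf (q '' Set.Ioo α β) with hA
    set B := sSup (q '' Set.Ioo α β) with hB
    have hAa : c.b2 ≤ A := by
      apply le_csInf hne
      rintro _ ⟨y, hy, rfl⟩
      exact ((hspec y hy).2.1).1
    have hBa2 : B ≤ c.b := by
      apply csSup_le hne
      rintro _ ⟨y, hy, rfl⟩
      exact le_of_lt ((hspec y hy).2.1).2
    have hgrow2 : c.mu * (β - α) ≤ B - A := by
      by_contra hcc
      push_neg at hcc
      set ε := min ((c.mu * (β - α) - (B - A)) / (4 * c.mu)) ((β - α) / 4) with hε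
      have hεpos : 0 < ε := by
        apply lt_min
        · apply div_pos (by linarith) (by linarith [c.mu_pos])
        · linarith
      have hε2 : ε ≤ (β - α) / 4 := min_le_right _ _
      have hε1 : ε ≤ (c.mu * (β - α) - (B - A)) / (4 * c.mu) := min_le_left _ _
      have hy : α + ε ∈ Set.Ioo α β := ⟨by linarith, by linarith⟩
      have hy' : β - ε ∈ Set.Ioo α β := ⟨by linarith, by linarith⟩
      have h1 := hgrow (α + ε) (β - ε) hy hy' (by linarith)
      have h2 : A ≤ q (α + ε) := csInf_le hbddA ⟨_, hy, rfl⟩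
      have h3 : q (β - ε) ≤ B := le_csSup hbddB ⟨_, hy', rfl⟩
      have h4 : ε * (4 * c.mu) ≤ c.mu * (β - α) - (B - A) := by
        rw [← le_div_iff₀ (by linarith [c.mu_pos] : (0:ℝ) < 4 * c.mu)]
        exact hε1
      nlinarith [c.mu_pos]
    have hAB : A < B := by nlinarith [c.mu_pos]
    refine ⟨A, B, hAB, hgrow2, ?_, hAa, hBa2⟩
    intro r hr
    obtain ⟨v1, hv1mem, hv1r⟩ := exists_lt_of_csInf_lt hne hr.1
    obtain ⟨v2, hv2mem, hv2r⟩ := exists_lt_of_lt_csSup hne hr.2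
    obtain ⟨ya, hya, rfl⟩ := hv1mem
    obtain ⟨yb, hyb, rfl⟩ := hv2mem
    have hyayb : ya < yb := by
      by_contra hcc
      push_neg at hcc
      rcases eq_or_lt_of_le hcc with h | h
      · rw [← h] at hv1r; linarith
      · have := hqmono yb hyb ya hya h
        linarith
    have htr := c.transportG hK hpos hforce M (q ya) (q yb)
      (by linarith [((hspec ya hya).2.1).1, c.b2pos]) (by linarith)
      (le_of_lt ((hspec yb hyb).2.1).2) ?lo2 ?hi2
    · exact htr ⟨hv1r, hv2r⟩
    case lo2 =>
      have h1 : c.f^[M] (c.F^[M] (c.G ya)) = c.G ya := (hspec ya hya).2.2.2 M (le_refl _)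
      show α ≤ c.g (c.f^[M] (q ya))
      rw [hqdef]
      simp only
      rw [h1, (c.G_spec (hIcc ya hya)).1]
      exact le_of_lt hya.1
    case hi2 =>
      have h1 : c.f^[M] (c.F^[M] (c.G yb)) = c.G yb := (hspec yb hyb).2.2.2 M (le_refl _)
      show c.g (c.f^[M] (q yb)) ≤ β
      rw [hqdef]
      simp only
      rw [h1, (c.G_spec (hIcc yb hyb)).1]
      exact le_of_lt hyb.2

end Ctx

namespace Ctx

variable (c : Ctx)

/-- state predicates for the expansion chain -/
def GoodF (α β : ℝ) : Prop :=
  (Set.Ioo α β ⊆ Set.Ioo c.b2 c.a ∧ ∀ y ∈ Set.Ioo α β, y ∉ c.Hf) ∨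
  (Set.Ioo α β ⊆ Set.Ioo c.a c.b ∧ Set.Ioo α β ⊆ Rg c.f c.g c.Hf)

def GoodG (α β : ℝ) : Prop :=
  (Set.Ioo α β ⊆ Set.Ioo c.b c.a2 ∧ ∀ y ∈ Set.Ioo α β, y ∉ c.Hg) ∨
  (Set.Ioo α β ⊆ Set.Ioo c.a c.b ∧ Set.Ioo α β ⊆ Rf c.f c.g c.Hg)

/-- postprocess an interval landing in `G₁ = [a, a2]`. -/
lemma post_G1 {A B : ℝ} (hAB : A < B) (hA : c.a ≤ A) (hB : B ≤ c.a2)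
    (hK : Set.Ioo A B ⊆ c.K) : GoodF c A B ∨ GoodG c A B := by
  by_cases hhole : ∃ x ∈ Set.Ioo A B, x ∈ Set.Ioo c.h1g c.h2g
  · obtain ⟨x, hx1, hx2⟩ := hhole
    exact absurd (c.K_no_holeg (hK hx1) hx2) not_false
  push_neg at hhole
  rcases eq_or_lt_of_le hA with rfl | hAa
  · exact absurd (c.acc_g0 hAB hK) not_false
  rcases le_or_gt B c.b with hBb | hBb
  · rcases eq_or_lt_of_le hBb with rfl | hBb'
    · exact absurd (c.acc_f1 hAB hK) not_false
    · -- interval inside W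
      have hsubW : Set.Ioo A B ⊆ Set.Ioo c.a c.b := fun x hx =>
        ⟨lt_trans hAa hx.1, lt_trans hx.2 hBb'⟩
      rcases c.W_tri hAB hsubW hK with h | h
      · exact Or.inr (Or.inr ⟨hsubW, h⟩)
      · exact Or.inl (Or.inr ⟨hsubW, h⟩)
  · rcases le_or_gt c.b A with hbA | hbA
    · -- interval inside (b, a2)
      have hsub : Set.Ioo A B ⊆ Set.Ioo c.b c.a2 := fun x hx =>
        ⟨lt_of_le_of_lt hbA hx.1, lt_of_lt_of_le hx.2 hB⟩
      refine Or.inr (Or.inl ⟨hsub, ?_⟩)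
      intro y hy hyHg
      rw [c.Hg_eq] at hyHg
      rcases eq_or_lt_of_le hyHg.1 with h1 | h1
      · -- y = h1g : points just above are in the open hole and in the interval
        have hyA : A < c.h1g := by rw [h1]; exact hy.1
        have hyB : c.h1g < B := by rw [h1]; exact hy.2
        set x := (c.h1g + min B c.h2g) / 2 with hx
        have hm : c.h1g < min B c.h2g := lt_min hyB c.h1g_lt_h2g
        have hx1 : c.h1g < x := by rw [hx]; linarith
        have hx2 : x < c.h2g := by
          have := min_le_right B c.h2g
          rw [hx]; linarith
        have hx3 : x < B := by
          have := min_le_left B c.h2g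
          rw [hx]; linarith
        have hx4 : A < x := lt_trans hyA hx1
        exact hhole x ⟨hx4, hx3⟩ ⟨hx1, hx2⟩
      · rcases eq_or_lt_of_le hyHg.2 with h2 | h2
        · -- y = h2g
          have hyA : A < c.h2g := by rw [← h2]; exact hy.1
          have hyB : c.h2g < B := by rw [← h2]; exact hy.2
          set x := (max A c.h1g + c.h2g) / 2 with hx
          have hm : max A c.h1g < c.h2g := max_lt hyA c.h1g_lt_h2g
          have hx1 : c.h1g < x := by
            have := le_max_right A c.h1g
            rw [hx]; linarith
          have hx2 : x < c.h2g := by rw [hx]; linarith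
          have hx3 : A < x := by
            have := le_max_left A c.h1g
            rw [hx]; linarith
          have hx4 : x < B := lt_trans hx2 hyB
          exact hhole x ⟨hx3, hx4⟩ ⟨hx1, hx2⟩
        · exact hhole y hy ⟨h1, h2⟩
    · -- b interior to the interval
      have hsub2 : Set.Ioo A c.b ⊆ c.K := fun x hx => hK ⟨hx.1, lt_trans hx.2 hBb⟩
      exact absurd (c.acc_f1 hbA hsub2) not_false

/-- postprocess an interval landing in `F₁ = [b2, b]`. -/
lemma post_F1 {A B : ℝ} (hAB : A < B) (hA : c.b2 ≤ A) (hB : B ≤ c.b)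
    (hK : Set.Ioo A B ⊆ c.K) : GoodF c A B ∨ GoodG c A B := by
  by_cases hhole : ∃ x ∈ Set.Ioo A B, x ∈ Set.Ioo c.h1f c.h2f
  · obtain ⟨x, hx1, hx2⟩ := hhole
    exact absurd (c.K_no_holef (hK hx1) hx2) not_false
  push_neg at hhole
  rcases eq_or_lt_of_le hB with rfl | hBb
  · exact absurd (c.acc_f1 hAB hK) not_false
  rcases le_or_gt c.a A with haA | haA
  · -- interval inside W
    have hsubW : Set.Ioo A B ⊆ Set.Ioo c.a c.b := fun x hx =>
      ⟨lt_of_le_of_lt haA hx.1, lt_trans hx.2 hBb⟩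
    rcases c.W_tri hAB hsubW hK with h | h
    · exact Or.inr (Or.inr ⟨hsubW, h⟩)
    · exact Or.inl (Or.inr ⟨hsubW, h⟩)
  · rcases le_or_gt B c.a with hBa | hBa
    · -- interval inside (b2, a)
      have hsub : Set.Ioo A B ⊆ Set.Ioo c.b2 c.a := fun x hx =>
        ⟨lt_of_le_of_lt hA hx.1, lt_of_lt_of_le hx.2 hBa⟩
      refine Or.inl (Or.inl ⟨hsub, ?_⟩)
      intro y hy hyHf
      rw [c.Hf_eq] at hyHf
      rcases eq_or_lt_of_le hyHf.1 with h1 | h1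
      · have hyA : A < c.h1f := by rw [h1]; exact hy.1
        have hyB : c.h1f < B := by rw [h1]; exact hy.2
        set x := (c.h1f + min B c.h2f) / 2 with hx
        have hm : c.h1f < min B c.h2f := lt_min hyB c.h1f_lt_h2f
        have hx1 : c.h1f < x := by rw [hx]; linarith
        have hx2 : x < c.h2f := by
          have := min_le_right B c.h2f
          rw [hx]; linarith
        have hx3 : x < B := by
          have := min_le_left B c.h2f
          rw [hx]; linarith
        have hx4 : A < x := lt_trans hyA hx1
        exact hhole x ⟨hx4, hx3⟩ ⟨hx1, hx2⟩
      · rcases eq_or_lt_of_le hyHf.2 with h2 | h2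
        · have hyA : A < c.h2f := by rw [← h2]; exact hy.1
          have hyB : c.h2f < B := by rw [← h2]; exact hy.2
          set x := (max A c.h1f + c.h2f) / 2 with hx
          have hm : max A c.h1f < c.h2f := max_lt hyA c.h1f_lt_h2f
          have hx1 : c.h1f < x := by
            have := le_max_right A c.h1f
            rw [hx]; linarith
          have hx2 : x < c.h2f := by rw [hx]; linarith
          have hx3 : A < x := by
            have := le_max_left A c.h1f
            rw [hx]; linarith
          have hx4 : x < B := lt_trans hx2 hyB
          exact hhole x ⟨hx3, hx4⟩ ⟨hx1, hx2⟩
        · exact hhole y hy ⟨h1, h2⟩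
    · -- a interior to the interval
      have hsub2 : Set.Ioo c.a B ⊆ c.K := fun x hx => hK ⟨lt_trans haA hx.1, hx.2⟩
      exact absurd (c.acc_g0 hBa hsub2) not_false

/-- one expansion step. -/
lemma main_step {α β : ℝ} (hαβ : α < β) (hK : Set.Ioo α β ⊆ c.K)
    (hG : GoodF c α β ∨ GoodG c α β) :
    ∃ α' β', α' < β' ∧ c.mu * (β - α) ≤ β' - α' ∧ Set.Ioo α' β' ⊆ c.K ∧
      (GoodF c α' β' ∨ GoodG c α' β') := by
  rcases hG with hGF | hGG
  · -- use growF
    have hpos : Set.Ioo α β ⊆ Set.Ioo c.b2 c.b := by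
      rcases hGF with ⟨h1, _⟩ | ⟨h1, _⟩
      · exact fun x hx => ⟨(h1 hx).1, lt_trans (h1 hx).2 c.a_lt_b⟩
      · exact fun x hx => ⟨lt_trans c.b2_lt_a (h1 hx).1, (h1 hx).2⟩
    have hforce : Set.Ioo α β ⊆ Set.Ioo 0 c.a ∨
        Set.Ioo α β ⊆ Rg c.f c.g c.Hf ∩ Set.Ioo c.a c.b := by
      rcases hGF with ⟨h1, _⟩ | ⟨h1, h2⟩
      · exact Or.inl (fun x hx => ⟨by linarith [(h1 hx).1, c.b2pos], (h1 hx).2⟩)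
      · exact Or.inr (fun x hx => ⟨h2 hx, h1 hx⟩)
    have hHf : ∀ y ∈ Set.Ioo α β, y ∉ c.Hf := by
      rcases hGF with ⟨_, h2⟩ | ⟨h1, _⟩
      · exact h2
      · intro y hy hyHf
        have := (c.Hf_sub hyHf).2
        have := (h1 hy).1
        linarith
    obtain ⟨A, B, hAB, hgrow, hKAB, hAa, hBa2⟩ := c.growF hαβ hK hpos hforce hHf
    exact ⟨A, B, hAB, hgrow, hKAB, c.post_G1 hAB hAa hBa2 hKAB⟩
  · -- use growG
    have hpos : Set.Ioo α β ⊆ Set.Ioo c.a c.a2 := by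
      rcases hGG with ⟨h1, _⟩ | ⟨h1, _⟩
      · exact fun x hx => ⟨lt_trans c.a_lt_b (h1 hx).1, (h1 hx).2⟩
      · exact fun x hx => ⟨(h1 hx).1, lt_trans (h1 hx).2 c.b_lt_a2⟩
    have hforce : Set.Ioo α β ⊆ Set.Ioo c.b 1 ∨
        Set.Ioo α β ⊆ Rf c.f c.g c.Hg ∩ Set.Ioo c.a c.b := by
      rcases hGG with ⟨h1, _⟩ | ⟨h1, h2⟩
      · exact Or.inl (fun x hx => ⟨(h1 hx).1, by linarith [(h1 hx).2, c.a2_lt_one]⟩)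
      · exact Or.inr (fun x hx => ⟨h2 hx, h1 hx⟩)
    have hHg : ∀ y ∈ Set.Ioo α β, y ∉ c.Hg := by
      rcases hGG with ⟨_, h2⟩ | ⟨h1, _⟩
      · exact h2
      · intro y hy hyHg
        have := (c.Hg_sub hyHg).1
        have := (h1 hy).2
        linarith
    obtain ⟨A, B, hAB, hgrow, hKAB, hAb2, hBb⟩ := c.growG hαβ hK hpos hforce hHg
    exact ⟨A, B, hAB, hgrow, hKAB, c.post_F1 hAB hAb2 hBb hKAB⟩

/-- there is no growth beyond length 2, so `Good` intervals in `K` are impossible. -/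
lemma no_growth : ∀ (k : ℕ) {α β : ℝ}, α < β → Set.Ioo α β ⊆ c.K →
    (GoodF c α β ∨ GoodG c α β) → c.mu ^ k * (β - α) ≤ 2 := by
  intro k
  induction k with
  | zero =>
    intro α β hαβ hK _
    have h1 : α + (β - α) / 4 ∈ Set.Ioo α β := ⟨by linarith, by linarith⟩
    have h2 : β - (β - α) / 4 ∈ Set.Ioo α β := ⟨by linarith, by linarith⟩
    have hb1 := c.K_sub (hK h1)
    have hb2 := c.K_sub (hK h2)
    simp only [pow_zero, one_mul]
    rcases hb1 with ⟨hb1', _⟩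
    rcases hb2 with ⟨_, hb2'⟩
    unfold unitI at *
    linarith
  | succ n ih =>
    intro α β hαβ hK hG
    obtain ⟨α', β', h1, h2, h3, h4⟩ := c.main_step hαβ hK hG
    have hmu := c.mu_pos
    have := ih h1 h3 h4
    calc c.mu ^ (n + 1) * (β - α) = c.mu ^ n * (c.mu * (β - α)) := by ring
    _ ≤ c.mu ^ n * (β' - α') := by
        apply mul_le_mul_of_nonneg_left h2
        positivity
    _ ≤ 2 := this

/-- a `Good` interval contained in `K` is impossible. -/
lemma no_good {α β : ℝ} (hαβ : α < β) (hK : Set.Ioo α β ⊆ c.K)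
    (hG : GoodF c α β ∨ GoodG c α β) : False := by
  obtain ⟨k, hk⟩ := pow_unbounded_of_one_lt (2 / (β - α)) c.mu_one
  have h1 := c.no_growth k hαβ hK hG
  have h2 : 2 / (β - α) * (β - α) < c.mu ^ k * (β - α) := by
    apply mul_lt_mul_of_pos_right hk
    linarith
  rw [div_mul_cancel₀] at h2
  · linarith
  · linarith

end Ctx

namespace Ctx

variable (c : Ctx)

/-- transport a low interval one step up. -/
lemma low_step {u v : ℝ} (h0 : 0 ≤ u) (huv : u < v) (hv : v ≤ c.b2)
    (hsub : Set.Ioo u v ⊆ c.K) : Set.Ioo (c.F u) (c.F v) ⊆ c.K := by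
  have hb2b := c.b2_lt_b
  have hb2a := c.b2_lt_a
  have huI : u ∈ Set.Icc 0 c.b := ⟨h0, by linarith⟩
  have hvI : v ∈ Set.Icc 0 c.b := ⟨by linarith, by linarith⟩
  have hFuI := (c.F_spec huI).2
  have hFvI := (c.F_spec hvI).2
  intro p hp
  apply c.mem_K' (by linarith [hp.1, hFuI.1] : 0 < p)
  intro η hη
  set η₀ := min η (min (p - c.F u) (c.F v - p)) with hη₀
  have hη₀pos : 0 < η₀ := by
    apply lt_min hη
    apply lt_min <;> linarith [hp.1, hp.2]
  have he1 : η₀ ≤ p - c.F u := le_trans (min_le_right _ _) (min_le_left _ _)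
  have he2 : η₀ ≤ c.F v - p := le_trans (min_le_right _ _) (min_le_right _ _)
  have hmemlo : p - η₀ ∈ unitI := ⟨by linarith [hFuI.1], by linarith [hFvI.2]⟩
  have hmemhi : p + η₀ ∈ unitI := ⟨by linarith [hFuI.1], by linarith [hFvI.2]⟩
  have hpI : p ∈ unitI := ⟨by linarith [hFuI.1, hp.1], by linarith [hFvI.2, hp.2]⟩
  have hSsub : Set.Ioo (c.f (p - η₀)) (c.f (p + η₀)) ⊆ Set.Ioo u v := by
    intro x hx
    constructor
    · have : u ≤ c.f (p - η₀) := by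
        have := c.fmono_le hFuI hmemlo (by linarith)
        rwa [(c.F_spec huI).1] at this
      linarith [hx.1]
    · have : c.f (p + η₀) ≤ v := by
        have := c.fmono_le hmemhi hFvI (by linarith)
        rwa [(c.F_spec hvI).1] at this
      linarith [hx.2]
  have hSne : (Set.Ioo (c.f (p - η₀)) (c.f (p + η₀)) ∩ c.K).Nonempty := by
    have h1 := c.fmono hmemlo hpI (by linarith)
    have h2 := c.fmono hpI hmemhi (by linarith)
    exact ⟨c.f p, ⟨h1, h2⟩, hsub (hSsub ⟨h1, h2⟩)⟩
  obtain ⟨w, hw⟩ := c.orbit_exists isOpen_Ioo hSne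
  have hy₀ := hSsub hw
  have h0y : 0 < word c.f c.g w 0 := by
    have : 0 ≤ c.f (p - η₀) := by
      have := c.fmono_le zero_mem' hmemlo hmemlo.1
      rwa [c.hA.f_zero] at this
    linarith [hw.1]
  obtain ⟨w', hw'⟩ := c.peel_f rfl h0y (by linarith [hy₀.2])
  refine ⟨w', ?_⟩
  rw [hw']
  have hyIcc : word c.f c.g w 0 ∈ Set.Icc 0 c.b := ⟨le_of_lt h0y, by linarith [hy₀.2]⟩
  have hg1 := c.F_gt hyIcc hmemlo hw.1
  have hg2 := c.F_lt hyIcc hmemhi hw.2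
  have hη₀η : η₀ ≤ η := min_le_left _ _
  constructor <;> linarith

/-- transport a high interval one step down. -/
lemma high_step {u v : ℝ} (hu : c.a2 ≤ u) (huv : u < v) (hv : v ≤ 1)
    (hsub : Set.Ioo u v ⊆ c.K) : Set.Ioo (c.G u) (c.G v) ⊆ c.K := by
  have haa2 := c.a_lt_a2
  have hba2 := c.b_lt_a2
  have huI : u ∈ Set.Icc c.a 1 := ⟨by linarith, by linarith⟩
  have hvI : v ∈ Set.Icc c.a 1 := ⟨by linarith, hv⟩
  have hGuI := (c.G_spec huI).2
  have hGvI := (c.G_spec hvI).2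
  have hGu0 : 0 < c.G u := by
    apply c.G_gt huI zero_mem'
    show c.a < u
    linarith
  intro p hp
  apply c.mem_K' (by linarith [hp.1] : 0 < p)
  intro η hη
  set η₀ := min η (min (p - c.G u) (c.G v - p)) with hη₀
  have hη₀pos : 0 < η₀ := by
    apply lt_min hη
    apply lt_min <;> linarith [hp.1, hp.2]
  have he1 : η₀ ≤ p - c.G u := le_trans (min_le_right _ _) (min_le_left _ _)
  have he2 : η₀ ≤ c.G v - p := le_trans (min_le_right _ _) (min_le_right _ _)
  have hmemlo : p - η₀ ∈ unitI := ⟨by linarith [hGuI.1], by linarith [hGvI.2]⟩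
  have hmemhi : p + η₀ ∈ unitI := ⟨by linarith [hGuI.1], by linarith [hGvI.2]⟩
  have hpI : p ∈ unitI := ⟨by linarith [hGuI.1, hp.1], by linarith [hGvI.2, hp.2]⟩
  have hSsub : Set.Ioo (c.g (p - η₀)) (c.g (p + η₀)) ⊆ Set.Ioo u v := by
    intro x hx
    constructor
    · have : u ≤ c.g (p - η₀) := by
        have := c.gmono_le hGuI hmemlo (by linarith)
        rwa [(c.G_spec huI).1] at this
      linarith [hx.1]
    · have : c.g (p + η₀) ≤ v := by
        have := c.gmono_le hmemhi hGvI (by linarith)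
        rwa [(c.G_spec hvI).1] at this
      linarith [hx.2]
  have hSne : (Set.Ioo (c.g (p - η₀)) (c.g (p + η₀)) ∩ c.K).Nonempty := by
    have h1 := c.gmono hmemlo hpI (by linarith)
    have h2 := c.gmono hpI hmemhi (by linarith)
    exact ⟨c.g p, ⟨h1, h2⟩, hsub (hSsub ⟨h1, h2⟩)⟩
  obtain ⟨w, hw⟩ := c.orbit_exists isOpen_Ioo hSne
  have hy₀ := hSsub hw
  obtain ⟨w', hw'⟩ := c.peel_g rfl (by linarith [hy₀.1] : c.b < word c.f c.g w 0)
    (by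
      have : c.g (p + η₀) ≤ 1 := (c.gmem hmemhi).2
      linarith [hw.2])
  refine ⟨w', ?_⟩
  rw [hw']
  have hyIcc : word c.f c.g w 0 ∈ Set.Icc c.a 1 := by
    constructor
    · linarith [hy₀.1]
    · have : c.g (p + η₀) ≤ 1 := (c.gmem hmemhi).2
      linarith [hw.2]
  have hg1 := c.G_gt hyIcc hmemlo hw.1
  have hg2 := c.G_lt hyIcc hmemhi hw.2
  have hη₀η : η₀ ≤ η := min_le_left _ _
  constructor <;> linarith

/-- core impossibility: an interval in `K` meeting `(b2, a2)`. -/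
lemma K_core {α β : ℝ} (hαβ : α < β) (hK : Set.Ioo α β ⊆ c.K)
    (hpt : ∃ x ∈ Set.Ioo α β, c.b2 < x ∧ x < c.a2) : False := by
  obtain ⟨x0, hx0T, hx0b2, hx0a2⟩ := hpt
  have hlohi : max α c.b2 < min β c.a2 := by
    apply max_lt (lt_min hαβ (lt_trans hx0T.1 hx0a2))
    exact lt_min (lt_trans hx0b2 hx0T.2) c.b2_lt_a2
  have hfin : Set.Finite ({c.a, c.b, c.h1f, c.h2f, c.h1g, c.h2g} : Set ℝ) := Set.toFinite _
  obtain ⟨x, hxJ, hxS⟩ := ((Set.Ioo_infinite hlohi).diff hfin).nonempty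
  simp only [Set.mem_insert_iff, Set.mem_singleton_iff, not_or] at hxS
  obtain ⟨hxa', hxb', hx1f, hx2f, hx1g, hx2g⟩ := hxS
  have hxT : x ∈ Set.Ioo α β :=
    ⟨lt_of_le_of_lt (le_max_left _ _) hxJ.1, lt_of_lt_of_le hxJ.2 (min_le_left _ _)⟩
  have hxb2 : c.b2 < x := lt_of_le_of_lt (le_max_right _ _) hxJ.1
  have hxa2 : x < c.a2 := lt_of_lt_of_le hxJ.2 (min_le_right _ _)
  rcases lt_trichotomy x c.a with hxa | hxa | hxa
  · -- x ∈ (b2, a)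
    by_cases hxHf : x ∈ c.Hf
    · rw [c.Hf_eq] at hxHf
      exact c.K_no_holef (hK hxT)
        ⟨lt_of_le_of_ne hxHf.1 (Ne.symm hx1f), lt_of_le_of_ne hxHf.2 hx2f⟩
    · have hHfc : IsClosed c.Hf := by rw [c.Hf_eq]; exact isClosed_Icc
      obtain ⟨δ, hδ, hball⟩ := Metric.isOpen_iff.mp hHfc.isOpen_compl x hxHf
      set u := max (max α c.b2) (x - δ/2) with hu
      set v := min (min β c.a) (x + δ/2) with hvdef
      have hxuv : x ∈ Set.Ioo u v := by
        constructor
        · exact max_lt (max_lt hxT.1 hxb2) (by linarith)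
        · exact lt_min (lt_min hxT.2 hxa) (by linarith)
      apply c.no_good (lt_trans hxuv.1 hxuv.2) ?subK ?good
      case subK =>
        intro y hy
        apply hK
        constructor
        · exact lt_of_le_of_lt (le_trans (le_max_left _ _) (le_max_left _ _)) hy.1
        · exact lt_of_lt_of_le hy.2 (le_trans (min_le_left _ _) (min_le_left _ _))
      case good =>
        left; left
        constructor
        · intro y hy
          constructor
          · exact lt_of_le_of_lt (le_trans (le_max_right _ _) (le_max_left _ _)) hy.1
          · exact lt_of_lt_of_le hy.2 (le_trans (min_le_left _ _) (min_le_right _ _))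
        · intro y hy
          apply hball
          rw [Metric.mem_ball, Real.dist_eq, abs_sub_lt_iff]
          have h1 : x - δ/2 ≤ u := le_max_right _ _
          have h2 : v ≤ x + δ/2 := min_le_right _ _
          constructor <;> linarith [hy.1, hy.2, hδ]
  · exact absurd hxa hxa'
  · rcases lt_trichotomy x c.b with hxb | hxb | hxb
    · -- x ∈ W
      set u := max α c.a with hu
      set v := min β c.b with hvdef
      have hxuv : x ∈ Set.Ioo u v := ⟨max_lt hxT.1 hxa, lt_min hxT.2 hxb⟩
      have huv : u < v := lt_trans hxuv.1 hxuv.2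
      have hsubW : Set.Ioo u v ⊆ Set.Ioo c.a c.b := fun y hy =>
        ⟨lt_of_le_of_lt (le_max_right _ _) hy.1, lt_of_lt_of_le hy.2 (min_le_right _ _)⟩
      have hsubK : Set.Ioo u v ⊆ c.K := fun y hy => hK
        ⟨lt_of_le_of_lt (le_max_left _ _) hy.1, lt_of_lt_of_le hy.2 (min_le_left _ _)⟩
      rcases c.W_tri huv hsubW hsubK with h | h
      · exact c.no_good huv hsubK (Or.inr (Or.inr ⟨hsubW, h⟩))
      · exact c.no_good huv hsubK (Or.inl (Or.inr ⟨hsubW, h⟩))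
    · exact absurd hxb hxb'
    · -- x ∈ (b, a2)
      by_cases hxHg : x ∈ c.Hg
      · rw [c.Hg_eq] at hxHg
        exact c.K_no_holeg (hK hxT)
          ⟨lt_of_le_of_ne hxHg.1 (Ne.symm hx1g), lt_of_le_of_ne hxHg.2 hx2g⟩
      · have hHgc : IsClosed c.Hg := by rw [c.Hg_eq]; exact isClosed_Icc
        obtain ⟨δ, hδ, hball⟩ := Metric.isOpen_iff.mp hHgc.isOpen_compl x hxHg
        set u := max (max α c.b) (x - δ/2) with hu
        set v := min (min β c.a2) (x + δ/2) with hvdef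
        have hxuv : x ∈ Set.Ioo u v := by
          constructor
          · exact max_lt (max_lt hxT.1 hxb) (by linarith)
          · exact lt_min (lt_min hxT.2 hxa2) (by linarith)
        apply c.no_good (lt_trans hxuv.1 hxuv.2) ?subK2 ?good2
        case subK2 =>
          intro y hy
          apply hK
          constructor
          · exact lt_of_le_of_lt (le_trans (le_max_left _ _) (le_max_left _ _)) hy.1
          · exact lt_of_lt_of_le hy.2 (le_trans (min_le_left _ _) (min_le_left _ _))
        case good2 =>
          right; left
          constructor
          · intro y hy
            constructor
            · exact lt_of_le_of_lt (le_trans (le_max_right _ _) (le_max_left _ _)) hy.1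
            · exact lt_of_lt_of_le hy.2 (le_trans (min_le_left _ _) (min_le_right _ _))
          · intro y hy
            apply hball
            rw [Metric.mem_ball, Real.dist_eq, abs_sub_lt_iff]
            have h1 : x - δ/2 ≤ u := le_max_right _ _
            have h2 : v ≤ x + δ/2 := min_le_right _ _
            constructor <;> linarith [hy.1, hy.2, hδ]

/-- no nondegenerate open interval is contained in `K`. -/
lemma K_no_interval {α β : ℝ} (hαβ : α < β) (hK : Set.Ioo α β ⊆ c.K) : False := by
  have hα0 : 0 ≤ α := by
    by_contra h
    push_neg at h
    have hm : α < min β 0 := lt_min hαβ h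
    have hx : (α + min β 0) / 2 ∈ Set.Ioo α β := by
      constructor
      · linarith
      · have := min_le_left β 0
        linarith
    have hneg : (α + min β 0) / 2 < 0 := by
      have := min_le_right β 0
      linarith
    have := (c.K_sub (hK hx)).1
    linarith
  have hβ1 : β ≤ 1 := by
    by_contra h
    push_neg at h
    have hm : max α 1 < β := max_lt hαβ h
    have hx : (max α 1 + β) / 2 ∈ Set.Ioo α β := by
      constructor
      · have := le_max_left α 1
        linarith
      · linarith
    have hgt : 1 < (max α 1 + β) / 2 := by
      have := le_max_right α 1
      linarith
    have := (c.K_sub (hK hx)).2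
    linarith
  by_cases hpt : ∃ x ∈ Set.Ioo α β, c.b2 < x ∧ x < c.a2
  · exact c.K_core hαβ hK hpt
  push_neg at hpt
  have hcase : β ≤ c.b2 ∨ c.a2 ≤ α := by
    by_contra h
    push_neg at h
    obtain ⟨h1, h2⟩ := h
    have hm : max α c.b2 < min β c.a2 :=
      max_lt (lt_min hαβ h2) (lt_min h1 c.b2_lt_a2)
    set x := (max α c.b2 + min β c.a2) / 2 with hx
    have hxT : x ∈ Set.Ioo α β := by
      constructor
      · have := le_max_left α c.b2
        rw [hx]; linarith
      · have := min_le_left β c.a2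
        rw [hx]; linarith
    have hxb2 : c.b2 < x := by
      have := le_max_right α c.b2
      rw [hx]; linarith
    have hxa2 : x < c.a2 := by
      have := min_le_right β c.a2
      rw [hx]; linarith
    exact absurd (hpt x hxT hxb2) (not_le.mpr hxa2)
  rcases hcase with hlow | hhigh
  · -- climb up
    have hβpos : 0 < β := by
      rcases eq_or_lt_of_le hα0 with h | h
      · linarith
      · linarith
    have hexit : ∃ k, c.b2 < c.F^[k] β := by
      by_contra hcc
      push_neg at hcc
      have hchain : ∀ k, (0 < c.F^[k] β ∧ c.f (c.F^[k+1] β) = c.F^[k] β ∧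
          c.F^[k] β ≤ c.F^[k+1] β) := by
        have hstep : ∀ z, 0 < z → z ≤ c.b2 → (c.f (c.F z) = z ∧ 0 < c.F z ∧ z ≤ c.F z) := by
          intro z h1 h2
          have hzI : z ∈ Set.Icc 0 c.b := ⟨le_of_lt h1, by linarith [c.b2_lt_b]⟩
          have hs := (c.F_spec hzI)
          have hFpos : 0 < c.F z := by
            apply c.F_gt hzI zero_mem'
            rw [c.hA.f_zero]; exact h1
          have hle : z ≤ c.F z := by
            have := c.fx_le hs.2
            rw [hs.1] at this
            exact this
          exact ⟨hs.1, hFpos, hle⟩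
        intro k
        induction k with
        | zero =>
          have h0 := hstep β hβpos hlow
          exact ⟨by simpa using hβpos, by simpa using h0.1, by simpa using h0.2.2⟩
        | succ n ih =>
          have hpos : 0 < c.F^[n+1] β := by
            rw [Function.iterate_succ_apply' c.F n β]
            exact (hstep _ ih.1 (hcc n)).2.1
          have hn1 := hstep _ hpos (hcc (n+1))
          refine ⟨hpos, ?_, ?_⟩
          · rw [Function.iterate_succ_apply' c.F (n+1) β]
            exact hn1.1
          · rw [Function.iterate_succ_apply' c.F (n+1) β]
            exact hn1.2.2
      exact c.escape_up (u := fun k => c.F^[k] β) (by simpa using hβpos)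
        (by linarith [c.b2_lt_a, c.a_lt_one] : c.b2 < 1)
        (fun k => (hchain k).2.1)
        (monotone_nat_of_le_succ (fun k => (hchain k).2.2))
        (fun k => hcc k)
    have hklt : ∀ j < Nat.find hexit, c.F^[j] β ≤ c.b2 := by
      intro j hj
      have := Nat.find_min hexit hj
      push_neg at this
      exact this
    have hβchain : ∀ j ≤ Nat.find hexit, 0 ≤ c.F^[j] β := by
      intro j hj
      induction j with
      | zero => simpa using le_of_lt hβpos
      | succ n ih =>
        have hn := ih (le_trans (Nat.le_succ n) hj)
        have hb2 : c.F^[n] β ≤ c.b2 := hklt n (by omega)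
        rw [Function.iterate_succ_apply' c.F n β]
        exact (c.F_spec ⟨hn, by linarith [c.b2_lt_b]⟩).2.1
    have hind : ∀ j ≤ Nat.find hexit, (0 ≤ c.F^[j] α ∧ c.F^[j] α < c.F^[j] β ∧
        Set.Ioo (c.F^[j] α) (c.F^[j] β) ⊆ c.K) := by
      intro j hj
      induction j with
      | zero => exact ⟨by simpa using hα0, by simpa using hαβ, by simpa using hK⟩
      | succ n ih =>
        have hn := ih (le_trans (Nat.le_succ n) hj)
        have hb2 : c.F^[n] β ≤ c.b2 := hklt n (by omega)
        have hstep := c.low_step hn.1 hn.2.1 hb2 hn.2.2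
        have hmono : c.F^[n+1] α < c.F^[n+1] β := by
          rw [Function.iterate_succ_apply' c.F n α, Function.iterate_succ_apply' c.F n β]
          exact c.F_mono ⟨hn.1, by linarith [hn.2.1, c.b2_lt_b]⟩
            ⟨by linarith [hn.1, hn.2.1], by linarith [c.b2_lt_b]⟩ hn.2.1
        refine ⟨?_, hmono, ?_⟩
        · rw [Function.iterate_succ_apply' c.F n α]
          exact (c.F_spec ⟨hn.1, by linarith [hn.2.1, c.b2_lt_b]⟩).2.1
        · rw [Function.iterate_succ_apply' c.F n α, Function.iterate_succ_apply' c.F n β]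
          exact hstep
    have hfind := Nat.find_spec hexit
    have hfin := hind (Nat.find hexit) (le_refl _)
    -- β* ≤ b
    have hk1 : Nat.find hexit ≠ 0 := by
      intro h
      rw [h] at hfind
      simp only [Function.iterate_zero, id] at hfind
      linarith
    have hβb : c.F^[Nat.find hexit] β ≤ c.b := by
      have hn1 : Nat.find hexit = (Nat.find hexit - 1) + 1 := by omega
      have harg2 : c.F^[Nat.find hexit - 1] β ≤ c.b2 := hklt _ (by omega)
      have harg0 : 0 ≤ c.F^[Nat.find hexit - 1] β := hβchain _ (by omega)
      rw [hn1, Function.iterate_succ_apply' c.F _ β]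
      rcases eq_or_lt_of_le harg2 with h | h
      · rw [h]
        have : c.F c.b2 = c.b := by
          show c.F (c.f c.b) = c.b
          exact c.F_f c.bmem
        rw [this]
      · have := c.F_lt ⟨harg0, by linarith [c.b2_lt_b]⟩ c.bmem h
        exact le_of_lt this
    -- apply core
    apply c.K_core hfin.2.1 hfin.2.2
    set x := (max (c.F^[Nat.find hexit] α) c.b2 + c.F^[Nat.find hexit] β) / 2 with hx
    have hm : max (c.F^[Nat.find hexit] α) c.b2 < c.F^[Nat.find hexit] β :=
      max_lt hfin.2.1 hfind
    refine ⟨x, ⟨?_, ?_⟩, ?_, ?_⟩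
    · have := le_max_left (c.F^[Nat.find hexit] α) c.b2
      rw [hx]; linarith
    · rw [hx]; linarith
    · have := le_max_right (c.F^[Nat.find hexit] α) c.b2
      rw [hx]; linarith
    · rw [hx]
      have := c.b_lt_a2
      have := c.b2_lt_b
      linarith
  · -- descend
    have hα1 : α < 1 := by linarith
    have hexit : ∃ k, c.G^[k] α < c.a2 := by
      by_contra hcc
      push_neg at hcc
      have hchain : ∀ k, (c.G^[k] α < 1 ∧ c.g (c.G^[k+1] α) = c.G^[k] α ∧
          c.G^[k+1] α ≤ c.G^[k] α) := by
        have hstep : ∀ z, c.a2 ≤ z → z < 1 → (c.g (c.G z) = z ∧ c.G z < 1 ∧ c.G z ≤ z) := by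
          intro z h1 h2
          have hzI : z ∈ Set.Icc c.a 1 := ⟨by linarith [c.a_lt_a2], le_of_lt h2⟩
          have hs := (c.G_spec hzI)
          have hGlt : c.G z < 1 := by
            apply c.G_lt hzI one_mem'
            rw [c.hA.g_one]; exact h2
          have hle : c.G z ≤ z := by
            have := c.gx_ge hs.2
            rw [hs.1] at this
            exact this
          exact ⟨hs.1, hGlt, hle⟩
        intro k
        induction k with
        | zero =>
          have h0 := hstep α (hcc 0) hα1
          exact ⟨by simpa using hα1, by simpa using h0.1, by simpa using h0.2.2⟩
        | succ n ih =>
          have hlt : c.G^[n+1] α < 1 := by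
            rw [Function.iterate_succ_apply' c.G n α]
            exact (hstep _ (hcc n) ih.1).2.1
          have hn1 := hstep _ (hcc (n+1)) hlt
          refine ⟨hlt, ?_, ?_⟩
          · rw [Function.iterate_succ_apply' c.G (n+1) α]
            exact hn1.1
          · rw [Function.iterate_succ_apply' c.G (n+1) α]
            exact hn1.2.2
      exact c.escape_down (u := fun k => c.G^[k] α) (by simpa using hα1)
        (by linarith [c.apos, c.a_lt_a2] : (0:ℝ) < c.a2)
        (fun k => (hchain k).2.1)
        (antitone_nat_of_succ_le (fun k => (hchain k).2.2))
        (fun k => hcc k)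
    have hklt : ∀ j < Nat.find hexit, c.a2 ≤ c.G^[j] α := by
      intro j hj
      have := Nat.find_min hexit hj
      push_neg at this
      exact this
    have hαchain : ∀ j ≤ Nat.find hexit, c.G^[j] α ≤ 1 := by
      intro j hj
      induction j with
      | zero => simpa using le_of_lt hα1
      | succ n ih =>
        have hn := ih (le_trans (Nat.le_succ n) hj)
        have ha2 : c.a2 ≤ c.G^[n] α := hklt n (by omega)
        rw [Function.iterate_succ_apply' c.G n α]
        exact (c.G_spec ⟨by linarith [c.a_lt_a2], hn⟩).2.2
    have hind : ∀ j ≤ Nat.find hexit, (c.G^[j] β ≤ 1 ∧ c.G^[j] α < c.G^[j] β ∧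
        Set.Ioo (c.G^[j] α) (c.G^[j] β) ⊆ c.K) := by
      intro j hj
      induction j with
      | zero => exact ⟨by simpa using hβ1, by simpa using hαβ, by simpa using hK⟩
      | succ n ih =>
        have hn := ih (le_trans (Nat.le_succ n) hj)
        have ha2 : c.a2 ≤ c.G^[n] α := hklt n (by omega)
        have hstep := c.high_step ha2 hn.2.1 hn.1 hn.2.2
        have haI : c.G^[n] α ∈ Set.Icc c.a 1 :=
          ⟨by linarith [c.a_lt_a2], by linarith [hn.2.1, hn.1]⟩
        have hbI : c.G^[n] β ∈ Set.Icc c.a 1 :=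
          ⟨by linarith [c.a_lt_a2, hn.2.1], hn.1⟩
        have hmono : c.G^[n+1] α < c.G^[n+1] β := by
          rw [Function.iterate_succ_apply' c.G n α, Function.iterate_succ_apply' c.G n β]
          exact c.G_mono haI hbI hn.2.1
        refine ⟨?_, hmono, ?_⟩
        · rw [Function.iterate_succ_apply' c.G n β]
          exact ((c.G_spec hbI).2).2
        · rw [Function.iterate_succ_apply' c.G n α, Function.iterate_succ_apply' c.G n β]
          exact hstep
    have hfind := Nat.find_spec hexit
    have hfin := hind (Nat.find hexit) (le_refl _)
    have hk1 : Nat.find hexit ≠ 0 := by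
      intro h
      rw [h] at hfind
      simp only [Function.iterate_zero, id] at hfind
      linarith
    have hαa : c.a ≤ c.G^[Nat.find hexit] α := by
      have hn1 : Nat.find hexit = (Nat.find hexit - 1) + 1 := by omega
      have harg2 : c.a2 ≤ c.G^[Nat.find hexit - 1] α := hklt _ (by omega)
      have harg1 : c.G^[Nat.find hexit - 1] α ≤ 1 := hαchain _ (by omega)
      rw [hn1, Function.iterate_succ_apply' c.G _ α]
      rcases eq_or_lt_of_le harg2 with h | h
      · rw [← h]
        have : c.G c.a2 = c.a := by
          show c.G (c.g c.a) = c.a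
          exact c.G_g c.amem
        rw [this]
      · have := c.G_gt ⟨by linarith [c.a_lt_a2], harg1⟩ c.amem
          (by show c.g c.a < _; exact h)
        exact le_of_lt this
    apply c.K_core hfin.2.1 hfin.2.2
    set x := (c.G^[Nat.find hexit] α + min (c.G^[Nat.find hexit] β) c.a2) / 2 with hx
    have hm : c.G^[Nat.find hexit] α < min (c.G^[Nat.find hexit] β) c.a2 :=
      lt_min hfin.2.1 hfind
    refine ⟨x, ⟨?_, ?_⟩, ?_, ?_⟩
    · rw [hx]; linarith
    · have := min_le_left (c.G^[Nat.find hexit] β) c.a2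
      rw [hx]; linarith
    · rw [hx]
      have h1 := c.b2_lt_a
      linarith
    · have := min_le_right (c.G^[Nat.find hexit] β) c.a2
      rw [hx]; linarith

end Ctx

/-- if `(f,g) ∈ 𝒞`, then the minimal set `K` has empty interior; more
precisely every nonempty open interval `J ⊆ I` containing a point of `K` contains a
nonempty open interval `L` disjoint from `K`. -/
theorem minimal_set_empty_interior (f g : ℝ → ℝ) (Hf Hg K : Set ℝ)
    (hC : MemC f g Hf Hg) (hK : IsMinimalSet f g K) :
    interior K = ∅ ∧
    ∀ x ∈ K, ∀ J : Set ℝ, IsOpenInterval J → J ⊆ unitI → x ∈ J →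
      ∃ L : Set ℝ, IsOpenInterval L ∧ L ⊆ J ∧ L ∩ K = ∅ := by
  obtain ⟨hA, hSo, hHo, hEe, hCa⟩ := hC
  set c : Ctx := ⟨f, g, Hf, Hg, K, hA, hSo, hHo, hEe, hCa, hK⟩ with hc
  have hNI : ∀ u v : ℝ, u < v → ¬ (Set.Ioo u v ⊆ K) := fun u v h hsub =>
    c.K_no_interval h hsub
  have hKcl : IsClosed K := c.K_closed
  constructor
  · rw [Set.eq_empty_iff_forall_notMem]
    intro x hx
    rw [mem_interior_iff_mem_nhds, Metric.mem_nhds_iff] at hx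
    obtain ⟨ε, hε, hball⟩ := hx
    apply hNI (x - ε/2) (x + ε/2) (by linarith)
    intro y hy
    apply hball
    rw [Metric.mem_ball, Real.dist_eq, abs_sub_lt_iff]
    constructor
    · linarith [hy.2]
    · linarith [hy.1]
  · intro x _ J hJ _ hxJ
    obtain ⟨u, v, huv, rfl⟩ := hJ
    have hns : ¬ (Set.Ioo u v ⊆ K) := hNI u v huv
    rw [Set.not_subset] at hns
    obtain ⟨y, hyJ, hyK⟩ := hns
    obtain ⟨δ, hδ, hball⟩ := Metric.isOpen_iff.mp hKcl.isOpen_compl y hyK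
    have hmem : y ∈ Set.Ioo (max u (y - δ/2)) (min v (y + δ/2)) :=
      ⟨max_lt hyJ.1 (by linarith), lt_min hyJ.2 (by linarith)⟩
    refine ⟨Set.Ioo (max u (y - δ/2)) (min v (y + δ/2)),
      ⟨_, _, lt_trans hmem.1 hmem.2, rfl⟩, ?_, ?_⟩
    · intro z hz
      exact ⟨lt_of_le_of_lt (le_max_left _ _) hz.1, lt_of_lt_of_le hz.2 (min_le_left _ _)⟩
    · rw [Set.eq_empty_iff_forall_notMem]
      rintro z ⟨hz1, hz2⟩
      apply hball _ hz2
      rw [Metric.mem_ball, Real.dist_eq, abs_sub_lt_iff]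
      have h1 : y - δ/2 ≤ max u (y - δ/2) := le_max_right _ _
      have h2 : min v (y + δ/2) ≤ y + δ/2 := min_le_right _ _
      constructor
      · linarith [hz1.2]
      · linarith [hz1.1]

end IFSPaper
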